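/- arXiv:math/0503246 — 9 statements merged into one kernel-verified Lean document; each statement's English description precedes it below -/
import Mathlib

section
/- For every integer k ≥ 1 there is a constant C_k > 0 such that for all reals x ≥ 2 and 2 ≤ y ≤ x, |Φ_k(x,y) − Ψ(x, P_k)| ≤ C_k · x·(log x)^{2k}/y, where P_0 = {p prime : p ≤ y} and P_{j+1} = {p prime : p ≤ x and every prime q dividing p−1 lies in P_j}. -/
/-- `smoothIn x P` is the number of positive integers `n ≤ x` all of whose prime divisors
lie in `P`. -/
noncomputable def smoothIn (x : ℝ) (P : Set ℕ) : ℕ :=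
  {n : ℕ | 0 < n ∧ (n : ℝ) ≤ x ∧ ∀ p : ℕ, p.Prime → p ∣ n → p ∈ P}.ncard

/-- `PhiSmooth k x y` is the number of positive integers `n ≤ x` such that every prime
divisor of the `k`-th iterate `φ_k(n)` of Euler's totient function at `n` is at most `y`. -/
noncomputable def PhiSmooth (k : ℕ) (x y : ℝ) : ℕ :=
  {n : ℕ | 0 < n ∧ (n : ℝ) ≤ x ∧
    ∀ p : ℕ, p.Prime → p ∣ (Nat.totient^[k] n) → (p : ℝ) ≤ y}.ncard

/-- The iterated sets of primes: `P_0 = {p prime : p ≤ y}` and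
`P_{j+1} = {p prime : p ≤ x, every prime q ∣ p − 1 lies in P_j}`. -/
def iterP (x y : ℝ) : ℕ → Set ℕ
  | 0 => {p : ℕ | p.Prime ∧ (p : ℝ) ≤ y}
  | j + 1 => {p : ℕ | p.Prime ∧ (p : ℝ) ≤ x ∧
      ∀ q : ℕ, q.Prime → q ∣ p - 1 → q ∈ iterP x y j}

namespace St4


lemma phi2 {r m : ℕ} (hr : r.Prime) (hm : m ≠ 0) (h : r ∣ Nat.totient m) :
    r ^ 2 ∣ m ∨ ∃ q, q.Prime ∧ q ∣ m ∧ r ∣ q - 1 := by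
  rw [Nat.totient_eq_prod_factorization hm] at h
  rw [Finsupp.prod] at h
  obtain ⟨p, hp, hdvd⟩ := hr.prime.exists_mem_finset_dvd h
  have hp' : p ∈ m.primeFactors := Nat.support_factorization m ▸ hp
  have hpp : p.Prime := Nat.prime_of_mem_primeFactors hp'
  have hpd : p ∣ m := Nat.dvd_of_mem_primeFactors hp'
  rcases (Nat.Prime.dvd_mul hr).1 hdvd with h1 | h2
  · left
    have hk : m.factorization p ≠ 0 := Finsupp.mem_support_iff.mp hp
    have hrp : r = p :=
      (Nat.prime_dvd_prime_iff_eq hr hpp).1 (Nat.Prime.dvd_of_dvd_pow hr h1)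
    subst hrp
    have hk2 : 2 ≤ m.factorization r := by
      rcases Nat.lt_or_ge (m.factorization r) 2 with hlt | hge
      · exfalso
        have h1' : m.factorization r - 1 = 0 := by omega
        rw [h1', pow_zero] at h1
        have := Nat.eq_one_of_dvd_one h1
        exact absurd this (by have := hr.two_le; omega)
        
      · exact hge
    calc r ^ 2 ∣ r ^ (m.factorization r) := pow_dvd_pow _ hk2
      _ ∣ m := Nat.ordProj_dvd m r
  · exact Or.inr ⟨p, hpp, hpd, h2⟩



lemma phi3 {r m : ℕ} (hr : r.Prime) (hm : m ≠ 0) (h : r ^ 2 ∣ Nat.totient m) :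
    (∃ q, q.Prime ∧ q ∣ m ∧ r ^ 2 ∣ q - 1) ∨
    (∃ q q', q.Prime ∧ q'.Prime ∧ q ≠ q' ∧ q ∣ m ∧ q' ∣ m ∧ r ∣ q - 1 ∧ r ∣ q' - 1) ∨
    r ^ 2 ∣ m := by
  by_contra hcon
  push_neg at hcon
  obtain ⟨hB, hC, hA⟩ := hcon
  have htotpos : 0 < Nat.totient m := Nat.totient_pos.2 (Nat.pos_of_ne_zero hm)
  have htot : Nat.totient m ≠ 0 := htotpos.ne'
  have hval : 2 ≤ (Nat.totient m).factorization r :=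
    (Nat.Prime.pow_dvd_iff_le_factorization hr htot).1 h
  set S := m.factorization.support with hS
  have hmem : ∀ p ∈ S, p ∈ m.primeFactors := by
    intro p hp
    rwa [hS, Nat.support_factorization] at hp
  have hprime : ∀ p ∈ S, p.Prime := fun p hp =>
    Nat.prime_of_mem_primeFactors (hmem p hp)
  have hdvdm : ∀ p ∈ S, p ∣ m := fun p hp =>
    Nat.dvd_of_mem_primeFactors (hmem p hp)
  set g : ℕ → ℕ := fun p => p ^ (m.factorization p - 1) * (p - 1) with hg
  have hprod : Nat.totient m = ∏ p ∈ S, g p := by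
    rw [Nat.totient_eq_prod_factorization hm]; rfl
  have hfne : ∀ p ∈ S, g p ≠ 0 := by
    intro p hp
    have h2 := (hprime p hp).two_le
    simp only [hg]
    exact Nat.mul_ne_zero (pow_ne_zero _ (by omega)) (by omega)
  -- valuation of each factor
  have hterm : ∀ p ∈ S, (g p).factorization r = (p - 1).factorization r := by
    intro p hp
    have h2 := (hprime p hp).two_le
    have hp1 : p - 1 ≠ 0 := by omega
    have hpow : (p ^ (m.factorization p - 1)).factorization r = 0 := by
      rw [Nat.factorization_pow]
      by_cases hrp : r = p
      · subst hrp
        have hk1 : m.factorization r ≤ 1 := by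
          by_contra hk
          exact hA ((Nat.Prime.pow_dvd_iff_le_factorization hr hm).2 (by omega))
        have : m.factorization r - 1 = 0 := by omega
        rw [this]; simp
      · simp only [Finsupp.smul_apply, (hprime p hp).factorization]
        rw [Finsupp.single_apply]
        simp [Ne.symm hrp]
    rw [hg]
    rw [Nat.factorization_mul (by positivity) hp1, Finsupp.add_apply, hpow, zero_add]
  have htermle : ∀ p ∈ S, (p - 1).factorization r ≤ 1 := by
    intro p hp
    by_contra hk
    push_neg at hk
    have h2 := (hprime p hp).two_le
    exact hB p (hprime p hp) (hdvdm p hp)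
      ((Nat.Prime.pow_dvd_iff_le_factorization hr (by omega : p - 1 ≠ 0)).2 (by omega))
  have hsum : (Nat.totient m).factorization r = ∑ p ∈ S, (g p).factorization r := by
    rw [hprod, Nat.factorization_prod hfne]
    exact Finset.sum_apply' r
  -- at most one nonzero term, each ≤ 1
  have hle1 : ∑ p ∈ S, (g p).factorization r ≤ 1 := by
    by_cases hex : ∃ p₀ ∈ S, (g p₀).factorization r ≠ 0
    · obtain ⟨p₀, hp₀, hne⟩ := hex
      have heq : ∑ p ∈ S, (g p).factorization r = (g p₀).factorization r := by
        apply Finset.sum_eq_single_of_mem p₀ hp₀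
        intro b hb hbne
        by_contra hbne0
        -- two distinct primes with r ∣ p - 1
        have hrb : r ∣ b - 1 := by
          have := hterm b hb
          have hb1 : b - 1 ≠ 0 := by have := (hprime b hb).two_le; omega
          have : 1 ≤ (b-1).factorization r := by omega
          exact pow_one r ▸ (Nat.Prime.pow_dvd_iff_le_factorization hr hb1).2 this
        have hrp₀ : r ∣ p₀ - 1 := by
          have := hterm p₀ hp₀
          have hb1 : p₀ - 1 ≠ 0 := by have := (hprime p₀ hp₀).two_le; omega
          have : 1 ≤ (p₀-1).factorization r := by omega
          exact pow_one r ▸ (Nat.Prime.pow_dvd_iff_le_factorization hr hb1).2 this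
        exact hC b p₀ (hprime b hb) (hprime p₀ hp₀) hbne (hdvdm b hb) (hdvdm p₀ hp₀) hrb hrp₀
      rw [heq, hterm p₀ hp₀]
      exact htermle p₀ hp₀
    · push_neg at hex
      simp only [Finset.sum_eq_zero hex]
      omega
  omega



/-- `Rch t a b`: `b` is reachable from `a` by at most `t` steps `c ∣ prev - 1`, `c` prime. -/
def Rch : ℕ → ℕ → ℕ → Prop
  | 0, a, b => a = b
  | t+1, a, b => a = b ∨ ∃ c, c.Prime ∧ c ∣ a - 1 ∧ Rch t c b

lemma rch_prime {t a b : ℕ} (h : Rch t a b) (ha : a.Prime) : b.Prime := by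
  induction t generalizing a with
  | zero => exact h ▸ ha
  | succ t ih =>
    rcases h with rfl | ⟨c, hc, _, hr⟩
    · exact ha
    · exact ih hr hc

lemma rch_le {t a b : ℕ} (h : Rch t a b) (ha : 2 ≤ a) : b ≤ a := by
  induction t generalizing a with
  | zero => exact h ▸ le_refl a
  | succ t ih =>
    rcases h with rfl | ⟨c, hc, hd, hr⟩
    · exact le_refl a
    · have hc1 : c ≤ a - 1 := Nat.le_of_dvd (by omega) hd
      have := ih hr hc.two_le
      omega

lemma rch_mono {t t' a b : ℕ} (htt : t ≤ t') (h : Rch t a b) : Rch t' a b := by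
  induction t' generalizing t a with
  | zero => exact (Nat.le_zero.1 htt) ▸ h
  | succ t' ih =>
    match t, h with
    | 0, h => exact Or.inl h
    | t+1, Or.inl h => exact Or.inl h
    | t+1, Or.inr ⟨c, hc, hd, hr⟩ => exact Or.inr ⟨c, hc, hd, ih (by omega) hr⟩

/-- chain lemma: any prime divisor of `φ^[i] n` is reachable from a prime divisor of `n`. -/
lemma chain_lemma {i n p : ℕ} (hn : 0 < n) (hp : p.Prime) (h : p ∣ Nat.totient^[i] n) :
    ∃ q, q.Prime ∧ q ∣ n ∧ Rch i q p := by
  induction i generalizing n with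
  | zero => exact ⟨p, hp, h, rfl⟩
  | succ i ih =>
    rw [Function.iterate_succ_apply] at h
    obtain ⟨q, hq, hqd, hr⟩ := ih (Nat.totient_pos.2 hn) h
    rcases phi2 hq hn.ne' hqd with hsq | ⟨q₀, hq₀, hq₀d, hstep⟩
    · exact ⟨q, hq, dvd_trans (dvd_trans (dvd_pow_self q two_ne_zero) hsq) dvd_rfl,
        rch_mono (Nat.le_succ i) hr⟩
    · exact ⟨q₀, hq₀, hq₀d, Or.inr ⟨q, hq, hstep, hr⟩⟩

lemma iter_totient_pos (j : ℕ) {n : ℕ} (hn : 0 < n) : 0 < Nat.totient^[j] n := by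
  induction j with
  | zero => exact hn
  | succ j ihj => rw [Function.iterate_succ_apply']; exact Nat.totient_pos.2 ihj

/-- iterated square trichotomy -/
lemma squareS {j n r : ℕ} (hr : r.Prime) (hn : 0 < n) (h : r ^ 2 ∣ Nat.totient^[j] n) :
    r ^ 2 ∣ n ∨
    ∃ i < j, (∃ q, q.Prime ∧ q ∣ Nat.totient^[i] n ∧ r ^ 2 ∣ q - 1) ∨
      (∃ q q', q.Prime ∧ q'.Prime ∧ q ≠ q' ∧ q ∣ Nat.totient^[i] n ∧ q' ∣ Nat.totient^[i] n ∧
        r ∣ q - 1 ∧ r ∣ q' - 1) := by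
  induction j with
  | zero => exact Or.inl h
  | succ j ih =>
    rw [Function.iterate_succ_apply'] at h
    have hM : Nat.totient^[j] n ≠ 0 := (iter_totient_pos j hn).ne'
    rcases phi3 hr hM h with hB | hC | hsq
    · exact Or.inr ⟨j, Nat.lt_succ_self j, Or.inl hB⟩
    · exact Or.inr ⟨j, Nat.lt_succ_self j, Or.inr hC⟩
    · rcases ih hsq with h1 | ⟨i, hi, h2⟩
      · exact Or.inl h1
      · exact Or.inr ⟨i, by omega, h2⟩


/-- exact descending chains -/
def EC : ℕ → ℕ → ℕ → Prop
  | 0, a, b => a = b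
  | j+1, a, b => ∃ c, c.Prime ∧ c ∣ a - 1 ∧ EC j c b

lemma ec_snoc {j q q' w : ℕ} (h : EC j q q') (hw : w.Prime) (hd : w ∣ q' - 1) :
    EC (j+1) q w := by
  induction j generalizing q with
  | zero => exact ⟨w, hw, h ▸ hd, rfl⟩
  | succ j ih =>
    obtain ⟨c, hc, hcd, hec⟩ := h
    exact ⟨c, hc, hcd, ih hec⟩

lemma ec_iterP {x y : ℝ} {k q w : ℕ} (hq : q ∈ iterP x y k) (h : EC k q w) :
    w ∈ iterP x y 0 := by
  induction k generalizing q with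
  | zero => exact h ▸ hq
  | succ k ih =>
    obtain ⟨c, hc, hcd, hec⟩ := h
    exact ih (hq.2.2 c hc hcd) hec

lemma descent_aux {y : ℝ} {n : ℕ} (hn : 0 < n) (j : ℕ) :
    ∀ w : ℕ, w.Prime → y < w → w ∣ Nat.totient^[j] n →
      (∃ (r i : ℕ), r.Prime ∧ y < (r:ℝ) ∧ i < j ∧ r ^ 2 ∣ Nat.totient^[i] n) ∨
      (∃ q, q.Prime ∧ q ∣ n ∧ EC j q w) := by
  induction j with
  | zero => exact fun w hw _ hd => Or.inr ⟨w, hw, hd, rfl⟩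
  | succ j ih =>
    intro w hw hwy hd
    rw [Function.iterate_succ_apply'] at hd
    rcases phi2 hw (iter_totient_pos j hn).ne' hd with hsq | ⟨q', hq', hq'd, hstep⟩
    · exact Or.inl ⟨w, j, hw, hwy, Nat.lt_succ_self j, hsq⟩
    · have hwq' : (w:ℕ) < q' := by
        have h2 := hq'.two_le
        have := Nat.le_of_dvd (by omega) hstep
        omega
      have hq'y : y < (q' : ℝ) := lt_of_lt_of_le hwy (by exact_mod_cast hwq'.le)
      rcases ih q' hq' hq'y hq'd with ⟨r, i, h1, h2, h3, h4⟩ | ⟨q, h1, h2, h3⟩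
      · exact Or.inl ⟨r, i, h1, h2, by omega, h4⟩
      · exact Or.inr ⟨q, h1, h2, ec_snoc h3 hw hstep⟩

lemma descent {x y : ℝ} {k n : ℕ} (hn : 0 < n)
    (hP : ∀ p, p.Prime → p ∣ n → p ∈ iterP x y k) {w : ℕ} (hw : w.Prime)
    (hwy : y < w) (hdvd : w ∣ Nat.totient^[k] n) :
    ∃ (r j : ℕ), r.Prime ∧ y < (r:ℝ) ∧ j < k ∧ r ^ 2 ∣ Nat.totient^[j] n := by
  rcases descent_aux hn k w hw hwy hdvd with ⟨r, j, h1, h2, h3, h4⟩ | ⟨q, h1, h2, h3⟩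
  · exact ⟨r, j, h1, h2, h3, h4⟩
  · exfalso
    have := ec_iterP (hP q h1 h2) h3
    exact absurd this.2 (not_le.2 hwy)

lemma incl {x y : ℝ} (k : ℕ) {n : ℕ} (hn : 0 < n) (hx : (n:ℝ) ≤ x)
    (h : ∀ p, p.Prime → p ∣ Nat.totient^[k+1] n → (p:ℝ) ≤ y) :
    ∀ p, p.Prime → p ∣ n → p ∈ iterP x y (k+1) := by
  induction k generalizing n with
  | zero =>
    intro p hp hpd
    refine ⟨hp, le_trans (by exact_mod_cast Nat.le_of_dvd hn hpd) hx, fun q hq hqd => ?_⟩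
    have : q ∣ Nat.totient^[1] n := by
      rw [Function.iterate_one]
      exact dvd_trans ((Nat.totient_prime hp) ▸ hqd) (Nat.totient_dvd_of_dvd hpd)
    exact ⟨hq, h q hq this⟩
  | succ k ih =>
    intro p hp hpd
    refine ⟨hp, le_trans (by exact_mod_cast Nat.le_of_dvd hn hpd) hx, fun q hq hqd => ?_⟩
    have hq' : q ∣ Nat.totient n :=
      dvd_trans ((Nat.totient_prime hp) ▸ hqd) (Nat.totient_dvd_of_dvd hpd)
    exact ih (Nat.totient_pos.2 hn) (le_trans (by exact_mod_cast Nat.totient_le n) hx)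
      (fun p' hp' hd' => h p' hp' (by rwa [Function.iterate_succ_apply])) q hq hq'


lemma harm (M : ℕ) : ∑ t ∈ Finset.Icc 1 M, (1/(t:ℝ)) ≤ 1 + Real.log M := by
  induction M with
  | zero => simp
  | succ M ih =>
    rcases Nat.eq_zero_or_pos M with rfl | hM
    · norm_num
    · rw [Finset.sum_Icc_succ_top (by omega)]
      have hkey : (1 : ℝ)/(M+1) ≤ Real.log (M+1) - Real.log M := by
        have hM0 : (0:ℝ) < M := by exact_mod_cast hM
        have h1 : Real.log ((M:ℝ)/(M+1)) ≤ (M:ℝ)/(M+1) - 1 :=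
          Real.log_le_sub_one_of_pos (by positivity)
        rw [Real.log_div (by positivity) (by positivity)] at h1
        have : (M:ℝ)/(M+1) - 1 = -(1/(M+1)) := by field_simp; ring
        rw [this] at h1
        linarith
    -- combine
      push_cast
      push_cast at ih hkey
      linarith

lemma divsum {N d : ℕ} {x : ℝ} (hN : (N:ℝ) ≤ x) (hx : 2 ≤ x) (hd : 1 ≤ d) :
    ∑ q ∈ (Finset.Icc 1 N).filter (fun q => 2 ≤ q ∧ d ∣ q - 1), (1/(q:ℝ))
      ≤ (1 + Real.log x)/(d:ℝ) := by
  set S := (Finset.Icc 1 N).filter (fun q => 2 ≤ q ∧ d ∣ q - 1) with hS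
  have hsub : S ⊆ (Finset.Icc 1 N).image (fun t => t*d + 1) := by
    intro q hq
    rw [hS, Finset.mem_filter, Finset.mem_Icc] at hq
    obtain ⟨⟨h1, h2⟩, h3, h4⟩ := hq
    refine Finset.mem_image.2 ⟨(q-1)/d, ?_, ?_⟩
    · rw [Finset.mem_Icc]
      constructor
      · have : d ≤ q - 1 := Nat.le_of_dvd (by omega) h4
        exact Nat.one_le_div_iff (by omega) |>.2 this
      · calc (q-1)/d ≤ q - 1 := Nat.div_le_self _ _
          _ ≤ N := by omega
    · have := Nat.div_mul_cancel h4
      omega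
  have h1 : ∑ q ∈ S, (1/(q:ℝ)) ≤ ∑ q ∈ (Finset.Icc 1 N).image (fun t => t*d + 1), (1/(q:ℝ)) := by
    apply Finset.sum_le_sum_of_subset_of_nonneg hsub
    intro i _ _
    positivity
  have h2 : ∑ q ∈ (Finset.Icc 1 N).image (fun t => t*d + 1), (1/(q:ℝ))
      = ∑ t ∈ Finset.Icc 1 N, (1/((t*d+1 : ℕ):ℝ)) := by
    apply Finset.sum_image
    intro a _ b _ hab
    have : a * d = b * d := by simp only at hab; omega
    exact Nat.eq_of_mul_eq_mul_right (by omega) this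
  have h3 : ∑ t ∈ Finset.Icc 1 N, (1/((t*d+1 : ℕ):ℝ)) ≤ ∑ t ∈ Finset.Icc 1 N, (1/(d:ℝ)) * (1/(t:ℝ)) := by
    apply Finset.sum_le_sum
    intro t ht
    rw [Finset.mem_Icc] at ht
    have htd : (0:ℝ) < (t:ℝ)*(d:ℝ) := by
      have : 1 ≤ t := ht.1
      have : (1:ℝ) ≤ t := by exact_mod_cast this
      have : (1:ℝ) ≤ d := by exact_mod_cast hd
      positivity
    rw [one_div_mul_one_div]
    rw [div_le_div_iff₀ (by positivity) (by rw [mul_comm] at htd; exact htd)]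
    push_cast
    nlinarith [htd]
  have h4 : ∑ t ∈ Finset.Icc 1 N, (1/(d:ℝ)) * (1/(t:ℝ)) = (1/(d:ℝ)) * ∑ t ∈ Finset.Icc 1 N, (1/(t:ℝ)) := by
    rw [Finset.mul_sum]
  have h5 : ∑ t ∈ Finset.Icc 1 N, (1/(t:ℝ)) ≤ 1 + Real.log x := by
    refine le_trans (harm N) ?_
    have hlog : Real.log N ≤ Real.log x := by
      rcases Nat.eq_zero_or_pos N with rfl | hN0
      · simpa using Real.log_nonneg (by linarith)
      · exact Real.log_le_log (by exact_mod_cast hN0) hN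
    linarith
  have hd0 : (0:ℝ) < d := by exact_mod_cast hd
  calc ∑ q ∈ S, (1/(q:ℝ)) ≤ (1/(d:ℝ)) * ∑ t ∈ Finset.Icc 1 N, (1/(t:ℝ)) := by
        rw [← h4]; exact le_trans h1 (le_trans (le_of_eq h2) h3)
    _ ≤ (1/(d:ℝ)) * (1 + Real.log x) := by
        apply mul_le_mul_of_nonneg_left h5 (by positivity)
    _ = (1 + Real.log x)/(d:ℝ) := by ring

lemma sq_tel_aux (M : ℕ) (hM : 1 ≤ M) : ∀ b, M ≤ b →
    ∑ r ∈ Finset.Icc (M+1) b, (1/((r:ℝ))^2) ≤ 1/(M:ℝ) - 1/(b:ℝ) := by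
  intro b
  induction b with
  | zero => omega
  | succ b ih =>
    intro hb
    rcases Nat.lt_or_ge b M with h | h
    · have : M = b + 1 := by omega
      subst this
      simp
    · rw [Finset.sum_Icc_succ_top (by omega)]
      have h1 := ih h
      have hb0 : (0:ℝ) < b := by
        have : 1 ≤ b := by omega
        exact_mod_cast this
      have hkey : 1/((b:ℝ)+1)^2 ≤ 1/(b:ℝ) - 1/((b:ℝ)+1) := by
        rw [div_sub_div _ _ (by positivity) (by positivity)]
        rw [div_le_div_iff₀ (by positivity) (by positivity)]
        ring_nf
        nlinarith [hb0]
      push_cast at h1 hkey ⊢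
      linarith

lemma sq_tel (M : ℕ) (hM : 1 ≤ M) (b : ℕ) :
    ∑ r ∈ Finset.Icc (M+1) b, (1/((r:ℝ))^2) ≤ 1/(M:ℝ) := by
  rcases Nat.lt_or_ge b M with h | h
  · rw [Finset.Icc_eq_empty (by omega), Finset.sum_empty]
    positivity
  · have := sq_tel_aux M hM b h
    have hb0 : (0:ℝ) ≤ 1/(b:ℝ) := by positivity
    linarith



noncomputable def wsum (S : Finset ℕ) : ℝ := ∑ q ∈ S, (1/(q:ℝ))

def F (N : ℕ) : Finset ℕ := (Finset.Icc 1 N).filter Nat.Prime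

noncomputable def stp (N : ℕ) (T : Finset ℕ) : Finset ℕ :=
  (F N).filter (fun q => ∃ p ∈ T, p ∣ q - 1)

noncomputable def RT (N : ℕ) (P : Finset ℕ) : ℕ → Finset ℕ
  | 0 => P
  | t+1 => RT N P t ∪ stp N (RT N P t)

lemma wsum_nonneg (S : Finset ℕ) : 0 ≤ wsum S := by
  apply Finset.sum_nonneg; intro i _; positivity

lemma wsum_union_le (A B : Finset ℕ) : wsum (A ∪ B) ≤ wsum A + wsum B := by
  unfold wsum
  have := Finset.sum_union_inter (s₁ := A) (s₂ := B) (f := fun q => (1/(q:ℝ)))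
  have hnn : 0 ≤ ∑ q ∈ A ∩ B, (1/(q:ℝ)) := Finset.sum_nonneg fun i _ => by positivity
  linarith

lemma wsum_biUnion_le (T : Finset ℕ) (f : ℕ → Finset ℕ) :
    wsum (T.biUnion f) ≤ ∑ p ∈ T, wsum (f p) := by
  classical
  induction T using Finset.induction_on with
  | empty => simp [wsum]
  | insert _ _ hx ih =>
    rename_i a s
    rw [Finset.biUnion_insert, Finset.sum_insert hx]
    exact le_trans (wsum_union_le _ _) (by linarith)

lemma wsum_mono {A B : Finset ℕ} (h : A ⊆ B) : wsum A ≤ wsum B := by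
  apply Finset.sum_le_sum_of_subset_of_nonneg h
  intro i _ _; positivity

lemma F_prime {N q : ℕ} (h : q ∈ F N) : q.Prime := (Finset.mem_filter.1 h).2

lemma F_le {N q : ℕ} (h : q ∈ F N) : q ≤ N := (Finset.mem_Icc.1 (Finset.mem_filter.1 h).1).2

lemma stp_wsum {N : ℕ} {x : ℝ} (hN : (N:ℝ) ≤ x) (hx : 2 ≤ x) {T : Finset ℕ}
    (hT : ∀ p ∈ T, p.Prime) : wsum (stp N T) ≤ (1 + Real.log x) * wsum T := by
  have hsub : stp N T ⊆ T.biUnion (fun p => (Finset.Icc 1 N).filter (fun q => 2 ≤ q ∧ p ∣ q - 1)) := by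
    intro q hq
    rw [stp, Finset.mem_filter] at hq
    obtain ⟨hqF, p, hp, hpd⟩ := hq
    refine Finset.mem_biUnion.2 ⟨p, hp, ?_⟩
    rw [Finset.mem_filter]
    exact ⟨(Finset.mem_filter.1 hqF).1, (F_prime hqF).two_le, hpd⟩
  refine le_trans (wsum_mono hsub) (le_trans (wsum_biUnion_le _ _) ?_)
  have hbd : ∀ p ∈ T, wsum ((Finset.Icc 1 N).filter (fun q => 2 ≤ q ∧ p ∣ q - 1))
      ≤ (1 + Real.log x) * (1/(p:ℝ)) := by
    intro p hp
    have h := divsum (N := N) (d := p) hN hx (hT p hp).one_lt.le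
    rw [wsum]
    calc ∑ q ∈ (Finset.Icc 1 N).filter (fun q => 2 ≤ q ∧ p ∣ q - 1), (1/(q:ℝ))
        ≤ (1 + Real.log x)/(p:ℝ) := h
      _ = (1 + Real.log x) * (1/(p:ℝ)) := by ring
  refine le_trans (Finset.sum_le_sum hbd) ?_
  rw [← Finset.mul_sum, wsum]

lemma RT_sub_F {N : ℕ} {P : Finset ℕ} (hP : P ⊆ F N) (t : ℕ) : RT N P t ⊆ F N := by
  induction t with
  | zero => exact hP
  | succ t ih =>
    intro q hq
    rcases Finset.mem_union.1 hq with h | h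
    · exact ih h
    · exact (Finset.mem_filter.1 h).1

lemma P_sub_RT {N : ℕ} {P : Finset ℕ} (t : ℕ) : P ⊆ RT N P t := by
  induction t with
  | zero => exact fun _ h => h
  | succ t ih => exact fun q hq => Finset.mem_union.2 (Or.inl (ih hq))

lemma RT_mono_t {N : ℕ} {P : Finset ℕ} {t t' : ℕ} (h : t ≤ t') : RT N P t ⊆ RT N P t' := by
  induction t' with
  | zero => rw [Nat.le_zero.1 h]
  | succ t' ih =>
    rcases Nat.lt_or_ge t (t'+1) with hlt | hge
    · exact fun q hq => Finset.mem_union.2 (Or.inl (ih (by omega) hq))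
    · have : t = t' + 1 := by omega
      rw [this]

lemma RT_wsum {N : ℕ} {x : ℝ} (hN : (N:ℝ) ≤ x) (hx : 2 ≤ x) {P : Finset ℕ}
    (hP : P ⊆ F N) (t : ℕ) : wsum (RT N P t) ≤ (5 * Real.log x)^t * wsum P := by
  have hlog : (1:ℝ)/2 ≤ Real.log x := by
    have h2 : Real.log 2 ≤ Real.log x := Real.log_le_log (by norm_num) hx
    have := Real.log_two_gt_d9
    linarith
  induction t with
  | zero => simp [RT]
  | succ t ih =>
    have h1 : wsum (RT N P (t+1)) ≤ wsum (RT N P t) + wsum (stp N (RT N P t)) :=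
      wsum_union_le _ _
    have h2 : wsum (stp N (RT N P t)) ≤ (1 + Real.log x) * wsum (RT N P t) :=
      stp_wsum hN hx (fun p hp => F_prime (RT_sub_F hP t hp))
    have h3 : wsum (RT N P t) + (1 + Real.log x) * wsum (RT N P t)
        = (2 + Real.log x) * wsum (RT N P t) := by ring
    have h4 : (2 + Real.log x) * wsum (RT N P t) ≤ (5 * Real.log x) * wsum (RT N P t) := by
      apply mul_le_mul_of_nonneg_right (by linarith) (wsum_nonneg _)
    calc wsum (RT N P (t+1)) ≤ (2 + Real.log x) * wsum (RT N P t) := by linarith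
      _ ≤ (5 * Real.log x) * ((5 * Real.log x)^t * wsum P) := by
          refine le_trans h4 (mul_le_mul_of_nonneg_left ih (by linarith))
      _ = (5 * Real.log x)^(t+1) * wsum P := by ring

lemma RT_mem {N : ℕ} {P : Finset ℕ} {t q p : ℕ} (hq : q ∈ F N) (hr : Rch t q p)
    (hp : p ∈ P) : q ∈ RT N P t := by
  induction t generalizing q with
  | zero => exact hr ▸ hp
  | succ t ih =>
    rcases hr with rfl | ⟨c, hc, hcd, hrc⟩
    · exact P_sub_RT (t+1) hp
    · have hq2 := (F_prime hq).two_le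
      have hc1 : c ≤ q - 1 := Nat.le_of_dvd (by omega) hcd
      have hcF : c ∈ F N := by
        rw [F, Finset.mem_filter, Finset.mem_Icc]
        exact ⟨⟨hc.two_le.trans' (by omega), by have := F_le hq; omega⟩, hc⟩
      exact Finset.mem_union.2 (Or.inr (Finset.mem_filter.2 ⟨hq, c, ih hcF hrc, hcd⟩))

lemma count_div {N : ℕ} (D : Finset ℕ) (hD : ∀ d ∈ D, 1 ≤ d) {x : ℝ} (hN : (N:ℝ) ≤ x)
    (hx : 0 ≤ x) :
    (((Finset.Icc 1 N).filter (fun n => ∃ d ∈ D, d ∣ n)).card : ℝ) ≤ x * wsum D := by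
  classical
  have hsub : (Finset.Icc 1 N).filter (fun n => ∃ d ∈ D, d ∣ n)
      ⊆ D.biUnion (fun d => (Finset.Icc 1 N).filter (fun n => d ∣ n)) := by
    intro n hn
    rw [Finset.mem_filter] at hn
    obtain ⟨h1, d, hd, hdvd⟩ := hn
    exact Finset.mem_biUnion.2 ⟨d, hd, Finset.mem_filter.2 ⟨h1, hdvd⟩⟩
  have h1 := Finset.card_le_card hsub
  have h2 := Finset.card_biUnion_le (s := D) (t := fun d => (Finset.Icc 1 N).filter (fun n => d ∣ n))
  have h3 : ∀ d ∈ D, (((Finset.Icc 1 N).filter (fun n => d ∣ n)).card : ℝ) ≤ x * (1/(d:ℝ)) := by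
    intro d hd
    have heq : (Finset.Icc 1 N) = Finset.Ioc 0 N := by
      rw [← Finset.Icc_add_one_left_eq_Ioc]; rfl
    rw [heq, Nat.Ioc_filter_dvd_card_eq_div]
    have hd1 : (1:ℝ) ≤ (d:ℝ) := by exact_mod_cast hD d hd
    calc ((N / d : ℕ) : ℝ) ≤ (N:ℝ) / (d:ℝ) := Nat.cast_div_le
      _ ≤ x / (d:ℝ) := by gcongr
      _ = x * (1/(d:ℝ)) := by ring
  calc (((Finset.Icc 1 N).filter (fun n => ∃ d ∈ D, d ∣ n)).card : ℝ)
      ≤ ((D.biUnion fun d => (Finset.Icc 1 N).filter (fun n => d ∣ n)).card : ℝ) := by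
        exact_mod_cast h1
    _ ≤ ∑ d ∈ D, (((Finset.Icc 1 N).filter (fun n => d ∣ n)).card : ℝ) := by exact_mod_cast h2
    _ ≤ ∑ d ∈ D, x * (1/(d:ℝ)) := Finset.sum_le_sum h3
    _ = x * wsum D := by rw [wsum, Finset.mul_sum]



lemma rch_step {t q p : ℕ} (h : Rch t q p) (hne : q ≠ p) :
    1 ≤ t ∧ ∃ c, c.Prime ∧ c ∣ q - 1 ∧ Rch (t-1) c p := by
  match t, h with
  | 0, h => exact absurd h hne
  | t+1, Or.inl h => exact absurd h hne
  | t+1, Or.inr ⟨c, hc, hd, hr⟩ => exact ⟨by omega, c, hc, hd, by simpa using hr⟩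

/-- branch predicate: `a` is either `r` itself (mixed case) or heads a chain of length
`ba` with `s + 1 + ba ≤ T` ending at a prime `≡ 1 mod r`. -/
def Br (r T s a : ℕ) : Prop :=
  a = r ∨ (a.Prime ∧ ∃ ba pa, s + 1 + ba ≤ T ∧ pa.Prime ∧ r ∣ pa - 1 ∧ Rch ba a pa)

lemma prime_lt_of_dvd_sub_one {r p : ℕ} (hp : p.Prime) (h : r ∣ p - 1) (hr : 1 ≤ r) :
    r < p := by
  have h2 := hp.two_le
  have := Nat.le_of_dvd (by omega) h
  omega

lemma split {r : ℕ} (hr : r.Prime) :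
    ∀ t t' q p p', q.Prime → p.Prime → p'.Prime → Rch t q p → Rch t' q p' → p ≠ p' →
      r ∣ p - 1 → r ∣ p' - 1 →
      ∃ s u a a', s ≤ t ∧ s ≤ t' ∧ u.Prime ∧ Rch s q u ∧ a ≠ a' ∧ a * a' ∣ u - 1 ∧
        Br r (max t t') s a ∧ Br r (max t t') s a' := by
  intro t
  induction t using Nat.strong_induction_on with
  | _ t IH =>
  intro t' q p p' hq hp hp' hrch hrch' hne hrp hrp'
  by_cases hqp : q = p
  · -- mixed case: u = q = p
    subst hqp
    have hqp' : q ≠ p' := hne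
    obtain ⟨ht1, c', hc', hcd', hrc'⟩ := rch_step hrch' hqp'
    have hrc'lt : r < p' := prime_lt_of_dvd_sub_one hp' hrp' (by have := hr.two_le; omega)
    have hp'c : p' ≤ c' := rch_le hrc' hc'.two_le
    have hrne : r ≠ c' := by omega
    refine ⟨0, q, r, c', Nat.zero_le t, Nat.zero_le t', hq, rfl, hrne, ?_, Or.inl rfl, ?_⟩
    · exact (Nat.Coprime.mul_dvd_of_dvd_of_dvd ((Nat.coprime_primes hr hc').2 hrne) hrp hcd')
    · exact Or.inr ⟨hc', t'-1, p', by omega, hp', hrp', hrc'⟩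
  · by_cases hqp' : q = p'
    · subst hqp'
      obtain ⟨ht1, c, hc, hcd, hrc⟩ := rch_step hrch hqp
      have hrlt : r < p := prime_lt_of_dvd_sub_one hp hrp (by have := hr.two_le; omega)
      have hpc : p ≤ c := rch_le hrc hc.two_le
      have hrne : c ≠ r := by omega
      refine ⟨0, q, c, r, Nat.zero_le t, Nat.zero_le t', hq, rfl, hrne, ?_, ?_, Or.inl rfl⟩
      · exact (Nat.Coprime.mul_dvd_of_dvd_of_dvd ((Nat.coprime_primes hc hr).2 hrne) hcd hrp')
      · exact Or.inr ⟨hc, t-1, p, by omega, hp, hrp, hrc⟩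
    · obtain ⟨ht1, c, hc, hcd, hrc⟩ := rch_step hrch hqp
      obtain ⟨ht1', c', hc', hcd', hrc'⟩ := rch_step hrch' hqp'
      by_cases hcc : c = c'
      · subst hcc
        obtain ⟨s, u, a, a', hs, hs', hu, hru, hane, hadvd, hBa, hBa'⟩ :=
          IH (t-1) (by omega) (t'-1) c p p' hc hp hp' hrc hrc' hne hrp hrp'
        refine ⟨s+1, u, a, a', by omega, by omega, hu, ?_, hane, hadvd, ?_, ?_⟩
        · match t, ht1 with
          | t+1, _ => exact Or.inr ⟨c, hc, hcd, by simpa using hru⟩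
        · rcases hBa with h | ⟨h1, ba, pa, h2, h3, h4, h5⟩
          · exact Or.inl h
          · exact Or.inr ⟨h1, ba, pa, by omega, h3, h4, h5⟩
        · rcases hBa' with h | ⟨h1, ba, pa, h2, h3, h4, h5⟩
          · exact Or.inl h
          · exact Or.inr ⟨h1, ba, pa, by omega, h3, h4, h5⟩
      · refine ⟨0, q, c, c', Nat.zero_le t, Nat.zero_le t', hq, rfl, hcc, ?_, ?_, ?_⟩
        · exact (Nat.Coprime.mul_dvd_of_dvd_of_dvd ((Nat.coprime_primes hc hc').2 hcc) hcd hcd')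
        · exact Or.inr ⟨hc, t-1, p, by omega, hp, hrp, hrc⟩
        · exact Or.inr ⟨hc', t'-1, p', by omega, hp', hrp', hrc'⟩


lemma wsum_singleton (b : ℕ) : wsum {b} = 1/(b:ℝ) := by simp [wsum]

lemma wsum_insert_le (b : ℕ) (T : Finset ℕ) : wsum (insert b T) ≤ 1/(b:ℝ) + wsum T := by
  have : insert b T ⊆ {b} ∪ T := by intro q hq; simpa using hq
  refine le_trans (wsum_mono this) (le_trans (wsum_union_le _ _) ?_)
  rw [wsum_singleton]

lemma wsum_biUnion_le' {ι : Type} [DecidableEq ι] (T : Finset ι) (f : ι → Finset ℕ) :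
    wsum (T.biUnion f) ≤ ∑ p ∈ T, wsum (f p) := by
  classical
  induction T using Finset.induction_on with
  | empty => simp [wsum]
  | insert _ _ hx ih =>
    rename_i a s
    rw [Finset.biUnion_insert, Finset.sum_insert hx]
    exact le_trans (wsum_union_le _ _) (by linarith)

lemma wsum_image_le {ι : Type} (s : Finset ι) (f : ι → ℕ) :
    wsum (s.image f) ≤ ∑ p ∈ s, (1/((f p : ℕ):ℝ)) := by
  classical
  induction s using Finset.induction_on with
  | empty => simp [wsum]
  | insert _ _ hx ih =>
    rename_i a s
    rw [Finset.image_insert, Finset.sum_insert hx]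
    exact le_trans (wsum_insert_le _ _) (by linarith)

def Pr (N r : ℕ) : Finset ℕ := (F N).filter (fun p => r ∣ p - 1)
def Pr2 (N r : ℕ) : Finset ℕ := (F N).filter (fun p => r^2 ∣ p - 1)
noncomputable def HS (N r s : ℕ) : Finset ℕ := insert r (RT N (Pr N r) s)
noncomputable def SplitS (N r s : ℕ) : Finset ℕ :=
  (F N).filter (fun u => ∃ a ∈ HS N r s, ∃ a' ∈ HS N r s, a ≠ a' ∧ a * a' ∣ u - 1)
noncomputable def Bot1 (N r k : ℕ) : Finset ℕ := RT N (Pr N r) (k-2)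
noncomputable def pairs (N r k : ℕ) : Finset ℕ :=
  (((Bot1 N r k) ×ˢ (Bot1 N r k)).filter (fun pr => pr.1 ≠ pr.2)).image (fun pr => pr.1 * pr.2)
noncomputable def BotC2 (N r k : ℕ) : Finset ℕ :=
  (Finset.range (k-1)).biUnion (fun t => RT N (SplitS N r (k-2-t)) t)
noncomputable def Dr (N r k : ℕ) : Finset ℕ :=
  {r^2} ∪ RT N (Pr2 N r) (k-2) ∪ pairs N r k ∪ BotC2 N r k

lemma log_half {x : ℝ} (hx : 2 ≤ x) : (1:ℝ)/2 ≤ Real.log x := by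
  have h2 : Real.log 2 ≤ Real.log x := Real.log_le_log (by norm_num) hx
  have := Real.log_two_gt_d9
  linarith

lemma L_one {x : ℝ} (hx : 2 ≤ x) : (1:ℝ) ≤ 5 * Real.log x := by
  have := log_half hx; linarith

section weights
variable {N : ℕ} {x : ℝ} (hN : (N:ℝ) ≤ x) (hx : 2 ≤ x) {r : ℕ} (hr : r.Prime)
include hN hx hr

lemma Pr_wsum : wsum (Pr N r) ≤ (5 * Real.log x) * (1/(r:ℝ)) := by
  have hsub : Pr N r ⊆ (Finset.Icc 1 N).filter (fun q => 2 ≤ q ∧ r ∣ q - 1) := by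
    intro q hq
    rw [Pr, Finset.mem_filter] at hq
    exact Finset.mem_filter.2 ⟨(Finset.mem_filter.1 hq.1).1, (F_prime hq.1).two_le, hq.2⟩
  refine le_trans (wsum_mono hsub) (le_trans (divsum hN hx hr.one_lt.le) ?_)
  have hlog := log_half hx
  have hr0 : (0:ℝ) < r := by exact_mod_cast hr.pos
  calc (1 + Real.log x)/(r:ℝ) ≤ (5 * Real.log x)/(r:ℝ) := by gcongr; linarith
    _ = (5 * Real.log x) * (1/(r:ℝ)) := by ring

lemma Pr2_wsum : wsum (Pr2 N r) ≤ (5 * Real.log x) * (1/((r:ℝ)^2)) := by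
  have hsub : Pr2 N r ⊆ (Finset.Icc 1 N).filter (fun q => 2 ≤ q ∧ r^2 ∣ q - 1) := by
    intro q hq
    rw [Pr2, Finset.mem_filter] at hq
    exact Finset.mem_filter.2 ⟨(Finset.mem_filter.1 hq.1).1, (F_prime hq.1).two_le, hq.2⟩
  have hd1 : 1 ≤ r^2 := Nat.one_le_pow _ _ hr.pos
  refine le_trans (wsum_mono hsub) (le_trans (divsum hN hx hd1) ?_)
  have hlog := log_half hx
  have hrr : (0:ℝ) < r := by exact_mod_cast hr.pos
  have hr0 : (0:ℝ) < (r:ℝ)^2 := by positivity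
  have hcast : ((r^2 : ℕ):ℝ) = (r:ℝ)^2 := by push_cast; ring
  rw [hcast]
  calc (1 + Real.log x)/((r:ℝ)^2) ≤ (5 * Real.log x)/((r:ℝ)^2) := by gcongr; linarith
    _ = (5 * Real.log x) * (1/((r:ℝ)^2)) := by ring

lemma HS_wsum (s : ℕ) : wsum (HS N r s) ≤ 2 * (5 * Real.log x)^(s+1) * (1/(r:ℝ)) := by
  have h1 : wsum (RT N (Pr N r) s) ≤ (5 * Real.log x)^s * wsum (Pr N r) :=
    RT_wsum hN hx (Finset.filter_subset _ _) s
  have h2 := Pr_wsum hN hx hr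
  have hL := L_one hx
  have hr0 : (0:ℝ) < r := by exact_mod_cast hr.pos
  have hLs : (1:ℝ) ≤ (5 * Real.log x)^s := one_le_pow₀ hL
  refine le_trans (wsum_insert_le _ _) ?_
  have h3 : (5 * Real.log x)^s * wsum (Pr N r) ≤ (5 * Real.log x)^s * ((5 * Real.log x) * (1/(r:ℝ))) :=
    mul_le_mul_of_nonneg_left h2 (by positivity)
  have h4 : (1:ℝ)/(r:ℝ) ≤ (5 * Real.log x)^(s+1) * (1/(r:ℝ)) := by
    have : (1:ℝ) ≤ (5 * Real.log x)^(s+1) := one_le_pow₀ hL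
    nlinarith [one_div_pos.2 hr0]
  calc 1/(r:ℝ) + wsum (RT N (Pr N r) s)
      ≤ (5 * Real.log x)^(s+1) * (1/(r:ℝ)) + (5 * Real.log x)^(s+1) * (1/(r:ℝ)) := by
        have : (5 * Real.log x)^s * ((5 * Real.log x) * (1/(r:ℝ))) = (5 * Real.log x)^(s+1) * (1/(r:ℝ)) := by ring
        rw [this] at h3
        have := le_trans h1 h3
        linarith
    _ = 2 * (5 * Real.log x)^(s+1) * (1/(r:ℝ)) := by ring

lemma SplitS_wsum (s : ℕ) :
    wsum (SplitS N r s) ≤ 4 * (5 * Real.log x)^(2*s+3) * (1/((r:ℝ)^2)) := by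
  classical
  set L := 5 * Real.log x with hLdef
  have hL := L_one hx
  have hr0 : (0:ℝ) < r := by exact_mod_cast hr.pos
  have hHS1 : ∀ a ∈ HS N r s, 1 ≤ a := by
    intro a ha
    rw [HS, Finset.mem_insert] at ha
    rcases ha with rfl | ha
    · exact hr.pos
    · have := RT_sub_F (Finset.filter_subset _ _) s ha
      exact le_trans (by norm_num) (F_prime this).two_le
  have hsub : SplitS N r s ⊆ ((HS N r s) ×ˢ (HS N r s)).biUnion
      (fun pr => (Finset.Icc 1 N).filter (fun u => 2 ≤ u ∧ pr.1 * pr.2 ∣ u - 1)) := by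
    intro u hu
    rw [SplitS, Finset.mem_filter] at hu
    obtain ⟨huF, a, ha, a', ha', hne, hdvd⟩ := hu
    refine Finset.mem_biUnion.2 ⟨(a, a'), Finset.mem_product.2 ⟨ha, ha'⟩, ?_⟩
    exact Finset.mem_filter.2 ⟨(Finset.mem_filter.1 huF).1, (F_prime huF).two_le, hdvd⟩
  refine le_trans (wsum_mono hsub) (le_trans (wsum_biUnion_le' _ _) ?_)
  have hbd : ∀ pr ∈ (HS N r s) ×ˢ (HS N r s),
      wsum ((Finset.Icc 1 N).filter (fun u => 2 ≤ u ∧ pr.1 * pr.2 ∣ u - 1))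
        ≤ L * ((1/(pr.1:ℝ)) * (1/(pr.2:ℝ))) := by
    intro pr hpr
    rw [Finset.mem_product] at hpr
    have h1 : 1 ≤ pr.1 * pr.2 := Nat.one_le_iff_ne_zero.2 (by
      have := hHS1 pr.1 hpr.1; have := hHS1 pr.2 hpr.2; positivity)
    refine le_trans (divsum hN hx h1) ?_
    have ha : (1:ℝ) ≤ pr.1 := by exact_mod_cast hHS1 pr.1 hpr.1
    have hb : (1:ℝ) ≤ pr.2 := by exact_mod_cast hHS1 pr.2 hpr.2
    have hcast : ((pr.1 * pr.2 : ℕ):ℝ) = (pr.1:ℝ) * (pr.2:ℝ) := by push_cast; ring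
    rw [hcast]
    have hlog := log_half hx
    rw [div_le_iff₀ (by nlinarith)]
    have : L * (1/(pr.1:ℝ) * (1/(pr.2:ℝ))) * ((pr.1:ℝ) * (pr.2:ℝ)) = L := by
      field_simp
    rw [this, hLdef]
    linarith
  refine le_trans (Finset.sum_le_sum hbd) ?_
  rw [← Finset.mul_sum]
  have hprod : ∑ pr ∈ (HS N r s) ×ˢ (HS N r s), ((1/(pr.1:ℝ)) * (1/(pr.2:ℝ)))
      = wsum (HS N r s) * wsum (HS N r s) := by
    rw [Finset.sum_product (f := fun pr : ℕ × ℕ => (1/(pr.1:ℝ)) * (1/(pr.2:ℝ)))]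
    rw [wsum, Finset.sum_mul_sum]
  rw [hprod]
  have hHS := HS_wsum hN hx hr s
  have hws0 := wsum_nonneg (HS N r s)
  have hLs : (0:ℝ) < L^(s+1) := by positivity
  calc L * (wsum (HS N r s) * wsum (HS N r s))
      ≤ L * ((2 * L^(s+1) * (1/(r:ℝ))) * (2 * L^(s+1) * (1/(r:ℝ)))) := by
        apply mul_le_mul_of_nonneg_left ?_ (by linarith)
        apply mul_le_mul hHS hHS hws0 (by positivity)
    _ = 4 * L^(2*s+3) * (1/((r:ℝ)^2)) := by ring

end weights



lemma iter_totient_le (j n : ℕ) : Nat.totient^[j] n ≤ n := by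
  induction j with
  | zero => exact le_refl n
  | succ j ih =>
    rw [Function.iterate_succ_apply']
    exact le_trans (Nat.totient_le _) ih

noncomputable def Rset (N : ℕ) (y : ℝ) : Finset ℕ := (F N).filter (fun p => y < (p:ℝ))

section weights2
variable {N k : ℕ} {x : ℝ} (hN : (N:ℝ) ≤ x) (hx : 2 ≤ x) {r : ℕ} (hr : r.Prime)
include hN hx hr

lemma Dr_wsum (hk : 1 ≤ k) :
    wsum (Dr N r k) ≤ (4*(k:ℝ)+3) * (5 * Real.log x)^(2*k) * (1/((r:ℝ)^2)) := by
  classical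
  set L := 5 * Real.log x with hLdef
  have hL := L_one hx
  have hrr : (0:ℝ) < r := by exact_mod_cast hr.pos
  have hL2k : (1:ℝ) ≤ L^(2*k) := one_le_pow₀ hL
  have hinv : (0:ℝ) < 1/((r:ℝ)^2) := by positivity
  -- singleton
  have h1 : wsum {r^2} ≤ L^(2*k) * (1/((r:ℝ)^2)) := by
    rw [wsum_singleton]
    have : ((r^2:ℕ):ℝ) = (r:ℝ)^2 := by push_cast; ring
    rw [this]
    nlinarith
  -- B part
  have h2 : wsum (RT N (Pr2 N r) (k-2)) ≤ L^(2*k) * (1/((r:ℝ)^2)) := by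
    refine le_trans (RT_wsum hN hx (Finset.filter_subset _ _) (k-2)) ?_
    have := Pr2_wsum hN hx hr
    calc L^(k-2) * wsum (Pr2 N r) ≤ L^(k-2) * (L * (1/((r:ℝ)^2))) := by
          apply mul_le_mul_of_nonneg_left this (by positivity)
      _ = L^(k-2+1) * (1/((r:ℝ)^2)) := by rw [pow_succ]; ring
      _ ≤ L^(2*k) * (1/((r:ℝ)^2)) := by
          apply mul_le_mul_of_nonneg_right (pow_le_pow_right₀ hL (by omega)) (by positivity)
  -- pairs
  have hBot1 : wsum (Bot1 N r k) ≤ L^(k-2+1) * (1/(r:ℝ)) := by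
    refine le_trans (RT_wsum hN hx (Finset.filter_subset _ _) (k-2)) ?_
    have := Pr_wsum hN hx hr
    calc L^(k-2) * wsum (Pr N r) ≤ L^(k-2) * (L * (1/(r:ℝ))) := by
          apply mul_le_mul_of_nonneg_left this (by positivity)
      _ = L^(k-2+1) * (1/(r:ℝ)) := by rw [pow_succ]; ring
  have h3 : wsum (pairs N r k) ≤ L^(2*k) * (1/((r:ℝ)^2)) := by
    refine le_trans (wsum_image_le _ _) ?_
    have hstep : ∑ pr ∈ ((Bot1 N r k) ×ˢ (Bot1 N r k)).filter (fun pr => pr.1 ≠ pr.2),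
        (1/((pr.1 * pr.2 : ℕ):ℝ))
        ≤ ∑ pr ∈ (Bot1 N r k) ×ˢ (Bot1 N r k), (1/((pr.1 * pr.2 : ℕ):ℝ)) := by
      apply Finset.sum_le_sum_of_subset_of_nonneg (Finset.filter_subset _ _)
      intro i _ _; positivity
    refine le_trans hstep ?_
    have heq : ∑ pr ∈ (Bot1 N r k) ×ˢ (Bot1 N r k), (1/((pr.1 * pr.2 : ℕ):ℝ))
        = wsum (Bot1 N r k) * wsum (Bot1 N r k) := by
      rw [Finset.sum_product (f := fun pr : ℕ × ℕ => (1/((pr.1 * pr.2 : ℕ):ℝ)))]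
      rw [wsum, Finset.sum_mul_sum]
      apply Finset.sum_congr rfl
      intro a _
      apply Finset.sum_congr rfl
      intro b _
      push_cast
      rw [one_div_mul_one_div]
    rw [heq]
    have hws0 := wsum_nonneg (Bot1 N r k)
    calc wsum (Bot1 N r k) * wsum (Bot1 N r k)
        ≤ (L^(k-2+1) * (1/(r:ℝ))) * (L^(k-2+1) * (1/(r:ℝ))) :=
          mul_le_mul hBot1 hBot1 hws0 (by positivity)
      _ = L^((k-2+1)+(k-2+1)) * (1/((r:ℝ)^2)) := by rw [pow_add]; ring
      _ ≤ L^(2*k) * (1/((r:ℝ)^2)) := by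
          apply mul_le_mul_of_nonneg_right (pow_le_pow_right₀ hL (by omega)) (by positivity)
  -- C2 part
  have h4 : wsum (BotC2 N r k) ≤ 4*((k:ℝ)-1+1) * (L^(2*k) * (1/((r:ℝ)^2))) := by
    refine le_trans (wsum_biUnion_le' _ _) ?_
    have hterm : ∀ t ∈ Finset.range (k-1),
        wsum (RT N (SplitS N r (k-2-t)) t) ≤ 4 * (L^(2*k) * (1/((r:ℝ)^2))) := by
      intro t ht
      rw [Finset.mem_range] at ht
      refine le_trans (RT_wsum hN hx (Finset.filter_subset _ _) t) ?_
      have hsp := SplitS_wsum hN hx hr (k-2-t)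
      calc L^t * wsum (SplitS N r (k-2-t))
          ≤ L^t * (4 * L^(2*(k-2-t)+3) * (1/((r:ℝ)^2))) := by
            apply mul_le_mul_of_nonneg_left hsp (by positivity)
        _ = 4 * (L^(t + (2*(k-2-t)+3)) * (1/((r:ℝ)^2))) := by rw [pow_add]; ring
        _ ≤ 4 * (L^(2*k) * (1/((r:ℝ)^2))) := by
            have hle : t + (2*(k-2-t)+3) ≤ 2*k := by omega
            have := pow_le_pow_right₀ hL hle
            nlinarith [hinv]
    refine le_trans (Finset.sum_le_sum hterm) ?_
    rw [Finset.sum_const, Finset.card_range, nsmul_eq_mul]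
    have hcard : ((k-1 : ℕ):ℝ) ≤ (k:ℝ)-1+1 := by
      have h1 : (k-1 : ℕ) ≤ k := Nat.sub_le _ _
      have : ((k-1:ℕ):ℝ) ≤ (k:ℝ) := by exact_mod_cast h1
      linarith
    have hpos : (0:ℝ) ≤ 4 * (L^(2*k) * (1/((r:ℝ)^2))) := by positivity
    nlinarith [hpos, hcard]
  -- combine
  have hu1 : wsum (Dr N r k) ≤ wsum {r^2} + wsum (RT N (Pr2 N r) (k-2))
      + wsum (pairs N r k) + wsum (BotC2 N r k) := by
    rw [Dr]
    refine le_trans (wsum_union_le _ _) ?_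
    have := wsum_union_le ({r^2} ∪ RT N (Pr2 N r) (k-2)) (pairs N r k)
    have := wsum_union_le {r^2} (RT N (Pr2 N r) (k-2))
    linarith
  have hkR : (1:ℝ) ≤ (k:ℝ) := by exact_mod_cast hk
  calc wsum (Dr N r k) ≤ wsum {r^2} + wsum (RT N (Pr2 N r) (k-2))
      + wsum (pairs N r k) + wsum (BotC2 N r k) := hu1
    _ ≤ L^(2*k) * (1/((r:ℝ)^2)) + L^(2*k) * (1/((r:ℝ)^2)) + L^(2*k) * (1/((r:ℝ)^2))
        + 4*((k:ℝ)-1+1) * (L^(2*k) * (1/((r:ℝ)^2))) := by linarith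
    _ = (4*(k:ℝ)+3) * (L^(2*k) * (1/((r:ℝ)^2))) := by ring
    _ = (4*(k:ℝ)+3) * L^(2*k) * (1/((r:ℝ)^2)) := by ring

end weights2

lemma Rset_sum {N : ℕ} {y : ℝ} (hy : 2 ≤ y) :
    ∑ r ∈ Rset N y, (1/((r:ℝ)^2)) ≤ 2/y := by
  set M := ⌊y⌋₊ with hM
  have hM2 : 2 ≤ M := Nat.le_floor (by exact_mod_cast hy)
  have hsub : Rset N y ⊆ Finset.Icc (M+1) N := by
    intro p hp
    rw [Rset, Finset.mem_filter] at hp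
    obtain ⟨hpF, hpy⟩ := hp
    have h1 : (M:ℝ) ≤ y := Nat.floor_le (by linarith)
    have : (M:ℝ) < (p:ℝ) := lt_of_le_of_lt h1 hpy
    have : M < p := by exact_mod_cast this
    exact Finset.mem_Icc.2 ⟨by omega, F_le hpF⟩
  have h2 : ∑ r ∈ Rset N y, (1/((r:ℝ)^2)) ≤ ∑ r ∈ Finset.Icc (M+1) N, (1/((r:ℝ)^2)) := by
    apply Finset.sum_le_sum_of_subset_of_nonneg hsub
    intro i _ _; positivity
  refine le_trans h2 (le_trans (sq_tel M (by omega) N) ?_)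
  have hfl : y - 1 < (M:ℝ) := by
    have := Nat.sub_one_lt_floor y
    simpa using this
  have hM0 : (0:ℝ) < M := by positivity
  rw [div_le_div_iff₀ hM0 (by linarith : (0:ℝ) < y)]
  linarith

lemma mem_bad {x y : ℝ} {k N n : ℕ} (hn : 0 < n) (hnN : n ≤ N)
    (hP : ∀ p, p.Prime → p ∣ n → p ∈ iterP x y k)
    {w : ℕ} (hw : w.Prime) (hwy : y < (w:ℝ)) (hwd : w ∣ Nat.totient^[k] n) :
    ∃ r ∈ Rset N y, ∃ d ∈ Dr N r k, d ∣ n := by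
  obtain ⟨r, j, hr, hry, hjk, hsq⟩ := descent hn hP hw hwy hwd
  have hitpos : 0 < Nat.totient^[j] n := iter_totient_pos j hn
  have hrN : r ≤ N := by
    have h1 : r^2 ≤ Nat.totient^[j] n := Nat.le_of_dvd hitpos hsq
    have h2 : r ≤ r^2 := Nat.le_self_pow two_ne_zero r
    have h3 := iter_totient_le j n
    omega
  have hFmem : ∀ m : ℕ, m.Prime → m ≤ N → m ∈ F N := fun m hm hmN =>
    Finset.mem_filter.2 ⟨Finset.mem_Icc.2 ⟨hm.pos, hmN⟩, hm⟩
  have hrR : r ∈ Rset N y := Finset.mem_filter.2 ⟨hFmem r hr hrN, hry⟩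
  refine ⟨r, hrR, ?_⟩
  rcases squareS hr hn hsq with hA | ⟨i, hij, hBC⟩
  · refine ⟨r^2, ?_, hA⟩
    rw [Dr]
    exact Finset.mem_union.2 (Or.inl (Finset.mem_union.2 (Or.inl (Finset.mem_union.2
      (Or.inl (Finset.mem_singleton.2 rfl))))))
  · have hik : i ≤ k - 2 := by omega
    rcases hBC with ⟨q, hq, hqd, hq1⟩ | ⟨q, q', hq, hq', hneq, hqd, hq'd, hr1, hr1'⟩
    · obtain ⟨q₀, hq₀, hq₀n, hrch⟩ := chain_lemma hn hq hqd
      have hq₀N : q₀ ≤ N := le_trans (Nat.le_of_dvd hn hq₀n) hnN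
      have hqN : q ≤ N := le_trans (le_trans (Nat.le_of_dvd (iter_totient_pos i hn) hqd)
        (iter_totient_le i n)) hnN
      have hqP : q ∈ Pr2 N r := Finset.mem_filter.2 ⟨hFmem q hq hqN, hq1⟩
      have hmem : q₀ ∈ RT N (Pr2 N r) (k-2) :=
        RT_mono_t hik (RT_mem (hFmem q₀ hq₀ hq₀N) hrch hqP)
      refine ⟨q₀, ?_, hq₀n⟩
      rw [Dr]
      exact Finset.mem_union.2 (Or.inl (Finset.mem_union.2 (Or.inl (Finset.mem_union.2
        (Or.inr hmem)))))
    · obtain ⟨q₀, hq₀, hq₀n, hrch⟩ := chain_lemma hn hq hqd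
      obtain ⟨q₀', hq₀', hq₀n', hrch'⟩ := chain_lemma hn hq' hq'd
      have hq₀N : q₀ ≤ N := le_trans (Nat.le_of_dvd hn hq₀n) hnN
      have hq₀N' : q₀' ≤ N := le_trans (Nat.le_of_dvd hn hq₀n') hnN
      have hqN : q ≤ N := le_trans (le_trans (Nat.le_of_dvd (iter_totient_pos i hn) hqd)
        (iter_totient_le i n)) hnN
      have hq'N : q' ≤ N := le_trans (le_trans (Nat.le_of_dvd (iter_totient_pos i hn) hq'd)
        (iter_totient_le i n)) hnN
      by_cases hbot : q₀ = q₀'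
      · subst hbot
        obtain ⟨s, u, a, a', hs, hs', hu, hru, hane, hadvd, hBa, hBa'⟩ :=
          split hr i i q₀ q q' hq₀ hq hq' hrch hrch' hneq hr1 hr1'
        rw [max_self i] at hBa hBa'
        have huq₀ : u ≤ q₀ := rch_le hru hq₀.two_le
        have huN : u ≤ N := le_trans huq₀ hq₀N
        have hu2 : 2 ≤ u := hu.two_le
        have hHSmem : ∀ b, Br r i s b → b ∣ u - 1 → b ∈ HS N r (k-2-s) := by
          intro b hb hbdvd
          rcases hb with rfl | ⟨hbp, ba, pa, hba, hpap, hrpa, hrba⟩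
          · exact Finset.mem_insert_self _ _
          · have hbu : b ≤ u - 1 := Nat.le_of_dvd (by omega) hbdvd
            have hbN : b ≤ N := by omega
            have hpaN : pa ≤ N := le_trans (rch_le hrba hbp.two_le) hbN
            have hpaP : pa ∈ Pr N r := Finset.mem_filter.2 ⟨hFmem pa hpap hpaN, hrpa⟩
            have hmem : b ∈ RT N (Pr N r) ba := RT_mem (hFmem b hbp hbN) hrba hpaP
            exact Finset.mem_insert.2 (Or.inr (RT_mono_t (by omega) hmem))
        have hau : a ∣ u - 1 := dvd_trans (dvd_mul_right a a') hadvd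
        have hau' : a' ∣ u - 1 := dvd_trans (dvd_mul_left a' a) hadvd
        have huS : u ∈ SplitS N r (k-2-s) := Finset.mem_filter.2
          ⟨hFmem u hu huN, a, hHSmem a hBa hau, a', hHSmem a' hBa' hau', hane, hadvd⟩
        have hmem : q₀ ∈ RT N (SplitS N r (k-2-s)) s :=
          RT_mem (hFmem q₀ hq₀ hq₀N) hru huS
        refine ⟨q₀, ?_, hq₀n⟩
        rw [Dr]
        refine Finset.mem_union.2 (Or.inr ?_)
        rw [BotC2]
        exact Finset.mem_biUnion.2 ⟨s, Finset.mem_range.2 (by omega), hmem⟩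
      · have hqP : q ∈ Pr N r := Finset.mem_filter.2 ⟨hFmem q hq hqN, hr1⟩
        have hq'P : q' ∈ Pr N r := Finset.mem_filter.2 ⟨hFmem q' hq' hq'N, hr1'⟩
        have h1 : q₀ ∈ Bot1 N r k :=
          RT_mono_t hik (RT_mem (hFmem q₀ hq₀ hq₀N) hrch hqP)
        have h1' : q₀' ∈ Bot1 N r k :=
          RT_mono_t hik (RT_mem (hFmem q₀' hq₀' hq₀N') hrch' hq'P)
        refine ⟨q₀ * q₀', ?_, Nat.Coprime.mul_dvd_of_dvd_of_dvd
          ((Nat.coprime_primes hq₀ hq₀').2 hbot) hq₀n hq₀n'⟩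
        rw [Dr]
        refine Finset.mem_union.2 (Or.inl (Finset.mem_union.2 (Or.inr ?_)))
        rw [pairs]
        exact Finset.mem_image.2 ⟨(q₀, q₀'),
          Finset.mem_filter.2 ⟨Finset.mem_product.2 ⟨h1, h1'⟩, hbot⟩, rfl⟩

lemma Dr_one_le {N r k : ℕ} (hr : r.Prime) : ∀ d ∈ Dr N r k, 1 ≤ d := by
  intro d hd
  rw [Dr] at hd
  rcases Finset.mem_union.1 hd with hd | hd
  · rcases Finset.mem_union.1 hd with hd | hd
    · rcases Finset.mem_union.1 hd with hd | hd
      · rw [Finset.mem_singleton.1 hd]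
        exact Nat.one_le_pow _ _ hr.pos
      · exact le_trans (by norm_num)
          (F_prime (RT_sub_F (Finset.filter_subset _ _) _ hd)).two_le
    · rw [pairs] at hd
      obtain ⟨pr, hpr, rfl⟩ := Finset.mem_image.1 hd
      have h1 := Finset.mem_product.1 (Finset.mem_filter.1 hpr).1
      have ha := (F_prime (RT_sub_F (Finset.filter_subset _ _) _ h1.1)).pos
      have hb := (F_prime (RT_sub_F (Finset.filter_subset _ _) _ h1.2)).pos
      exact Nat.one_le_iff_ne_zero.2 (by positivity)
  · rw [BotC2] at hd
    obtain ⟨t, _, hmem⟩ := Finset.mem_biUnion.1 hd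
    exact (F_prime (RT_sub_F (Finset.filter_subset _ _) _ hmem)).pos

end St4

theorem statement4 (k : ℕ) (hk : 1 ≤ k) :
    ∃ C : ℝ, 0 < C ∧ ∀ x y : ℝ, 2 ≤ x → 2 ≤ y → y ≤ x →
      |(PhiSmooth k x y : ℝ) - (smoothIn x (iterP x y k) : ℝ)| ≤
        C * x * (Real.log x) ^ (2 * k) / y := by
  classical
  obtain ⟨k', rfl⟩ : ∃ k', k = k' + 1 := ⟨k - 1, by omega⟩
  set k := k' + 1
  refine ⟨2 * (4*(k:ℝ)+3) * 25^k, by positivity, ?_⟩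
  intro x y hx hy hyx
  set N := ⌊x⌋₊ with hNdef
  have hN : (N:ℝ) ≤ x := Nat.floor_le (by linarith)
  set Φ := {n : ℕ | 0 < n ∧ (n : ℝ) ≤ x ∧
    ∀ p : ℕ, p.Prime → p ∣ (Nat.totient^[k] n) → (p : ℝ) ≤ y} with hΦ
  set Ψ := {n : ℕ | 0 < n ∧ (n : ℝ) ≤ x ∧ ∀ p : ℕ, p.Prime → p ∣ n → p ∈ iterP x y k} with hΨ
  have hPhiEq : PhiSmooth k x y = Φ.ncard := rfl
  have hPsiEq : smoothIn x (iterP x y k) = Ψ.ncard := rfl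
  have hsub : Φ ⊆ Ψ := by
    intro n hn
    obtain ⟨h1, h2, h3⟩ := hn
    exact ⟨h1, h2, St4.incl k' h1 h2 h3⟩
  have hΨN : ∀ n ∈ Ψ, n ∈ Finset.Icc 1 N := by
    intro n hn
    exact Finset.mem_Icc.2 ⟨hn.1, Nat.le_floor hn.2.1⟩
  have hfinΨ : Ψ.Finite := Set.Finite.subset (Finset.Icc 1 N).finite_toSet hΨN
  have hfinΦ : Φ.Finite := hfinΨ.subset hsub
  have hle : Φ.ncard ≤ Ψ.ncard := Set.ncard_le_ncard hsub hfinΨ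
  have habs : |(Φ.ncard : ℝ) - (Ψ.ncard : ℝ)| = ((Ψ \ Φ).ncard : ℝ) := by
    rw [Set.ncard_diff hsub hfinΦ, Nat.cast_sub hle, abs_sub_comm, abs_of_nonneg]
    have : (Φ.ncard : ℝ) ≤ (Ψ.ncard : ℝ) := by exact_mod_cast hle
    linarith
  -- the bad divisor set
  set D : Finset ℕ := (St4.Rset N y).biUnion (fun r => St4.Dr N r k) with hD
  set bad : Finset ℕ := (Finset.Icc 1 N).filter (fun n => ∃ d ∈ D, d ∣ n) with hbad
  have hsubbad : (Ψ \ Φ) ⊆ ↑bad := by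
    intro n hn
    obtain ⟨hnΨ, hnΦ⟩ := hn
    obtain ⟨hn0, hnx, hP⟩ := hnΨ
    have hnΦ' : ¬ ∀ p : ℕ, p.Prime → p ∣ (Nat.totient^[k] n) → (p : ℝ) ≤ y := by
      intro h
      exact hnΦ ⟨hn0, hnx, h⟩
    push_neg at hnΦ'
    obtain ⟨w, hw, hwd, hwy⟩ := hnΦ'
    obtain ⟨r, hrR, d, hdD, hdn⟩ := St4.mem_bad hn0 (Nat.le_floor hnx) hP hw hwy hwd
    refine Finset.mem_coe.2 (Finset.mem_filter.2 ⟨Finset.mem_Icc.2 ⟨hn0, Nat.le_floor hnx⟩,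
      d, Finset.mem_biUnion.2 ⟨r, hrR, hdD⟩, hdn⟩)
  have hcard1 : ((Ψ \ Φ).ncard : ℝ) ≤ (bad.card : ℝ) := by
    have := Set.ncard_le_ncard hsubbad bad.finite_toSet
    rw [Set.ncard_coe_finset] at this
    exact_mod_cast this
  -- counting
  have hD1 : ∀ d ∈ D, 1 ≤ d := by
    intro d hd
    obtain ⟨r, hr, hdr⟩ := Finset.mem_biUnion.1 hd
    exact St4.Dr_one_le (St4.F_prime (Finset.mem_filter.1 hr).1) d hdr
  have hcount : (bad.card : ℝ) ≤ x * St4.wsum D :=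
    St4.count_div D hD1 hN (by linarith)
  -- weight of D
  have hwD : St4.wsum D ≤ (4*(k:ℝ)+3) * (5 * Real.log x)^(2*k) * (2/y) := by
    refine le_trans (St4.wsum_biUnion_le' _ _) ?_
    have hterm : ∀ r ∈ St4.Rset N y,
        St4.wsum (St4.Dr N r k) ≤ (4*(k:ℝ)+3) * (5 * Real.log x)^(2*k) * (1/((r:ℝ)^2)) := by
      intro r hr
      exact St4.Dr_wsum hN hx (St4.F_prime (Finset.mem_filter.1 hr).1) (by omega)
    refine le_trans (Finset.sum_le_sum hterm) ?_
    rw [← Finset.mul_sum]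
    have hsum := St4.Rset_sum (N := N) hy
    have hL := St4.L_one hx
    have hpos : (0:ℝ) ≤ (4*(k:ℝ)+3) * (5 * Real.log x)^(2*k) := by positivity
    exact mul_le_mul_of_nonneg_left hsum hpos
  -- assemble
  rw [hPhiEq, hPsiEq, habs]
  have hy0 : (0:ℝ) < y := by linarith
  have hlog : (0:ℝ) ≤ Real.log x := by
    have := St4.log_half hx
    linarith
  have hfinal : x * ((4*(k:ℝ)+3) * (5 * Real.log x)^(2*k) * (2/y))
      = 2 * (4*(k:ℝ)+3) * 25^k * x * (Real.log x)^(2*k) / y := by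
    have hLpow : (5 * Real.log x)^(2*k) = 25^k * (Real.log x)^(2*k) := by
      rw [mul_pow]
      congr 1
      rw [pow_mul]
      norm_num
    rw [hLpow]
    field_simp
  calc ((Ψ \ Φ).ncard : ℝ) ≤ (bad.card : ℝ) := hcard1
    _ ≤ x * St4.wsum D := hcount
    _ ≤ x * ((4*(k:ℝ)+3) * (5 * Real.log x)^(2*k) * (2/y)) := by
        apply mul_le_mul_of_nonneg_left hwD (by linarith)
    _ = 2 * (4*(k:ℝ)+3) * 25^k * x * (Real.log x)^(2*k) / y := hfinal
end

section
/- For each real x ≥ 2 let P(x) be a set of primes ≤ x. Then the following are equivalent: (a) there exists a constant C > 0 such that for all x ≥ 2, ∑_{p ≤ x, p prime, p ∉ P(x)} 1/p ≤ C; (b) there exist constants c₁, c₂ > 0 such that for all x ≥ 2, c₁/log(x) ≤ ∏_{p ∈ P(x)} (1 − 1/p) ≤ c₂/log(x). -/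
open scoped Classical
open Finset

lemma aux_exp_le {t : ℝ} (h0 : 0 ≤ t) (h2 : t ≤ 1/2) : Real.exp (-(t + 2*t^2)) ≤ 1 - t := by
  have he : (t + 2*t^2) + 1 ≤ Real.exp (t + 2*t^2) := Real.add_one_le_exp _
  have hpos : (0:ℝ) < 1 + (t + 2*t^2) := by nlinarith
  have h1 : (1:ℝ) ≤ (1 - t) * (1 + (t + 2*t^2)) := by nlinarith
  have hinv : Real.exp (-(t + 2*t^2)) = (Real.exp (t + 2*t^2))⁻¹ := Real.exp_neg _
  rw [hinv]
  have h3 : (Real.exp (t + 2*t^2))⁻¹ ≤ (1 + (t + 2*t^2))⁻¹ :=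
    inv_anti₀ hpos (by linarith)
  refine h3.trans ?_
  rw [inv_le_iff_one_le_mul₀ hpos]
  linarith [h1]

lemma aux_exp_le' {p : ℕ} (hp : p.Prime) :
    Real.exp (-(1/(p:ℝ) + 2*(1/(p:ℝ))^2)) ≤ 1 - 1/(p:ℝ) := by
  have h2 : (2:ℝ) ≤ p := by exact_mod_cast hp.two_le
  apply aux_exp_le (by positivity)
  rw [div_le_div_iff₀ (by linarith) (by norm_num)]
  linarith

lemma aux_sq_sum (n : ℕ) : ∑ p ∈ n.primesBelow, (1/(p:ℝ))^2 ≤ 1 := by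
  have hsub : n.primesBelow ⊆ Finset.Ico 2 n := by
    intro p hp
    exact Finset.mem_Ico.mpr ⟨(Nat.prime_of_mem_primesBelow hp).two_le,
      Nat.lt_of_mem_primesBelow hp⟩
  calc ∑ p ∈ n.primesBelow, (1/(p:ℝ))^2
      ≤ ∑ k ∈ Finset.Ico 2 n, (1/(k:ℝ))^2 :=
        Finset.sum_le_sum_of_subset_of_nonneg hsub (fun i _ _ => by positivity)
    _ ≤ ∑ k ∈ Finset.Ico 2 n, (1/((k:ℝ)-1) - 1/k) := by
        refine Finset.sum_le_sum fun k hk => ?_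
        have hk2 : (2:ℝ) ≤ k := by exact_mod_cast (Finset.mem_Ico.mp hk).1
        have h1 : (0:ℝ) < k := by linarith
        have h0 : (0:ℝ) < (k:ℝ) - 1 := by linarith
        rw [div_sub_div _ _ (ne_of_gt h0) (ne_of_gt h1), div_pow, one_pow,
          div_le_div_iff₀ (by positivity) (by positivity)]
        nlinarith
    _ ≤ 1 := by
        rcases le_or_gt n 2 with h | h
        · rw [Finset.Ico_eq_empty (by omega)]; norm_num
        · rw [Finset.sum_Ico_eq_sum_range]
          have heq : ∀ i ∈ Finset.range (n-2),
              (1/(((2+i:ℕ):ℝ)-1) - 1/((2+i:ℕ):ℝ))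
                = (fun j : ℕ => 1/((j:ℝ)+1)) i - (fun j : ℕ => 1/((j:ℝ)+1)) (i+1) := by
            intro i _
            push_cast
            ring_nf
          rw [Finset.sum_congr rfl heq, Finset.sum_range_sub' (fun j : ℕ => 1/((j:ℝ)+1))]
          have : (0:ℝ) ≤ 1/(((n-2:ℕ):ℝ)+1) := by positivity
          norm_num
          linarith

-- Chebyshev-type bound: ∑_{p ≤ n} log p / p ≤ log n + log 4
lemma aux_T_le (n : ℕ) (hn : 1 ≤ n) :
    ∑ p ∈ (n+1).primesBelow, Real.log p / p ≤ Real.log n + Real.log 4 := by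
  have hn0 : (0:ℝ) < n := by exact_mod_cast hn
  have hfac0 : n.factorial ≠ 0 := Nat.factorial_ne_zero n
  -- each prime p ≤ n : n/p ≤ factorization (n!) p
  have hkey : ∀ p ∈ (n+1).primesBelow, (n / p : ℕ) ≤ (n.factorial).factorization p := by
    intro p hp
    have hpp := Nat.prime_of_mem_primesBelow hp
    have hpn : p ≤ n := by have := Nat.lt_of_mem_primesBelow hp; omega
    rw [← hpp.pow_dvd_iff_le_factorization hfac0]
    rw [Nat.Prime.pow_dvd_factorial_iff hpp (Nat.lt_succ_self _)]
    rcases Nat.eq_zero_or_pos (n / p) with h | h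
    · simp [h]
    · have hlog : 0 < Nat.log p n := Nat.log_pos hpp.one_lt hpn
      have h1 : 1 ∈ Finset.Ico 1 (Nat.log p n + 1) := by
        rw [Finset.mem_Ico]; omega
      calc n / p = n / p ^ 1 := by norm_num
        _ ≤ ∑ i ∈ Finset.Ico 1 (Nat.log p n + 1), n / p ^ i :=
            Finset.single_le_sum (f := fun i => n / p ^ i) (fun i _ => Nat.zero_le _) h1
  -- primes ≤ n are prime factors of n!
  have hsub : (n+1).primesBelow ⊆ (n.factorial).primeFactors := by
    intro p hp
    have hpp := Nat.prime_of_mem_primesBelow hp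
    have hpn : p ≤ n := by have := Nat.lt_of_mem_primesBelow hp; omega
    exact Nat.mem_primeFactors.mpr ⟨hpp, (Nat.Prime.dvd_factorial hpp).mpr hpn, hfac0⟩
  -- log n! = sum over prime factors
  have hlogfact : Real.log (n.factorial) = ∑ p ∈ (n.factorial).primeFactors, ((n.factorial).factorization p : ℝ) * Real.log p := by
    conv_lhs => rw [← Nat.factorization_prod_pow_eq_self hfac0]
    rw [Finsupp.prod, Nat.cast_prod, Real.log_prod]
    · apply Finset.sum_congr (Nat.support_factorization _)
      intro p hp
      rw [Nat.cast_pow, Real.log_pow]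
    · intro p hp
      have hpp : p.Prime := Nat.prime_of_mem_primeFactors (by rwa [← Nat.support_factorization])
      have hp0 : p ≠ 0 := hpp.pos.ne'
      simp only [Nat.cast_pow]
      exact pow_ne_zero _ (by exact_mod_cast hp0)
  have hstep1 : ∑ p ∈ (n+1).primesBelow, ((n / p : ℕ) : ℝ) * Real.log p ≤ Real.log (n.factorial) := by
    rw [hlogfact]
    refine (Finset.sum_le_sum fun p hp => ?_).trans
      (Finset.sum_le_sum_of_subset_of_nonneg hsub fun p hp _ => ?_)
    · have hpp := Nat.prime_of_mem_primesBelow hp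
      have : (0:ℝ) ≤ Real.log p := Real.log_nonneg (by exact_mod_cast hpp.one_lt.le)
      exact mul_le_mul_of_nonneg_right (by exact_mod_cast hkey p hp) this
    · have hpp := Nat.prime_of_mem_primeFactors hp
      have : (0:ℝ) ≤ Real.log p := Real.log_nonneg (by exact_mod_cast hpp.one_lt.le)
      positivity
  have hfactle : Real.log (n.factorial) ≤ n * Real.log n := by
    calc Real.log (n.factorial) ≤ Real.log ((n:ℝ)^n) := by
          apply Real.log_le_log (by exact_mod_cast Nat.factorial_pos n)
          exact_mod_cast Nat.factorial_le_pow n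
      _ = n * Real.log n := Real.log_pow n n
  -- primorial bound
  have hprim : ∑ p ∈ (n+1).primesBelow, Real.log p ≤ n * Real.log 4 := by
    have h1 : ∑ p ∈ (n+1).primesBelow, Real.log p = Real.log (primorial n) := by
      rw [primorial, Nat.cast_prod, Real.log_prod]
      · rfl
      · intro p hp
        have hpp : p.Prime := by
          simp only [Finset.mem_filter] at hp; exact hp.2
        exact_mod_cast hpp.pos.ne'
    rw [h1]
    calc Real.log (primorial n) ≤ Real.log ((4:ℝ)^n) := by
          apply Real.log_le_log (by exact_mod_cast primorial_pos n)
          exact_mod_cast primorial_le_4_pow n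
      _ = n * Real.log 4 := by rw [Real.log_pow]
  -- floor comparison: (n:ℝ)/p ≤ (n/p : ℕ) + 1
  have hfloor : ∀ p ∈ (n+1).primesBelow, (n:ℝ) * (Real.log p / p) ≤ ((n / p : ℕ) : ℝ) * Real.log p + Real.log p := by
    intro p hp
    have hpp := Nat.prime_of_mem_primesBelow hp
    have hp0 : (0:ℝ) < p := by exact_mod_cast hpp.pos
    have hlp : (0:ℝ) ≤ Real.log p := Real.log_nonneg (by exact_mod_cast hpp.one_lt.le)
    have hd : (n:ℝ) / p ≤ ((n / p : ℕ) : ℝ) + 1 := by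
      rw [div_le_iff₀ hp0]
      have := (Nat.div_lt_iff_lt_mul hpp.pos).mp (Nat.lt_succ_self (n / p))
      exact_mod_cast this.le
    calc (n:ℝ) * (Real.log p / p) = ((n:ℝ)/p) * Real.log p := by ring
      _ ≤ (((n / p : ℕ) : ℝ) + 1) * Real.log p := mul_le_mul_of_nonneg_right hd hlp
      _ = ((n / p : ℕ) : ℝ) * Real.log p + Real.log p := by ring
  have hmain : (n:ℝ) * ∑ p ∈ (n+1).primesBelow, Real.log p / p ≤ n * Real.log n + n * Real.log 4 := by
    rw [Finset.mul_sum]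
    calc ∑ p ∈ (n+1).primesBelow, (n:ℝ) * (Real.log p / p)
        ≤ ∑ p ∈ (n+1).primesBelow, (((n / p : ℕ) : ℝ) * Real.log p + Real.log p) :=
          Finset.sum_le_sum hfloor
      _ = (∑ p ∈ (n+1).primesBelow, ((n / p : ℕ) : ℝ) * Real.log p)
            + ∑ p ∈ (n+1).primesBelow, Real.log p := Finset.sum_add_distrib
      _ ≤ Real.log (n.factorial) + n * Real.log 4 := add_le_add hstep1 hprim
      _ ≤ n * Real.log n + n * Real.log 4 := by linarith
  have h2 : (n:ℝ) * ∑ p ∈ (n+1).primesBelow, Real.log p / p ≤ (n:ℝ) * (Real.log n + Real.log 4) := by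
    linarith [hmain]
  exact le_of_mul_le_mul_left h2 hn0

noncomputable def TTf (N : ℕ) : ℝ := ∑ p ∈ (N+1).primesBelow, Real.log p / p
noncomputable def SSf (N : ℕ) : ℝ := ∑ p ∈ (N+1).primesBelow, 1/(p:ℝ)
noncomputable def Phif (N : ℕ) : ℝ :=
  TTf N / Real.log N + Real.log (Real.log N) - Real.log 4 / Real.log N

lemma aux_succ (N : ℕ) (hN : 1 ≤ N) :
    SSf (N+1) - SSf N = (TTf (N+1) - TTf N) / Real.log ((N:ℝ)+1) := by
  have hlog : Real.log ((N:ℝ)+1) ≠ 0 := by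
    have : (1:ℝ) < (N:ℝ)+1 := by
      have : (1:ℝ) ≤ N := by exact_mod_cast hN
      linarith
    exact (Real.log_pos this).ne'
  unfold SSf TTf
  rw [show N+1+1 = (N+1)+1 from rfl, Nat.primesBelow_succ]
  by_cases hp : (N+1).Prime
  · rw [if_pos hp, Finset.sum_insert (Nat.notMem_primesBelow _),
      Finset.sum_insert (Nat.notMem_primesBelow _)]
    push_cast
    field_simp
    ring
  · rw [if_neg hp]
    simp

lemma aux_S_bound : ∃ C₀ : ℝ, ∀ N : ℕ, 2 ≤ N → SSf N ≤ Real.log (Real.log N) + C₀ := by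
  have hlog2 : (0:ℝ) < Real.log 2 := Real.log_pos (by norm_num)
  have hL : (0:ℝ) ≤ Real.log 4 := Real.log_nonneg (by norm_num)
  have claim : ∀ N : ℕ, 2 ≤ N → SSf N - Phif N ≤ SSf 2 - Phif 2 := by
    intro N hN
    induction N, hN using Nat.le_induction with
    | base => exact le_refl _
    | succ N hN ih =>
      have h2 : (2:ℝ) ≤ (N:ℝ) := by exact_mod_cast hN
      have ha : (0:ℝ) < Real.log N := Real.log_pos (by linarith)
      have hb : (0:ℝ) < Real.log ((N:ℝ)+1) := Real.log_pos (by linarith)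
      have hab : Real.log (N:ℝ) ≤ Real.log ((N:ℝ)+1) :=
        Real.log_le_log (by linarith) (by linarith)
      have hstep : SSf (N+1) - SSf N ≤ Phif (N+1) - Phif N := by
        rw [aux_succ N (by omega)]
        unfold Phif
        have hcast : ((N+1 : ℕ):ℝ) = (N:ℝ)+1 := by push_cast; ring
        rw [hcast]
        have hT0 : TTf N - Real.log 4 ≤ Real.log (N:ℝ) := by
          have h := aux_T_le N (by omega)
          unfold TTf
          linarith
        set a := Real.log (N:ℝ) with hadef
        set b := Real.log ((N:ℝ)+1) with hbdef
        set T := TTf N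
        set T' := TTf (N+1)
        set L := Real.log 4
        have hT : T - L ≤ a := hT0
        have hd : 1/b ≤ 1/a := by
          apply one_div_le_one_div_of_le ha hab
        have key1 : (T - L)*(1/a - 1/b) ≤ a*(1/a - 1/b) :=
          mul_le_mul_of_nonneg_right hT (by linarith)
        have key2 : a*(1/a - 1/b) = 1 - a/b := by
          field_simp
        have key3 : 1 - a/b ≤ Real.log b - Real.log a := by
          have h1 : Real.log (a/b) ≤ a/b - 1 := Real.log_le_sub_one_of_pos (by positivity)
          rw [Real.log_div ha.ne' hb.ne'] at h1
          linarith
        have key' : T/a - T/b - L/a + L/b ≤ Real.log b - Real.log a := by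
          have hexp : (T - L)*(1/a - 1/b) = T/a - T/b - L/a + L/b := by
            field_simp
            ring
          rw [hexp] at key1
          linarith [key1, key2 ▸ key1, key3]
        rw [sub_div]
        linarith [key']
      linarith [ih, hstep]
  refine ⟨1 + Real.log 4 / Real.log 2 + (SSf 2 - Phif 2), fun N hN => ?_⟩
  have h2 : (2:ℝ) ≤ (N:ℝ) := by exact_mod_cast hN
  have ha : (0:ℝ) < Real.log N := Real.log_pos (by linarith)
  have hlogmono : Real.log 2 ≤ Real.log N := Real.log_le_log (by norm_num) (by linarith)
  have hPhi : Phif N ≤ Real.log (Real.log N) + 1 + Real.log 4 / Real.log 2 := by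
    unfold Phif
    have hT : TTf N ≤ Real.log N + Real.log 4 := aux_T_le N (by omega)
    have h1 : TTf N / Real.log N ≤ (Real.log N + Real.log 4) / Real.log N := by
      gcongr
    have h2' : (Real.log N + Real.log 4) / Real.log N = 1 + Real.log 4 / Real.log N := by
      field_simp
    have h3 : Real.log 4 / Real.log N ≤ Real.log 4 / Real.log 2 := by
      gcongr
    have h4 : (0:ℝ) ≤ Real.log 4 / Real.log N := by positivity
    linarith [h1, h2' ▸ h1]
  have := claim N hN
  linarith [this, hPhi]

noncomputable def finv : ℕ →* ℝ where
  toFun := fun n => (n:ℝ)⁻¹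
  map_one' := by norm_num
  map_mul' := by
    intro m n
    push_cast
    rw [mul_inv]

lemma aux_prod_inv_ge (N : ℕ) (hN : 2 ≤ N) :
    Real.log N ≤ ∏ p ∈ N.primesBelow, (1 - (p:ℝ)⁻¹)⁻¹ := by
  have hlt : ∀ {p : ℕ}, p.Prime → ‖finv p‖ < 1 := by
    intro p hp
    have h2 : (2:ℝ) ≤ p := by exact_mod_cast hp.two_le
    have : (0:ℝ) < p := by linarith
    simp only [finv, MonoidHom.coe_mk, OneHom.coe_mk, Real.norm_eq_abs]
    rw [abs_of_nonneg (by positivity)]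
    rw [inv_lt_one_iff₀]
    right; linarith
  obtain ⟨-, hsum⟩ :=
    EulerProduct.summable_and_hasSum_smoothNumbers_prod_primesBelow_geometric hlt N
  have hprodeq : ∏ p ∈ N.primesBelow, (1 - finv p)⁻¹ = ∏ p ∈ N.primesBelow, (1 - (p:ℝ)⁻¹)⁻¹ := rfl
  rw [hprodeq] at hsum
  -- finite subsum over [1, N-1]
  set s : Finset N.smoothNumbers := (Finset.Ico 1 N).subtype (· ∈ N.smoothNumbers) with hs
  have h1 : ∑ m ∈ s, finv (m:ℕ) ≤ ∏ p ∈ N.primesBelow, (1 - (p:ℝ)⁻¹)⁻¹ := by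
    apply sum_le_hasSum s _ hsum
    intro m _
    simp only [finv, MonoidHom.coe_mk, OneHom.coe_mk]
    positivity
  have h2 : ∑ m ∈ s, finv (m:ℕ) = ∑ n ∈ Finset.Ico 1 N, (n:ℝ)⁻¹ := by
    rw [hs, Finset.sum_subtype_eq_sum_filter]
    apply Finset.sum_congr
    · apply Finset.filter_true_of_mem
      intro n hn
      rw [Finset.mem_Ico] at hn
      exact Nat.mem_smoothNumbers_of_lt (by omega) hn.2
    · intro n _
      rfl
  have h3 : (harmonic (N-1) : ℝ) = ∑ n ∈ Finset.Ico 1 N, (n:ℝ)⁻¹ := by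
    rw [harmonic_eq_sum_Icc]
    push_cast
    rw [show N = (N-1)+1 by omega, Finset.Ico_add_one_right_eq_Icc]
    norm_num
  have h4 : Real.log N ≤ (harmonic (N-1) : ℝ) := by
    have := log_add_one_le_harmonic (N-1)
    rwa [show N-1+1 = N by omega] at this
  rw [h2] at h1
  linarith [h1, h3 ▸ h4]

lemma aux_S_bound' : ∃ C₀ : ℝ, ∀ N : ℕ, 2 ≤ N →
    (∑ p ∈ (N+1).primesBelow, 1/(p:ℝ)) ≤ Real.log (Real.log N) + C₀ := by
  obtain ⟨C₀, h⟩ := aux_S_bound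
  refine ⟨C₀, fun N hN => ?_⟩
  have := h N hN
  unfold SSf at this
  exact this

lemma mertens_master : ∃ a : ℝ, 0 < a ∧ ∀ x : ℝ, 2 ≤ x →
    a / Real.log x ≤ (∏ p ∈ (⌊x⌋₊+1).primesBelow, (1 - 1/(p:ℝ))) ∧
    (∏ p ∈ (⌊x⌋₊+1).primesBelow, (1 - 1/(p:ℝ))) ≤ 1 / Real.log x := by
  obtain ⟨C₀, hC₀⟩ := aux_S_bound'
  refine ⟨Real.exp (-(C₀+2)), Real.exp_pos _, fun x hx => ?_⟩
  set n := ⌊x⌋₊ with hn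
  have hn2 : 2 ≤ n := Nat.le_floor (by exact_mod_cast hx)
  have hxn : (n:ℝ) ≤ x := Nat.floor_le (by linarith)
  have hxn1 : x < (n:ℝ)+1 := by
    have := Nat.lt_floor_add_one x
    push_cast at this ⊢
    linarith
  have hn2' : (2:ℝ) ≤ (n:ℝ) := by exact_mod_cast hn2
  have hlogx : (0:ℝ) < Real.log x := Real.log_pos (by linarith)
  have hfac : ∀ p ∈ (n+1).primesBelow, 0 < 1 - 1/(p:ℝ) ∧ 1 - 1/(p:ℝ) ≤ 1 := by
    intro p hp
    have hpp := Nat.prime_of_mem_primesBelow hp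
    have h2 : (2:ℝ) ≤ p := by exact_mod_cast hpp.two_le
    constructor
    · have : 1/(p:ℝ) ≤ 1/2 := by
        rw [div_le_div_iff₀ (by linarith) (by norm_num)]; linarith
      linarith
    · have : (0:ℝ) ≤ 1/(p:ℝ) := by positivity
      linarith
  have hWpos : 0 < ∏ p ∈ (n+1).primesBelow, (1 - 1/(p:ℝ)) :=
    Finset.prod_pos fun p hp => (hfac p hp).1
  constructor
  · -- lower bound
    have hpt : ∀ p ∈ (n+1).primesBelow,
        Real.exp (-(1/(p:ℝ) + 2*(1/(p:ℝ))^2)) ≤ 1 - 1/(p:ℝ) :=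
      fun p hp => aux_exp_le' (Nat.prime_of_mem_primesBelow hp)
    have hprodexp : Real.exp (∑ p ∈ (n+1).primesBelow, -(1/(p:ℝ) + 2*(1/(p:ℝ))^2))
        ≤ ∏ p ∈ (n+1).primesBelow, (1 - 1/(p:ℝ)) := by
      rw [Real.exp_sum]
      exact Finset.prod_le_prod (fun p _ => (Real.exp_pos _).le) hpt
    have hsum : -(Real.log (Real.log x) + C₀ + 2)
        ≤ ∑ p ∈ (n+1).primesBelow, -(1/(p:ℝ) + 2*(1/(p:ℝ))^2) := by
      rw [Finset.sum_neg_distrib]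
      have h1 : ∑ p ∈ (n+1).primesBelow, (1/(p:ℝ) + 2*(1/(p:ℝ))^2)
          = (∑ p ∈ (n+1).primesBelow, 1/(p:ℝ)) + 2 * ∑ p ∈ (n+1).primesBelow, (1/(p:ℝ))^2 := by
        rw [Finset.sum_add_distrib, Finset.mul_sum]
      have h2 := aux_sq_sum (n+1)
      have h3 := hC₀ n hn2
      have h4 : Real.log (Real.log (n:ℝ)) ≤ Real.log (Real.log x) := by
        apply Real.log_le_log (Real.log_pos (by linarith))
        exact Real.log_le_log (by linarith) hxn
      have : ∑ p ∈ (n+1).primesBelow, (1/(p:ℝ) + 2*(1/(p:ℝ))^2)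
          ≤ Real.log (Real.log x) + C₀ + 2 := by
        rw [h1]; linarith
      linarith
    calc Real.exp (-(C₀+2)) / Real.log x
        = Real.exp (-(Real.log (Real.log x) + C₀ + 2)) := by
          rw [show -(Real.log (Real.log x) + C₀ + 2) = -(C₀+2) + -(Real.log (Real.log x)) by ring,
            Real.exp_add, Real.exp_neg (Real.log (Real.log x)), Real.exp_log hlogx,
            div_eq_mul_inv]
      _ ≤ Real.exp (∑ p ∈ (n+1).primesBelow, -(1/(p:ℝ) + 2*(1/(p:ℝ))^2)) :=
          Real.exp_le_exp.mpr hsum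
      _ ≤ _ := hprodexp
  · -- upper bound
    have hPinv := aux_prod_inv_ge (n+1) (by omega)
    have hid : ∏ p ∈ (n+1).primesBelow, (1 - (p:ℝ)⁻¹)⁻¹
        = (∏ p ∈ (n+1).primesBelow, (1 - 1/(p:ℝ)))⁻¹ := by
      rw [← Finset.prod_inv_distrib]
      exact Finset.prod_congr rfl fun p _ => by rw [one_div]
    have hlogle : Real.log x ≤ (∏ p ∈ (n+1).primesBelow, (1 - 1/(p:ℝ)))⁻¹ := by
      rw [← hid]
      refine le_trans ?_ hPinv
      apply Real.log_le_log (by linarith)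
      push_cast
      linarith
    have := inv_anti₀ hlogx hlogle
    rwa [inv_inv, ← one_div] at this

theorem statement9 (P : ℝ → Set ℕ)
    (hP : ∀ x : ℝ, 2 ≤ x → ∀ p ∈ P x, Nat.Prime p ∧ (p : ℝ) ≤ x) :
    (∃ C : ℝ, 0 < C ∧ ∀ x : ℝ, 2 ≤ x →
        ∑ p ∈ (Finset.range (⌊x⌋₊ + 1)).filter (fun p => Nat.Prime p ∧ p ∉ P x),
          (1 : ℝ) / p ≤ C) ↔
    (∃ c₁ c₂ : ℝ, 0 < c₁ ∧ 0 < c₂ ∧ ∀ x : ℝ, 2 ≤ x →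
        c₁ / Real.log x ≤
          (∏ p ∈ (Finset.range (⌊x⌋₊ + 1)).filter (fun p => p ∈ P x), (1 - 1 / (p : ℝ))) ∧
        (∏ p ∈ (Finset.range (⌊x⌋₊ + 1)).filter (fun p => p ∈ P x), (1 - 1 / (p : ℝ))) ≤
          c₂ / Real.log x) := by
  obtain ⟨a, hapos, ha⟩ := mertens_master
  -- setup facts valid for every x ≥ 2
  have setup : ∀ x : ℝ, 2 ≤ x →
      ((Finset.range (⌊x⌋₊ + 1)).filter (fun p => p ∈ P x)
          = ((⌊x⌋₊+1).primesBelow).filter (fun p => p ∈ P x)) ∧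
      ((Finset.range (⌊x⌋₊ + 1)).filter (fun p => Nat.Prime p ∧ p ∉ P x)
          = ((⌊x⌋₊+1).primesBelow).filter (fun p => p ∉ P x)) := by
    intro x hx
    constructor
    · rw [Nat.primesBelow, Finset.filter_filter]
      apply Finset.filter_congr
      intro p _
      constructor
      · intro hp; exact ⟨(hP x hx p hp).1, hp⟩
      · exact fun h => h.2
    · rw [Nat.primesBelow, Finset.filter_filter]
  have facts : ∀ x : ℝ, 2 ≤ x → ∀ p ∈ (⌊x⌋₊+1).primesBelow,
      (0 < 1 - 1/(p:ℝ) ∧ 1 - 1/(p:ℝ) ≤ 1) ∧ (2:ℝ) ≤ p := by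
    intro x hx p hp
    have hpp := Nat.prime_of_mem_primesBelow hp
    have h2 : (2:ℝ) ≤ p := by exact_mod_cast hpp.two_le
    refine ⟨⟨?_, ?_⟩, h2⟩
    · have : 1/(p:ℝ) ≤ 1/2 := by
        rw [div_le_div_iff₀ (by linarith) (by norm_num)]; linarith
      linarith
    · have : (0:ℝ) ≤ 1/(p:ℝ) := by positivity
      linarith
  constructor
  · rintro ⟨C, hCpos, hC⟩
    refine ⟨a, Real.exp (2*C), hapos, Real.exp_pos _, fun x hx => ?_⟩
    obtain ⟨hAeq, hBeq⟩ := setup x hx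
    have hlogx : (0:ℝ) < Real.log x := Real.log_pos (by linarith)
    set Q := (⌊x⌋₊+1).primesBelow with hQ
    rw [hAeq]
    have hprod : (∏ p ∈ Q.filter (fun p => p ∈ P x), (1 - 1/(p:ℝ)))
        * (∏ p ∈ Q.filter (fun p => p ∉ P x), (1 - 1/(p:ℝ)))
        = ∏ p ∈ Q, (1 - 1/(p:ℝ)) :=
      Finset.prod_filter_mul_prod_filter_not Q _ _
    have hApos : 0 < ∏ p ∈ Q.filter (fun p => p ∈ P x), (1 - 1/(p:ℝ)) :=
      Finset.prod_pos fun p hp => ((facts x hx p (Finset.filter_subset _ _ hp)).1).1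
    have hB1 : (∏ p ∈ Q.filter (fun p => p ∉ P x), (1 - 1/(p:ℝ))) ≤ 1 :=
      Finset.prod_le_one (fun p hp => ((facts x hx p (Finset.filter_subset _ _ hp)).1).1.le)
        (fun p hp => ((facts x hx p (Finset.filter_subset _ _ hp)).1).2)
    have hBlow : Real.exp (-(2*C)) ≤ ∏ p ∈ Q.filter (fun p => p ∉ P x), (1 - 1/(p:ℝ)) := by
      have hpt : ∀ p ∈ Q.filter (fun p => p ∉ P x),
          Real.exp (-(1/(p:ℝ) + 2*(1/(p:ℝ))^2)) ≤ 1 - 1/(p:ℝ) := fun p hp =>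
        aux_exp_le' (Nat.prime_of_mem_primesBelow (Finset.filter_subset _ _ hp))
      have h1 : Real.exp (∑ p ∈ Q.filter (fun p => p ∉ P x), -(1/(p:ℝ) + 2*(1/(p:ℝ))^2))
          ≤ ∏ p ∈ Q.filter (fun p => p ∉ P x), (1 - 1/(p:ℝ)) := by
        rw [Real.exp_sum]
        exact Finset.prod_le_prod (fun p _ => (Real.exp_pos _).le) hpt
      refine le_trans (Real.exp_le_exp.mpr ?_) h1
      rw [Finset.sum_neg_distrib, neg_le_neg_iff]
      have h2 : ∀ p ∈ Q.filter (fun p => p ∉ P x),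
          1/(p:ℝ) + 2*(1/(p:ℝ))^2 ≤ 2 * (1/(p:ℝ)) := by
        intro p hp
        have h2p := (facts x hx p (Finset.filter_subset _ _ hp)).2
        have hp0 : (0:ℝ) < p := by linarith
        have : 2*(1/(p:ℝ))^2 ≤ 1/(p:ℝ) := by
          rw [div_pow, one_pow, mul_one_div, div_le_div_iff₀ (by positivity) hp0]
          nlinarith
        linarith
      calc ∑ p ∈ Q.filter (fun p => p ∉ P x), (1/(p:ℝ) + 2*(1/(p:ℝ))^2)
          ≤ ∑ p ∈ Q.filter (fun p => p ∉ P x), 2 * (1/(p:ℝ)) := Finset.sum_le_sum h2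
        _ = 2 * ∑ p ∈ Q.filter (fun p => p ∉ P x), (1:ℝ)/p := by rw [Finset.mul_sum]
        _ ≤ 2 * C := by
            have := hC x hx
            rw [hBeq] at this
            linarith
    obtain ⟨hlo, hhi⟩ := ha x hx
    constructor
    · calc a / Real.log x ≤ ∏ p ∈ Q, (1 - 1/(p:ℝ)) := hlo
        _ = (∏ p ∈ Q.filter (fun p => p ∈ P x), (1 - 1/(p:ℝ)))
            * (∏ p ∈ Q.filter (fun p => p ∉ P x), (1 - 1/(p:ℝ))) := hprod.symm
        _ ≤ (∏ p ∈ Q.filter (fun p => p ∈ P x), (1 - 1/(p:ℝ))) * 1 :=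
            mul_le_mul_of_nonneg_left hB1 hApos.le
        _ = ∏ p ∈ Q.filter (fun p => p ∈ P x), (1 - 1/(p:ℝ)) := mul_one _
    · have h1 : (∏ p ∈ Q.filter (fun p => p ∈ P x), (1 - 1/(p:ℝ))) * Real.exp (-(2*C))
          ≤ 1 / Real.log x := by
        calc (∏ p ∈ Q.filter (fun p => p ∈ P x), (1 - 1/(p:ℝ))) * Real.exp (-(2*C))
            ≤ (∏ p ∈ Q.filter (fun p => p ∈ P x), (1 - 1/(p:ℝ)))
              * (∏ p ∈ Q.filter (fun p => p ∉ P x), (1 - 1/(p:ℝ))) :=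
              mul_le_mul_of_nonneg_left hBlow hApos.le
          _ = ∏ p ∈ Q, (1 - 1/(p:ℝ)) := hprod
          _ ≤ 1 / Real.log x := hhi
      have h2 : (∏ p ∈ Q.filter (fun p => p ∈ P x), (1 - 1/(p:ℝ)))
          ≤ (1 / Real.log x) / Real.exp (-(2*C)) :=
        (le_div_iff₀ (Real.exp_pos _)).mpr h1
      refine h2.trans (le_of_eq ?_)
      rw [Real.exp_neg]
      field_simp
  · rintro ⟨c₁, c₂, hc₁, hc₂, h⟩
    refine ⟨max 1 (Real.log (c₂ / a)), lt_of_lt_of_le one_pos (le_max_left _ _), fun x hx => ?_⟩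
    obtain ⟨hAeq, hBeq⟩ := setup x hx
    have hlogx : (0:ℝ) < Real.log x := Real.log_pos (by linarith)
    set Q := (⌊x⌋₊+1).primesBelow with hQ
    rw [hBeq]
    have hprod : (∏ p ∈ Q.filter (fun p => p ∈ P x), (1 - 1/(p:ℝ)))
        * (∏ p ∈ Q.filter (fun p => p ∉ P x), (1 - 1/(p:ℝ)))
        = ∏ p ∈ Q, (1 - 1/(p:ℝ)) :=
      Finset.prod_filter_mul_prod_filter_not Q _ _
    have hBpos : 0 < ∏ p ∈ Q.filter (fun p => p ∉ P x), (1 - 1/(p:ℝ)) :=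
      Finset.prod_pos fun p hp => ((facts x hx p (Finset.filter_subset _ _ hp)).1).1
    have hup := (h x hx).2
    rw [hAeq] at hup
    obtain ⟨hlo, -⟩ := ha x hx
    -- lower bound on the complementary product
    have hBlow : a / c₂ ≤ ∏ p ∈ Q.filter (fun p => p ∉ P x), (1 - 1/(p:ℝ)) := by
      have h1 : a / Real.log x ≤ (c₂ / Real.log x)
          * ∏ p ∈ Q.filter (fun p => p ∉ P x), (1 - 1/(p:ℝ)) := by
        calc a / Real.log x ≤ ∏ p ∈ Q, (1 - 1/(p:ℝ)) := hlo
          _ = (∏ p ∈ Q.filter (fun p => p ∈ P x), (1 - 1/(p:ℝ)))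
              * (∏ p ∈ Q.filter (fun p => p ∉ P x), (1 - 1/(p:ℝ))) := hprod.symm
          _ ≤ (c₂ / Real.log x) * ∏ p ∈ Q.filter (fun p => p ∉ P x), (1 - 1/(p:ℝ)) :=
              mul_le_mul_of_nonneg_right hup hBpos.le
      have h2 : (a / Real.log x) / (c₂ / Real.log x)
          ≤ ∏ p ∈ Q.filter (fun p => p ∉ P x), (1 - 1/(p:ℝ)) := by
        rw [div_le_iff₀ (by positivity)]
        linarith [h1]
      refine le_trans (le_of_eq ?_) h2
      field_simp
    have hpt : ∀ p ∈ Q.filter (fun p => p ∉ P x),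
        (1:ℝ)/p ≤ -Real.log (1 - 1/(p:ℝ)) := by
      intro p hp
      have hf := (facts x hx p (Finset.filter_subset _ _ hp)).1.1
      have := Real.log_le_sub_one_of_pos hf
      linarith
    have hlogprod : ∑ p ∈ Q.filter (fun p => p ∉ P x), -Real.log (1 - 1/(p:ℝ))
        = -Real.log (∏ p ∈ Q.filter (fun p => p ∉ P x), (1 - 1/(p:ℝ))) := by
      rw [Real.log_prod]
      · rw [Finset.sum_neg_distrib]
      · exact fun p hp => ((facts x hx p (Finset.filter_subset _ _ hp)).1).1.ne'
    calc ∑ p ∈ Q.filter (fun p => p ∉ P x), (1:ℝ)/p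
        ≤ ∑ p ∈ Q.filter (fun p => p ∉ P x), -Real.log (1 - 1/(p:ℝ)) :=
          Finset.sum_le_sum hpt
      _ = -Real.log (∏ p ∈ Q.filter (fun p => p ∉ P x), (1 - 1/(p:ℝ))) := hlogprod
      _ ≤ -Real.log (a / c₂) := by
          have := Real.log_le_log (by positivity) hBlow
          linarith
      _ = Real.log (c₂ / a) := by
          rw [Real.log_div hapos.ne' hc₂.ne', Real.log_div hc₂.ne' hapos.ne']
          ring
      _ ≤ max 1 (Real.log (c₂ / a)) := le_max_right _ _
end

section
/- Let m and d be positive integers with d dividing m, and let x ≥ 1 be a real number. Then ∑_{r ≤ x, d | r, r | m} μ(r)/r = μ(d) · ∑_{n ≥ 1, d | n, rad(n) | rad(d)} (1/n) · (∑_{r ≤ x/n, r | m} μ(r)/r), where the outer sum on the right-hand side is over all positive integers n divisible by d all of whose prime divisors divide d, and this sum converges absolutely. -/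
open ArithmeticFunction
open scoped ArithmeticFunction.Moebius

lemma aux_dvd_of_sqf {k m : ℕ} (hk : Squarefree k)
    (h : k.primeFactors ⊆ m.primeFactors) : k ∣ m := by
  calc k = ∏ p ∈ k.primeFactors, p := (Nat.prod_primeFactors_of_squarefree hk).symm
  _ ∣ ∏ p ∈ m.primeFactors, p := Finset.prod_dvd_prod_of_subset _ _ _ h
  _ ∣ m := Nat.prod_primeFactors_dvd m

lemma aux_dvd_pow {n d : ℕ} (hn : n ≠ 0) (hd : d ≠ 0)
    (h : n.primeFactors ⊆ d.primeFactors) : n ∣ d ^ n := by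
  rw [← Nat.factorization_le_iff_dvd hn (pow_ne_zero _ hd), Nat.factorization_pow]
  intro p
  simp only [Finsupp.smul_apply, smul_eq_mul]
  by_cases hp : p ∈ n.primeFactors
  · have h1 : 1 ≤ d.factorization p := by
      have := h hp
      rw [← Nat.support_factorization, Finsupp.mem_support_iff] at this
      omega
    have h2 : n.factorization p ≤ n := (Nat.factorization_lt p hn).le
    calc n.factorization p ≤ n * 1 := by omega
    _ ≤ n * d.factorization p := Nat.mul_le_mul_left n h1
  · rw [← Nat.support_factorization, Finsupp.mem_support_iff] at hp
    omega

lemma key (m d : ℕ) (hd : 0 < d) (hm : 0 < m) (hdm : d ∣ m) (r : ℕ) (hr : 0 < r) :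
    (μ d : ℤ) * ∑ n ∈ r.divisors.filter
        (fun n => d ∣ n ∧ n.primeFactors ⊆ d.primeFactors ∧ (r / n) ∣ m), μ (r / n)
      = if d ∣ r ∧ r ∣ m then μ r else 0 := by
  by_cases hsd : Squarefree d
  swap
  · have hμd : μ d = 0 := moebius_eq_zero_of_not_squarefree hsd
    rw [hμd, zero_mul]
    split_ifs with h
    · rcases h with ⟨hdr, _⟩
      have : ¬ Squarefree r := fun hsr => hsd (hsr.squarefree_of_dvd hdr)
      rw [moebius_eq_zero_of_not_squarefree this]
    · rfl
  -- d squarefree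
  set a := Nat.gcd r (d ^ r) with ha_def
  have ha_dvd : a ∣ r := Nat.gcd_dvd_left _ _
  have ha_pos : 0 < a := Nat.gcd_pos_of_pos_left _ hr
  have hbdvd : (r / a) ∣ r := Nat.div_dvd_of_dvd ha_dvd
  set b := r / a with hb_def
  have hab : a * b = r := Nat.mul_div_cancel' ha_dvd
  have hb_pos : 0 < b := Nat.div_pos (Nat.le_of_dvd hr ha_dvd) ha_pos
  have haP : a.primeFactors ⊆ d.primeFactors := by
    intro p hp
    rw [Nat.mem_primeFactors] at hp ⊢
    refine ⟨hp.1, hp.1.dvd_of_dvd_pow (hp.2.1.trans (Nat.gcd_dvd_right _ _)), hd.ne'⟩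
  have hbP : ∀ p ∈ d.primeFactors, ¬ p ∣ b := by
    intro p hp hpb
    rw [Nat.mem_primeFactors] at hp
    have hpprime := hp.1
    have hvb : 1 ≤ b.factorization p := (Nat.Prime.dvd_iff_one_le_factorization hpprime hb_pos.ne').mp hpb
    have hvdiv : b.factorization = r.factorization - a.factorization := by
      rw [hb_def, Nat.factorization_div ha_dvd]
    have hva : a.factorization p = min (r.factorization p) (r * d.factorization p) := by
      rw [ha_def, Nat.factorization_gcd hr.ne' (pow_pos hd r).ne', Nat.factorization_pow]
      simp
    have hvd : 1 ≤ d.factorization p :=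
      (Nat.Prime.dvd_iff_one_le_factorization hpprime hd.ne').mp hp.2.1
    have hvr : r.factorization p ≤ r := (Nat.factorization_lt p hr.ne').le
    have : a.factorization p = r.factorization p := by
      rw [hva]; exact min_eq_left (by nlinarith)
    rw [hvdiv] at hvb
    simp only [Finsupp.tsub_apply] at hvb
    omega
  have hcop : ∀ k, k ≠ 0 → k.primeFactors ⊆ d.primeFactors → Nat.Coprime k b := by
    intro k hk hkP
    rw [Nat.coprime_iff_gcd_eq_one]
    by_contra hg
    obtain ⟨p, hpp, hpd⟩ := Nat.exists_prime_and_dvd hg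
    have hpk : p ∣ k := hpd.trans (Nat.gcd_dvd_left _ _)
    have hpb : p ∣ b := hpd.trans (Nat.gcd_dvd_right _ _)
    exact hbP p (hkP (Nat.mem_primeFactors.mpr ⟨hpp, hpk, hk⟩)) hpb
  have hmax : ∀ n, n ∣ r → n.primeFactors ⊆ d.primeFactors → n ∣ a := by
    intro n hnr hnP
    have hn0 : n ≠ 0 := fun h => hr.ne' (Nat.eq_zero_of_zero_dvd (h ▸ hnr))
    refine Nat.dvd_gcd hnr ((aux_dvd_pow hn0 hd.ne' hnP).trans (pow_dvd_pow d ?_))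
    exact Nat.le_of_dvd hr hnr
  have hrdiv : ∀ n, n ∣ a → r / n = (a / n) * b := by
    intro n hna
    obtain ⟨c, hc⟩ := hna
    have hn0 : 0 < n := Nat.pos_of_dvd_of_pos ⟨c, hc⟩ ha_pos
    rw [← hab, hc, mul_assoc, Nat.mul_div_cancel_left _ hn0, Nat.mul_div_cancel_left _ hn0]
  rw [Finset.sum_filter]
  by_cases hB : Squarefree b ∧ b ∣ m
  swap
  · have hz : (∑ n ∈ r.divisors, if d ∣ n ∧ n.primeFactors ⊆ d.primeFactors ∧ (r / n) ∣ m
        then μ (r / n) else 0) = 0 := by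
      refine Finset.sum_eq_zero fun n hn => ?_
      split_ifs with hC
      · by_contra hne
        have hsq : Squarefree (r / n) := moebius_ne_zero_iff_squarefree.mp hne
        have hna : n ∣ a := hmax n (Nat.dvd_of_mem_divisors hn) hC.2.1
        have hbdvd' : b ∣ r / n := by rw [hrdiv n hna]; exact dvd_mul_left _ _
        exact hB ⟨hsq.squarefree_of_dvd hbdvd', hbdvd'.trans hC.2.2⟩
      · rfl
    rw [hz, mul_zero]
    split_ifs with h
    · have : ¬ Squarefree r := fun hsr =>
        hB ⟨hsr.squarefree_of_dvd hbdvd, hbdvd.trans h.2⟩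
      rw [moebius_eq_zero_of_not_squarefree this]
    · rfl
  obtain ⟨hsb, hbm⟩ := hB
  have hdm_pf : d.primeFactors ⊆ m.primeFactors := Nat.primeFactors_mono hdm hm.ne'
  have step1 : ∀ n ∈ r.divisors,
      (if d ∣ n ∧ n.primeFactors ⊆ d.primeFactors ∧ (r / n) ∣ m then μ (r / n) else 0)
        = (if d ∣ n ∧ n ∣ a then μ (a / n) else 0) * μ b := by
    intro n hn
    have hnr := Nat.dvd_of_mem_divisors hn
    have hn0 : 0 < n := Nat.pos_of_mem_divisors hn
    by_cases hC : d ∣ n ∧ n.primeFactors ⊆ d.primeFactors ∧ (r / n) ∣ m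
    · have hna : n ∣ a := hmax n hnr hC.2.1
      have han0 : 0 < a / n := Nat.div_pos (Nat.le_of_dvd ha_pos hna) hn0
      have hana : a / n ∣ a := ⟨n, (Nat.div_mul_cancel hna).symm⟩
      have hcp : Nat.Coprime (a / n) b :=
        hcop _ han0.ne' ((Nat.primeFactors_mono hana ha_pos.ne').trans haP)
      rw [if_pos hC, if_pos ⟨hC.1, hna⟩, hrdiv n hna]
      exact isMultiplicative_moebius.map_mul_of_coprime hcp
    · rw [if_neg hC]
      by_cases hda : d ∣ n ∧ n ∣ a
      · rw [if_pos hda]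
        have han0 : 0 < a / n := Nat.div_pos (Nat.le_of_dvd ha_pos hda.2) hn0
        have hana : a / n ∣ a := ⟨n, (Nat.div_mul_cancel hda.2).symm⟩
        have hanP : (a / n).primeFactors ⊆ d.primeFactors :=
          (Nat.primeFactors_mono hana ha_pos.ne').trans haP
        have hcp : Nat.Coprime (a / n) b := hcop _ han0.ne' hanP
        by_contra hne
        have hμan : μ (a / n) ≠ 0 := fun h0 => hne (by rw [h0, zero_mul])
        have hsan : Squarefree (a / n) := moebius_ne_zero_iff_squarefree.mp hμan
        have hanm : (a / n) ∣ m := aux_dvd_of_sqf hsan (hanP.trans hdm_pf)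
        have hrnm : (r / n) ∣ m := by
          rw [hrdiv n hda.2]
          exact Nat.Coprime.mul_dvd_of_dvd_of_dvd hcp hanm hbm
        exact hC ⟨hda.1, (Nat.primeFactors_mono hda.2 ha_pos.ne').trans haP, hrnm⟩
      · rw [if_neg hda, zero_mul]
  rw [Finset.sum_congr rfl step1, ← Finset.sum_mul, ← Finset.sum_filter]
  have hsets : r.divisors.filter (fun n => d ∣ n ∧ n ∣ a)
      = a.divisors.filter (fun n => d ∣ n) := by
    ext n
    simp only [Finset.mem_filter, Nat.mem_divisors]
    constructor
    · rintro ⟨⟨_, _⟩, hdn, hna⟩; exact ⟨⟨hna, ha_pos.ne'⟩, hdn⟩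
    · rintro ⟨⟨hna, _⟩, hdn⟩; exact ⟨⟨hna.trans ha_dvd, hr.ne'⟩, hdn, hna⟩
  rw [hsets]
  have hT : (∑ n ∈ a.divisors.filter (fun n => d ∣ n), μ (a / n))
      = if a = d then 1 else 0 := by
    by_cases hda : d ∣ a
    · have hbij : (∑ n ∈ a.divisors.filter (fun n => d ∣ n), μ (a / n))
          = ∑ t ∈ (a / d).divisors, μ t := by
        have had0 : 0 < a / d := Nat.div_pos (Nat.le_of_dvd ha_pos hda) hd
        refine Finset.sum_nbij' (fun n => a / n) (fun t => a / t) ?_ ?_ ?_ ?_ ?_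
        · intro n hn
          simp only [Finset.mem_filter, Nat.mem_divisors] at hn
          obtain ⟨⟨hna, _⟩, hdn⟩ := hn
          have hn0 : 0 < n := Nat.pos_of_dvd_of_pos hna ha_pos
          obtain ⟨l, hl⟩ := hna
          obtain ⟨k, hk⟩ := hdn
          rw [Nat.mem_divisors]
          refine ⟨⟨k, ?_⟩, had0.ne'⟩
          beta_reduce
          rw [hl, Nat.mul_div_cancel_left _ hn0, hk, mul_assoc,
            Nat.mul_div_cancel_left _ hd]
          exact Nat.mul_comm k l
        · intro t ht
          rw [Nat.mem_divisors] at ht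
          obtain ⟨⟨s, hs⟩, _⟩ := ht
          have htad : t ∣ a / d := ⟨s, hs⟩
          have hta : t ∣ a := htad.trans (Nat.div_dvd_of_dvd hda)
          have ht0 : 0 < t := Nat.pos_of_dvd_of_pos hta ha_pos
          simp only [Finset.mem_filter, Nat.mem_divisors]
          refine ⟨⟨Nat.div_dvd_of_dvd hta, ha_pos.ne'⟩, ?_⟩
          have : a = t * (d * s) := by
            rw [← Nat.div_mul_cancel hda, hs]; ring
          rw [this, Nat.mul_div_cancel_left _ ht0]
          exact ⟨s, rfl⟩
        · intro n hn
          simp only [Finset.mem_filter, Nat.mem_divisors] at hn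
          exact Nat.div_div_self hn.1.1 ha_pos.ne'
        · intro t ht
          rw [Nat.mem_divisors] at ht
          have hta : t ∣ a := ht.1.trans (Nat.div_dvd_of_dvd hda)
          exact Nat.div_div_self hta ha_pos.ne'
        · intro n _
          rfl
      rw [hbij, ← coe_zeta_mul_apply, coe_zeta_mul_moebius, one_apply]
      have : a / d = 1 ↔ a = d := by
        constructor
        · intro h1
          have := Nat.div_mul_cancel hda
          rw [h1, one_mul] at this
          exact this.symm
        · intro h1; rw [h1, Nat.div_self hd]
      simp only [this]
    · have hempty : a.divisors.filter (fun n => d ∣ n) = ∅ := by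
        rw [Finset.filter_eq_empty_iff]
        intro n hn hdn
        exact hda (hdn.trans (Nat.dvd_of_mem_divisors hn))
      rw [hempty, Finset.sum_empty, if_neg (fun h => hda ⟨1, by rw [h, mul_one]⟩)]
  rw [hT]
  by_cases had : a = d
  · rw [if_pos had, one_mul]
    have hrdb : r = d * b := by rw [← hab, had]
    have hcpdb : Nat.Coprime d b := hcop d hd.ne' subset_rfl
    have hμr : μ r = μ d * μ b := by
      rw [hrdb]; exact isMultiplicative_moebius.map_mul_of_coprime hcpdb
    rw [if_pos ⟨⟨b, hrdb⟩, by
      rw [hrdb]; exact Nat.Coprime.mul_dvd_of_dvd_of_dvd hcpdb hdm hbm⟩, hμr]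
  · rw [if_neg had, zero_mul, mul_zero]
    split_ifs with h
    · have hnsr : ¬ Squarefree r := by
        intro hsr
        apply had
        have hsa : Squarefree a := hsr.squarefree_of_dvd ha_dvd
        exact Nat.dvd_antisymm (aux_dvd_of_sqf hsa haP) (hmax d h.1 subset_rfl)
      rw [moebius_eq_zero_of_not_squarefree hnsr]
    · rfl

open ArithmeticFunction in
theorem statement10 (m d : ℕ) (hm : 0 < m) (hd : 0 < d) (hdm : d ∣ m)
    (x : ℝ) (hx : 1 ≤ x) :
    Summable (fun n : ℕ =>
      if 0 < n ∧ d ∣ n ∧ n.primeFactors ⊆ d.primeFactors then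
        (1 : ℝ) / n *
          ∑ r ∈ (Finset.Icc 1 ⌊x / n⌋₊).filter (fun r => r ∣ m), (moebius r : ℝ) / r
      else 0) ∧
    (∑ r ∈ (Finset.Icc 1 ⌊x⌋₊).filter (fun r => d ∣ r ∧ r ∣ m), (moebius r : ℝ) / r) =
      (moebius d : ℝ) *
        ∑' n : ℕ,
          if 0 < n ∧ d ∣ n ∧ n.primeFactors ⊆ d.primeFactors then
            (1 : ℝ) / n *
              ∑ r ∈ (Finset.Icc 1 ⌊x / n⌋₊).filter (fun r => r ∣ m), (moebius r : ℝ) / r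
          else 0 := by
  have hx0 : (0:ℝ) ≤ x := le_trans zero_le_one hx
  set M := ⌊x⌋₊ with hM_def
  have hM1 : 1 ≤ M := Nat.le_floor (by exact_mod_cast hx)
  set f : ℕ → ℝ := fun n =>
    if 0 < n ∧ d ∣ n ∧ n.primeFactors ⊆ d.primeFactors then
      (1 : ℝ) / n *
        ∑ r ∈ (Finset.Icc 1 ⌊x / n⌋₊).filter (fun r => r ∣ m), (moebius r : ℝ) / r
    else 0 with hf_def
  have hsupp : ∀ n ∉ Finset.Icc 1 M, f n = 0 := by
    intro n hn
    rw [Finset.mem_Icc, not_and_or, not_le, not_le] at hn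
    rcases hn with hn | hn
    · have hn0 : n = 0 := by omega
      subst hn0
      simp [hf_def]
    · have hn0 : 0 < n := by omega
      have hnx : x < n := lt_of_lt_of_le (Nat.lt_floor_add_one x) (by exact_mod_cast hn)
      have hfl : ⌊x / n⌋₊ = 0 := by
        rw [Nat.floor_eq_zero, div_lt_one (by exact_mod_cast hn0)]
        exact hnx
      simp [hf_def, hfl]
  refine ⟨summable_of_ne_finset_zero hsupp, ?_⟩
  rw [tsum_eq_sum hsupp]
  have hfn : ∀ n ∈ Finset.Icc 1 M, f n = ∑ s ∈ Finset.Icc 1 M,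
      (if d ∣ n ∧ n.primeFactors ⊆ d.primeFactors ∧ n * s ≤ M ∧ s ∣ m
        then (moebius s : ℝ) / ((n : ℝ) * (s : ℝ)) else 0) := by
    intro n hn
    rw [Finset.mem_Icc] at hn
    have hn0 : 0 < n := hn.1
    have hn0R : (0:ℝ) < n := by exact_mod_cast hn0
    have hset : (Finset.Icc 1 ⌊x / n⌋₊).filter (fun s => s ∣ m)
        = (Finset.Icc 1 M).filter (fun s => n * s ≤ M ∧ s ∣ m) := by
      ext s
      simp only [Finset.mem_filter, Finset.mem_Icc]
      constructor
      · rintro ⟨⟨hs1, hs2⟩, hsm⟩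
        have hsx : (s:ℝ) ≤ x / n := (Nat.le_floor_iff (by positivity)).mp hs2
        rw [le_div_iff₀ hn0R] at hsx
        have hns : n * s ≤ M := Nat.le_floor (by push_cast; nlinarith)
        exact ⟨⟨hs1, le_trans (Nat.le_mul_of_pos_left s hn0) hns⟩, hns, hsm⟩
      · rintro ⟨⟨hs1, _⟩, hns, hsm⟩
        refine ⟨⟨hs1, Nat.le_floor ?_⟩, hsm⟩
        rw [le_div_iff₀ hn0R]
        have h1 : ((n * s : ℕ) : ℝ) ≤ (M:ℝ) := by exact_mod_cast hns
        have h2 : (M:ℝ) ≤ x := Nat.floor_le hx0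
        push_cast at h1
        nlinarith
    by_cases hc : d ∣ n ∧ n.primeFactors ⊆ d.primeFactors
    · simp only [hf_def]
      rw [if_pos ⟨hn0, hc⟩, hset, Finset.sum_filter, Finset.mul_sum]
      refine Finset.sum_congr rfl fun s hs => ?_
      by_cases hP : n * s ≤ M ∧ s ∣ m
      · rw [if_pos hP, if_pos ⟨hc.1, hc.2, hP.1, hP.2⟩, div_mul_div_comm, one_mul]
      · rw [if_neg hP, mul_zero, if_neg (fun h => hP ⟨h.2.2.1, h.2.2.2⟩)]
    · simp only [hf_def]
      rw [if_neg (fun h => hc h.2)]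
      exact (Finset.sum_eq_zero fun s hs => if_neg (fun h => hc ⟨h.1, h.2.1⟩)).symm
  rw [Finset.sum_congr rfl hfn]
  have hprod : (∑ n ∈ Finset.Icc 1 M, ∑ s ∈ Finset.Icc 1 M,
      (if d ∣ n ∧ n.primeFactors ⊆ d.primeFactors ∧ n * s ≤ M ∧ s ∣ m
        then (moebius s : ℝ) / ((n : ℝ) * (s : ℝ)) else 0))
      = ∑ p ∈ (Finset.Icc 1 M ×ˢ Finset.Icc 1 M).filter
          (fun p => d ∣ p.1 ∧ p.1.primeFactors ⊆ d.primeFactors ∧ p.1 * p.2 ≤ M ∧ p.2 ∣ m),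
          (moebius p.2 : ℝ) / ((p.1 : ℝ) * (p.2 : ℝ)) := by
    rw [← Finset.sum_product', Finset.sum_filter]
  rw [hprod]
  have hmaps : ∀ p ∈ (Finset.Icc 1 M ×ˢ Finset.Icc 1 M).filter
      (fun p => d ∣ p.1 ∧ p.1.primeFactors ⊆ d.primeFactors ∧ p.1 * p.2 ≤ M ∧ p.2 ∣ m),
      p.1 * p.2 ∈ Finset.Icc 1 M := by
    intro p hp
    simp only [Finset.mem_filter, Finset.mem_product, Finset.mem_Icc] at hp
    rw [Finset.mem_Icc]
    constructor
    · have := hp.1.1.1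
      have := hp.1.2.1
      exact Nat.one_le_iff_ne_zero.mpr (Nat.mul_ne_zero (by omega) (by omega))
    · exact hp.2.2.2.1
  have hfib := Finset.sum_fiberwise_of_maps_to (g := fun p : ℕ × ℕ => p.1 * p.2) hmaps
    (fun p => (moebius p.2 : ℝ) / ((p.1 : ℝ) * (p.2 : ℝ)))
  rw [← hfib]
  have hinner : ∀ r ∈ Finset.Icc 1 M,
      (∑ p ∈ ((Finset.Icc 1 M ×ˢ Finset.Icc 1 M).filter
          (fun p => d ∣ p.1 ∧ p.1.primeFactors ⊆ d.primeFactors ∧ p.1 * p.2 ≤ M ∧ p.2 ∣ m)).filter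
          (fun p => p.1 * p.2 = r),
        (moebius p.2 : ℝ) / ((p.1 : ℝ) * (p.2 : ℝ)))
      = ((∑ n ∈ r.divisors.filter
          (fun n => d ∣ n ∧ n.primeFactors ⊆ d.primeFactors ∧ (r / n) ∣ m),
            moebius (r / n) : ℤ) : ℝ) / (r : ℝ) := by
    intro r hr
    rw [Finset.mem_Icc] at hr
    have hr0 : 0 < r := hr.1
    push_cast [Finset.sum_div]
    refine Finset.sum_nbij' (fun p => p.1) (fun n => (n, r / n)) ?_ ?_ ?_ ?_ ?_
    · intro p hp
      simp only [Finset.mem_filter, Finset.mem_product, Finset.mem_Icc] at hp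
      obtain ⟨⟨⟨⟨hp1, _⟩, ⟨hp2, _⟩⟩, hc⟩, hpr⟩ := hp
      have hp10 : 0 < p.1 := by omega
      rw [Finset.mem_filter, Nat.mem_divisors]
      have hdvd : p.1 ∣ r := ⟨p.2, hpr.symm⟩
      have hq : r / p.1 = p.2 := by rw [← hpr, Nat.mul_div_cancel_left _ hp10]
      exact ⟨⟨hdvd, hr0.ne'⟩, hc.1, hc.2.1, by rw [hq]; exact hc.2.2.2⟩
    · intro n hn
      simp only [Finset.mem_filter, Nat.mem_divisors] at hn
      obtain ⟨⟨hnr, _⟩, hdn, hnP, hnm⟩ := hn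
      have hn0 : 0 < n := Nat.pos_of_dvd_of_pos hnr hr0
      have hq0 : 0 < r / n := Nat.div_pos (Nat.le_of_dvd hr0 hnr) hn0
      have hprod2 : n * (r / n) = r := Nat.mul_div_cancel' hnr
      simp only [Finset.mem_filter, Finset.mem_product, Finset.mem_Icc]
      refine ⟨⟨⟨⟨hn0, ?_⟩, ⟨hq0, ?_⟩⟩, hdn, hnP, by rw [hprod2]; exact hr.2, hnm⟩, hprod2⟩
      · exact le_trans (Nat.le_of_dvd hr0 hnr) hr.2
      · exact le_trans (Nat.le_of_dvd hr0 (Nat.div_dvd_of_dvd hnr)) hr.2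
    · intro p hp
      simp only [Finset.mem_filter, Finset.mem_product, Finset.mem_Icc] at hp
      obtain ⟨⟨⟨⟨hp1, _⟩, _⟩, _⟩, hpr⟩ := hp
      have hp10 : 0 < p.1 := by omega
      have hq : r / p.1 = p.2 := by rw [← hpr, Nat.mul_div_cancel_left _ hp10]
      exact Prod.ext rfl hq
    · intro n hn
      rfl
    · intro p hp
      simp only [Finset.mem_filter, Finset.mem_product, Finset.mem_Icc] at hp
      obtain ⟨⟨⟨⟨hp1, _⟩, _⟩, _⟩, hpr⟩ := hp
      have hp10 : 0 < p.1 := by omega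
      have hq : r / p.1 = p.2 := by rw [← hpr, Nat.mul_div_cancel_left _ hp10]
      rw [hq, ← hpr]
      push_cast
      ring
  rw [Finset.sum_congr rfl hinner, Finset.mul_sum, Finset.sum_filter]
  refine Finset.sum_congr rfl fun r hr => ?_
  rw [Finset.mem_Icc] at hr
  have hkey := key m d hd hm hdm r (by omega)
  have hstep : (moebius d : ℝ) * (((∑ n ∈ r.divisors.filter
      (fun n => d ∣ n ∧ n.primeFactors ⊆ d.primeFactors ∧ (r / n) ∣ m),
        moebius (r / n) : ℤ) : ℝ) / (r : ℝ))
      = (((moebius d * ∑ n ∈ r.divisors.filter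
      (fun n => d ∣ n ∧ n.primeFactors ⊆ d.primeFactors ∧ (r / n) ∣ m),
        moebius (r / n) : ℤ) : ℝ) / (r : ℝ)) := by
    push_cast
    ring
  rw [hstep, hkey]
  split_ifs with h <;> simp
end

section
/- For every integer k ≥ 1, ∑_{n ≥ 1, k | n, rad(n) | rad(k)} log(n)/n = (1/φ(k)) · (∑_{p | k, p prime} log(p)/(p−1) + log(k)), where the sum is over all positive integers n divisible by k all of whose prime divisors divide k. Moreover, there exist absolute constants c₁, c₂ > 0 such that for every integer k ≥ 2, c₁·log(k)/φ(k) ≤ ∑_{n ≥ 1, k | n, rad(n) | rad(k)} log(n)/n ≤ c₂·log(k)/φ(k). -/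
open Finset Real

private def SmoothSet (P : Finset ℕ) : Set ℕ := {m | 0 < m ∧ m.primeFactors ⊆ P}

private lemma smoothSet_empty : SmoothSet ∅ = ({1} : Set ℕ) := by
  ext m
  simp only [SmoothSet, Set.mem_setOf_eq, Finset.subset_empty, Nat.primeFactors_eq_empty,
    Set.mem_singleton_iff]
  constructor
  · rintro ⟨hm, h0 | h1⟩ <;> omega
  · rintro rfl; exact ⟨one_pos, Or.inr rfl⟩

private lemma mem_smoothSet_insert {p : ℕ} (hp : p.Prime) {P : Finset ℕ}
    (j : ℕ) {m : ℕ} (hm : m ∈ SmoothSet P) : p ^ j * m ∈ SmoothSet (insert p P) := by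
  obtain ⟨hm0, hmP⟩ := hm
  refine ⟨Nat.mul_pos (Nat.pow_pos hp.pos) hm0, ?_⟩
  intro q hq
  rw [Nat.mem_primeFactors] at hq
  obtain ⟨hq, hqd, -⟩ := hq
  rcases (Nat.Prime.dvd_mul hq).mp hqd with h | h
  · have : q = p := (Nat.prime_dvd_prime_iff_eq hq hp).mp (hq.dvd_of_dvd_pow h)
    rw [this]; exact Finset.mem_insert_self p P
  · exact Finset.mem_insert_of_mem (hmP (Nat.mem_primeFactors.mpr ⟨hq, h, hm0.ne'⟩))

private noncomputable def smoothEquiv {p : ℕ} (hp : p.Prime) {P : Finset ℕ} (hpP : p ∉ P) :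
    (ℕ × SmoothSet P) ≃ SmoothSet (insert p P) := by
  refine Equiv.ofBijective
    (fun x => ⟨p ^ x.1 * (x.2 : ℕ), mem_smoothSet_insert hp x.1 x.2.2⟩) ⟨?_, ?_⟩
  · rintro ⟨j, m, hm0, hmP⟩ ⟨j', m', hm0', hmP'⟩ h
    simp only [Subtype.mk.injEq] at h
    have hpm : ¬ p ∣ m := fun hd =>
      hpP (hmP (Nat.mem_primeFactors.mpr ⟨hp, hd, hm0.ne'⟩))
    have hpm' : ¬ p ∣ m' := fun hd =>
      hpP (hmP' (Nat.mem_primeFactors.mpr ⟨hp, hd, hm0'.ne'⟩))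
    have hj : j = j' := by
      have h1 := congrArg (fun n => n.factorization p) h
      simp only [Nat.factorization_mul (pow_ne_zero j hp.ne_zero) hm0.ne',
        Nat.factorization_mul (pow_ne_zero j' hp.ne_zero) hm0'.ne',
        hp.factorization_pow, Finsupp.add_apply, Finsupp.coe_add, Pi.add_apply,
        Finsupp.single_eq_same, Nat.factorization_eq_zero_of_not_dvd hpm,
        Nat.factorization_eq_zero_of_not_dvd hpm', add_zero] at h1
      exact h1
    subst hj
    have : m = m' := Nat.eq_of_mul_eq_mul_left (Nat.pow_pos hp.pos) h
    simp [Prod.ext_iff, this]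
  · rintro ⟨n, hn0, hnP⟩
    refine ⟨⟨n.factorization p, ⟨ordCompl[p] n, Nat.ordCompl_pos p hn0.ne', ?_⟩⟩, ?_⟩
    · intro q hq
      have hqn : q ∈ n.primeFactors :=
        Nat.primeFactors_mono (Nat.ordCompl_dvd n p) hn0.ne' hq
      have hqp : q ≠ p := by
        rintro rfl
        exact Nat.not_dvd_ordCompl hp hn0.ne' (Nat.dvd_of_mem_primeFactors hq)
      rcases Finset.mem_insert.mp (hnP hqn) with h | h
      · exact absurd h hqp
      · exact h
    · exact Subtype.ext (Nat.ordProj_mul_ordCompl_eq_self n p)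

private lemma smoothEquiv_apply {p : ℕ} (hp : p.Prime) {P : Finset ℕ} (hpP : p ∉ P)
    (x : ℕ × SmoothSet P) : ((smoothEquiv hp hpP x : ℕ)) = p ^ x.1 * (x.2 : ℕ) := rfl

set_option maxHeartbeats 1000000 in
private theorem smooth_tsum : ∀ (P : Finset ℕ), (∀ p ∈ P, p.Prime) →
    Summable (fun m : SmoothSet P => 1 / ((m : ℕ) : ℝ)) ∧
    Summable (fun m : SmoothSet P => Real.log (m : ℕ) / ((m : ℕ) : ℝ)) ∧
    (∑' m : SmoothSet P, 1 / ((m : ℕ) : ℝ)) = ∏ p ∈ P, (1 - ((p : ℝ))⁻¹)⁻¹ ∧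
    (∑' m : SmoothSet P, Real.log (m : ℕ) / ((m : ℕ) : ℝ)) =
      (∏ p ∈ P, (1 - ((p : ℝ))⁻¹)⁻¹) * ∑ p ∈ P, Real.log p / ((p : ℝ) - 1) := by
  intro P
  induction P using Finset.induction_on with
  | empty =>
      intro _
      rw [smoothSet_empty]
      haveI : Unique (↥({1} : Set ℕ)) := Set.uniqueSingleton 1
      refine ⟨Summable.of_finite, Summable.of_finite, ?_, ?_⟩
      · exact (tsum_singleton (α := ℝ) 1 (fun n : ℕ => 1 / (n : ℝ))).trans (by norm_num)
      · exact (tsum_singleton (α := ℝ) 1 (fun n : ℕ => Real.log n / (n : ℝ))).trans (by norm_num)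
  | @insert p P hpP ih =>
      intro hP
      have hp : p.Prime := hP p (Finset.mem_insert_self p P)
      obtain ⟨hS1, hS2, hV1, hV2⟩ := ih (fun q hq => hP q (Finset.mem_insert_of_mem hq))
      have hp1 : (1 : ℝ) < p := by exact_mod_cast hp.one_lt
      have hp0 : (0 : ℝ) < p := lt_trans one_pos hp1
      have hr0 : (0 : ℝ) ≤ (p : ℝ)⁻¹ := by positivity
      have hr1 : (p : ℝ)⁻¹ < 1 := by
        rw [inv_lt_one_iff₀]; right; exact hp1
      have hnorm : ‖(p : ℝ)⁻¹‖ < 1 := by rw [Real.norm_eq_abs, abs_of_nonneg hr0]; exact hr1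
      have hgeo : Summable (fun j : ℕ => ((p : ℝ)⁻¹) ^ j) := summable_geometric_of_lt_one hr0 hr1
      have hgeoV : (∑' j : ℕ, ((p : ℝ)⁻¹) ^ j) = (1 - (p : ℝ)⁻¹)⁻¹ :=
        tsum_geometric_of_lt_one hr0 hr1
      have hgeo2 : Summable (fun j : ℕ => (j : ℝ) * ((p : ℝ)⁻¹) ^ j) :=
        (hasSum_coe_mul_geometric_of_norm_lt_one hnorm).summable
      have hgeo2V : (∑' j : ℕ, (j : ℝ) * ((p : ℝ)⁻¹) ^ j) = (p : ℝ)⁻¹ / (1 - (p : ℝ)⁻¹) ^ 2 :=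
        tsum_coe_mul_geometric_of_norm_lt_one hnorm
      set e := smoothEquiv hp hpP with he
      -- pointwise formulas
      have hco : ∀ x : ℕ × SmoothSet P, (((e x : ℕ)) : ℝ) = (p : ℝ) ^ x.1 * ((x.2 : ℕ) : ℝ) := by
        intro x; rw [smoothEquiv_apply]; push_cast; ring
      have hm0 : ∀ m : SmoothSet P, (0 : ℝ) < ((m : ℕ) : ℝ) := by
        intro m; exact_mod_cast m.2.1
      have hlog : ∀ x : ℕ × SmoothSet P,
          Real.log ((e x : ℕ)) = x.1 * Real.log p + Real.log ((x.2 : ℕ)) := by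
        intro x
        rw [smoothEquiv_apply]
        push_cast
        rw [Real.log_mul (by positivity) (hm0 x.2).ne', Real.log_pow]
      have heq1 : ∀ x : ℕ × SmoothSet P,
          1 / (((e x : ℕ)) : ℝ) = ((p : ℝ)⁻¹) ^ x.1 * (1 / ((x.2 : ℕ) : ℝ)) := by
        intro x
        rw [hco x]
        rw [inv_pow]
        field_simp
      have heq2 : ∀ x : ℕ × SmoothSet P,
          Real.log ((e x : ℕ)) / (((e x : ℕ)) : ℝ) =
            (Real.log p * ((x.1 : ℝ) * ((p : ℝ)⁻¹) ^ x.1)) * (1 / ((x.2 : ℕ) : ℝ)) +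
            ((p : ℝ)⁻¹) ^ x.1 * (Real.log ((x.2 : ℕ)) / ((x.2 : ℕ) : ℝ)) := by
        intro x
        rw [hlog x, hco x, inv_pow]
        have h1 : ((p : ℝ)) ^ x.1 ≠ 0 := by positivity
        have h2 : ((x.2 : ℕ) : ℝ) ≠ 0 := (hm0 x.2).ne'
        field_simp
      -- summability of the two product pieces
      have hprod1 : Summable (fun x : ℕ × SmoothSet P =>
          ((p : ℝ)⁻¹) ^ x.1 * (1 / ((x.2 : ℕ) : ℝ))) :=
        hgeo.mul_of_nonneg hS1 (fun j => by positivity) (fun m => by positivity)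
      have hg2 : Summable (fun j : ℕ => Real.log p * ((j : ℝ) * ((p : ℝ)⁻¹) ^ j)) :=
        hgeo2.mul_left _
      have hlogp0 : (0 : ℝ) ≤ Real.log p := Real.log_nonneg hp1.le
      have hh2nn : ∀ m : SmoothSet P, 0 ≤ Real.log ((m : ℕ)) / ((m : ℕ) : ℝ) := by
        intro m
        have : (1 : ℝ) ≤ ((m : ℕ) : ℝ) := by exact_mod_cast m.2.1
        exact div_nonneg (Real.log_nonneg this) (by positivity)
      have hprod2 : Summable (fun x : ℕ × SmoothSet P =>
          (Real.log p * ((x.1 : ℝ) * ((p : ℝ)⁻¹) ^ x.1)) * (1 / ((x.2 : ℕ) : ℝ))) :=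
        hg2.mul_of_nonneg hS1 (fun j => by positivity) (fun m => by positivity)
      have hprod3 : Summable (fun x : ℕ × SmoothSet P =>
          ((p : ℝ)⁻¹) ^ x.1 * (Real.log ((x.2 : ℕ)) / ((x.2 : ℕ) : ℝ))) :=
        hgeo.mul_of_nonneg hS2 (fun j => by positivity) hh2nn
      -- summability over insert
      have hsum1 : Summable (fun m : SmoothSet (insert p P) => 1 / ((m : ℕ) : ℝ)) := by
        rw [← e.summable_iff]
        exact hprod1.congr (fun x => (heq1 x).symm)
      have hsum2 : Summable
          (fun m : SmoothSet (insert p P) => Real.log (m : ℕ) / ((m : ℕ) : ℝ)) := by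
        rw [← e.summable_iff]
        exact (hprod2.add hprod3).congr (fun x => (heq2 x).symm)
      refine ⟨hsum1, hsum2, ?_, ?_⟩
      · rw [← Equiv.tsum_eq e (fun m : SmoothSet (insert p P) => 1 / ((m : ℕ) : ℝ)),
          tsum_congr heq1, ← Summable.tsum_mul_tsum hgeo hS1 hprod1,
          Finset.prod_insert hpP, hgeoV, hV1]
      · rw [← Equiv.tsum_eq e
            (fun m : SmoothSet (insert p P) => Real.log (m : ℕ) / ((m : ℕ) : ℝ)),
          tsum_congr heq2,
          Summable.tsum_add hprod2 hprod3, ← Summable.tsum_mul_tsum hg2 hS1 hprod2,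
          ← Summable.tsum_mul_tsum hgeo hS2 hprod3,
          tsum_mul_left, hgeo2V, hgeoV, hV1, hV2,
          Finset.prod_insert hpP, Finset.sum_insert hpP]
        have hpne : (p : ℝ) ≠ 0 := hp0.ne'
        have hpm1 : (p : ℝ) - 1 ≠ 0 := sub_ne_zero_of_ne (ne_of_gt hp1)
        have h1r : 1 - (p : ℝ)⁻¹ ≠ 0 := sub_ne_zero_of_ne (ne_of_gt hr1)
        have key : (p : ℝ)⁻¹ / (1 - (p : ℝ)⁻¹) ^ 2 =
            (1 - (p : ℝ)⁻¹)⁻¹ * (1 / ((p : ℝ) - 1)) := by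
          rw [sq]
          field_simp
        rw [key]
        ring

private noncomputable def divEquiv {k : ℕ} (hk : k ≠ 0) :
    SmoothSet k.primeFactors ≃
      {n : ℕ | 0 < n ∧ k ∣ n ∧ n.primeFactors ⊆ k.primeFactors} := by
  refine Equiv.ofBijective (fun m => ⟨k * (m : ℕ), ?_, ⟨(m : ℕ), rfl⟩, ?_⟩) ⟨?_, ?_⟩
  · exact Nat.mul_pos (Nat.pos_of_ne_zero hk) m.2.1
  · rw [Nat.primeFactors_mul hk m.2.1.ne']
    exact Finset.union_subset (Finset.Subset.refl _) m.2.2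
  · rintro ⟨m, hm⟩ ⟨m', hm'⟩ h
    simp only [Subtype.mk.injEq] at h
    exact Subtype.ext (Nat.eq_of_mul_eq_mul_left (Nat.pos_of_ne_zero hk) h)
  · rintro ⟨n, hn0, ⟨m, rfl⟩, hnP⟩
    have hm0 : 0 < m := by
      rcases Nat.eq_zero_or_pos m with h | h
      · subst h; simp at hn0
      · exact h
    refine ⟨⟨m, hm0, ?_⟩, rfl⟩
    refine (Nat.primeFactors_mono (Dvd.intro_left k rfl) ?_).trans hnP
    exact Nat.mul_ne_zero hk hm0.ne'

set_option maxHeartbeats 1000000 in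
private theorem main_part {k : ℕ} (hk : 1 ≤ k) :
    Summable (fun n : ℕ =>
      if 0 < n ∧ k ∣ n ∧ n.primeFactors ⊆ k.primeFactors then Real.log n / n else 0) ∧
    (∑' n : ℕ,
        if 0 < n ∧ k ∣ n ∧ n.primeFactors ⊆ k.primeFactors then Real.log n / n else 0) =
      (1 / (Nat.totient k : ℝ)) *
        ((∑ p ∈ k.primeFactors, Real.log p / ((p : ℝ) - 1)) + Real.log k) := by
  classical
  have hk0 : k ≠ 0 := by omega
  have hP : ∀ p ∈ k.primeFactors, p.Prime := fun p hp => Nat.prime_of_mem_primeFactors hp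
  obtain ⟨hS1, hS2, hV1, hV2⟩ := smooth_tsum k.primeFactors hP
  set A : Set ℕ := {n | 0 < n ∧ k ∣ n ∧ n.primeFactors ⊆ k.primeFactors} with hA
  have hind : (fun n : ℕ =>
      if 0 < n ∧ k ∣ n ∧ n.primeFactors ⊆ k.primeFactors then Real.log n / n else 0)
      = A.indicator (fun n : ℕ => Real.log n / n) := by
    funext n
    rw [Set.indicator_apply]
    exact if_congr Iff.rfl rfl rfl
  set e := divEquiv hk0 with he
  have hco : ∀ m : SmoothSet k.primeFactors, ((e m : ℕ) : ℝ) = (k : ℝ) * ((m : ℕ) : ℝ) := by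
    intro m
    have : (e m : ℕ) = k * (m : ℕ) := rfl
    rw [this]; push_cast; ring
  have hk0R : (k : ℝ) ≠ 0 := by exact_mod_cast hk0
  have heq : ∀ m : SmoothSet k.primeFactors,
      Real.log ((e m : ℕ)) / ((e m : ℕ) : ℝ) =
        (Real.log k / k) * (1 / ((m : ℕ) : ℝ)) + (1 / k) * (Real.log ((m : ℕ)) / ((m : ℕ) : ℝ)) := by
    intro m
    have hm0 : ((m : ℕ) : ℝ) ≠ 0 := by
      have := m.2.1; positivity
    rw [hco m, Real.log_mul hk0R hm0]
    field_simp
    try ring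
  have hsum : Summable (fun m : SmoothSet k.primeFactors =>
      Real.log ((e m : ℕ)) / ((e m : ℕ) : ℝ)) := by
    exact ((hS1.mul_left (Real.log k / k)).add (hS2.mul_left (1 / (k : ℝ)))).congr
      (fun m => (heq m).symm)
  have hsumA : Summable (fun n : A => Real.log (n : ℕ) / ((n : ℕ) : ℝ)) := by
    rw [← e.summable_iff]
    exact hsum
  constructor
  · rw [hind, ← summable_subtype_iff_indicator]
    exact hsumA
  · rw [hind, ← tsum_subtype A (fun n : ℕ => Real.log n / n),
      ← Equiv.tsum_eq e (fun n : A => Real.log (n : ℕ) / ((n : ℕ) : ℝ)),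
      tsum_congr heq, Summable.tsum_add (hS1.mul_left _) (hS2.mul_left _),
      tsum_mul_left, tsum_mul_left, hV1, hV2]
    have htot : (Nat.totient k : ℝ) = (k : ℝ) * ∏ p ∈ k.primeFactors, (1 - (p : ℝ)⁻¹) := by
      have h := Nat.totient_eq_mul_prod_factors k
      have h2 := congrArg (fun q : ℚ => (q : ℝ)) h
      push_cast at h2
      exact h2
    have hQpos : 0 < ∏ p ∈ k.primeFactors, (1 - (p : ℝ)⁻¹) := by
      refine Finset.prod_pos (fun p hp => ?_)
      have hp1 : (1 : ℝ) < p := by exact_mod_cast (hP p hp).one_lt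
      have : (p : ℝ)⁻¹ < 1 := by rw [inv_lt_one_iff₀]; right; exact hp1
      linarith
    have hQne : (∏ p ∈ k.primeFactors, (1 - (p : ℝ)⁻¹)) ≠ 0 := hQpos.ne'
    have hProdInv : (∏ p ∈ k.primeFactors, (1 - (p : ℝ)⁻¹)⁻¹)
        = (∏ p ∈ k.primeFactors, (1 - (p : ℝ)⁻¹))⁻¹ := by
      rw [← Finset.prod_inv_distrib]
    rw [htot, hProdInv]
    field_simp
    ring

theorem statement11 :
    (∀ k : ℕ, 1 ≤ k →
      Summable (fun n : ℕ =>
        if 0 < n ∧ k ∣ n ∧ n.primeFactors ⊆ k.primeFactors then Real.log n / n else 0) ∧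
      (∑' n : ℕ,
          if 0 < n ∧ k ∣ n ∧ n.primeFactors ⊆ k.primeFactors then Real.log n / n else 0) =
        (1 / (Nat.totient k : ℝ)) *
          ((∑ p ∈ k.primeFactors, Real.log p / ((p : ℝ) - 1)) + Real.log k)) ∧
    (∃ c₁ c₂ : ℝ, 0 < c₁ ∧ 0 < c₂ ∧ ∀ k : ℕ, 2 ≤ k →
      c₁ * Real.log k / (Nat.totient k : ℝ) ≤
        (∑' n : ℕ,
          if 0 < n ∧ k ∣ n ∧ n.primeFactors ⊆ k.primeFactors then Real.log n / n else 0) ∧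
      (∑' n : ℕ,
          if 0 < n ∧ k ∣ n ∧ n.primeFactors ⊆ k.primeFactors then Real.log n / n else 0) ≤
        c₂ * Real.log k / (Nat.totient k : ℝ)) := by
  refine ⟨fun k hk => main_part hk, ⟨1, 2, one_pos, two_pos, ?_⟩⟩
  intro k hk
  have hk1 : 1 ≤ k := by omega
  obtain ⟨-, hVeq⟩ := main_part hk1
  rw [hVeq]
  have hP : ∀ p ∈ k.primeFactors, p.Prime := fun p hp => Nat.prime_of_mem_primeFactors hp
  have hφ : (0 : ℝ) < (Nat.totient k : ℝ) := by
    exact_mod_cast Nat.totient_pos.mpr (by omega)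
  have hkR : (1 : ℝ) < (k : ℝ) := by exact_mod_cast hk
  have hlogk : 0 < Real.log k := Real.log_pos hkR
  have hSnn : 0 ≤ ∑ p ∈ k.primeFactors, Real.log p / ((p : ℝ) - 1) := by
    refine Finset.sum_nonneg (fun p hp => ?_)
    have h2 : (2 : ℝ) ≤ p := by exact_mod_cast (hP p hp).two_le
    exact div_nonneg (Real.log_nonneg (by linarith)) (by linarith)
  have hSle : (∑ p ∈ k.primeFactors, Real.log p / ((p : ℝ) - 1)) ≤ Real.log k := by
    have hstep : (∑ p ∈ k.primeFactors, Real.log p / ((p : ℝ) - 1))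
        ≤ ∑ p ∈ k.primeFactors, Real.log p := by
      refine Finset.sum_le_sum (fun p hp => ?_)
      have h2 : (2 : ℝ) ≤ p := by exact_mod_cast (hP p hp).two_le
      exact div_le_self (Real.log_nonneg (by linarith)) (by linarith)
    have hlogprod : (∑ p ∈ k.primeFactors, Real.log p)
        = Real.log ((∏ p ∈ k.primeFactors, p : ℕ) : ℝ) := by
      rw [Nat.cast_prod]
      exact (Real.log_prod (fun p hp => by
        have := (hP p hp).pos
        exact_mod_cast this.ne')).symm
    have hdvd : (∏ p ∈ k.primeFactors, p) ∣ k := Nat.prod_primeFactors_dvd k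
    have hple : ((∏ p ∈ k.primeFactors, p : ℕ) : ℝ) ≤ (k : ℝ) := by
      exact_mod_cast Nat.le_of_dvd (by omega) hdvd
    have hppos : (0 : ℝ) < ((∏ p ∈ k.primeFactors, p : ℕ) : ℝ) := by
      have : 0 < ∏ p ∈ k.primeFactors, p :=
        Finset.prod_pos (fun p hp => (hP p hp).pos)
      exact_mod_cast this
    calc (∑ p ∈ k.primeFactors, Real.log p / ((p : ℝ) - 1))
        ≤ ∑ p ∈ k.primeFactors, Real.log p := hstep
      _ = Real.log ((∏ p ∈ k.primeFactors, p : ℕ) : ℝ) := hlogprod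
      _ ≤ Real.log k := Real.log_le_log hppos hple
  constructor
  · have h1 : (1 : ℝ) * Real.log k / (Nat.totient k : ℝ)
        = (1 / (Nat.totient k : ℝ)) * Real.log k := by ring
    rw [h1]
    exact mul_le_mul_of_nonneg_left (by linarith) (by positivity)
  · have h2 : (2 : ℝ) * Real.log k / (Nat.totient k : ℝ)
        = (1 / (Nat.totient k : ℝ)) * (Real.log k + Real.log k) := by ring
    rw [h2]
    exact mul_le_mul_of_nonneg_left (by linarith) (by positivity)
end

section
/- Let k ≥ 1 be an integer, x ≥ 2 a real number, and r a positive integer. Then the sum of 1/q_k over all k-tuples of primes r < q₁ < q₂ < ⋯ < q_k ≤ x satisfying r | q₁−1 and q_i | q_{i+1}−1 for 1 ≤ i ≤ k−1 is at most (log(x)+1)^k / r. Consequently, the number of (k+1)-tuples (q₁, …, q_k, n), where q₁ < ⋯ < q_k are primes in (r, x] satisfying r | q₁−1 and q_i | q_{i+1}−1 for 1 ≤ i ≤ k−1, and n ≤ x is a positive integer with q_k | n, is at most x·(log(x)+1)^k / r. -/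
open scoped Classical

open Finset

lemma harm_bound (x : ℝ) (hx : 1 ≤ x) :
    ∑ t ∈ Finset.Icc 1 ⌊x⌋₊, (1 : ℝ) / t ≤ Real.log x + 1 := by
  have h := harmonic_floor_le_one_add_log x hx
  have : ((harmonic ⌊x⌋₊ : ℚ) : ℝ) = ∑ t ∈ Finset.Icc 1 ⌊x⌋₊, (1 : ℝ) / t := by
    rw [harmonic_eq_sum_Icc]; push_cast; simp [one_div]
  linarith [this ▸ h]

lemma key1 (k : ℕ) (hk : 1 ≤ k) (x : ℝ) (hx : 2 ≤ x) (r : ℕ) (hr : 0 < r) :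
    (∑ q ∈ (Fintype.piFinset fun _ : Fin k => Finset.range (⌊x⌋₊ + 1)).filter
        (fun q : Fin k → ℕ =>
          (∀ i, (q i).Prime) ∧ StrictMono q ∧
          r < q ⟨0, hk⟩ ∧ ((q ⟨k - 1, Nat.sub_lt hk Nat.one_pos⟩ : ℕ) : ℝ) ≤ x ∧
          r ∣ q ⟨0, hk⟩ - 1 ∧
          ∀ i : ℕ, (h : i + 1 < k) →
            q ⟨i, Nat.lt_of_succ_lt h⟩ ∣ q ⟨i + 1, h⟩ - 1),
        (1 : ℝ) / (q ⟨k - 1, Nat.sub_lt hk Nat.one_pos⟩ : ℝ)) ≤ (Real.log x + 1) ^ k / r := by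
  set N := ⌊x⌋₊ with hN
  set last : Fin k := ⟨k - 1, Nat.sub_lt hk Nat.one_pos⟩ with hlast
  set S := (Fintype.piFinset fun _ : Fin k => Finset.range (N + 1)).filter
        (fun q : Fin k → ℕ =>
          (∀ i, (q i).Prime) ∧ StrictMono q ∧
          r < q ⟨0, hk⟩ ∧ ((q ⟨k - 1, Nat.sub_lt hk Nat.one_pos⟩ : ℕ) : ℝ) ≤ x ∧
          r ∣ q ⟨0, hk⟩ - 1 ∧
          ∀ i : ℕ, (h : i + 1 < k) →
            q ⟨i, Nat.lt_of_succ_lt h⟩ ∣ q ⟨i + 1, h⟩ - 1) with hS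
  -- the modulus function
  set m : (Fin k → ℕ) → Fin k → ℕ := fun q i =>
    if i.val = 0 then r else q ⟨i.val - 1, lt_of_le_of_lt (Nat.sub_le _ _) i.isLt⟩ with hm
  set F : (Fin k → ℕ) → Fin k → ℕ := fun q i => (q i - 1) / m q i with hF
  set g : (Fin k → ℕ) → ℝ := fun t => (1 / r) * ∏ i, (1 : ℝ) / (t i) with hg
  -- basic facts for q ∈ S
  have key : ∀ q ∈ S,
      (∀ i, q i = m q i * F q i + 1) ∧ (∀ i, 1 ≤ F q i) ∧ (∀ i, F q i ≤ N) ∧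
      (r * ∏ i, F q i ≤ q last) := by
    intro q hq
    rw [hS, Finset.mem_filter] at hq
    obtain ⟨hmem, hprime, hmono, hr0, hle, hdvd0, hchain⟩ := hq
    have hqN : ∀ i, q i ≤ N := by
      intro i
      have := Fintype.mem_piFinset.mp hmem i
      simpa [Finset.mem_range, Nat.lt_succ_iff] using this
    have hm_pos : ∀ i, 0 < m q i := by
      intro i; rw [hm]; dsimp only; split
      · exact hr
      · exact (hprime _).pos
    have hm_dvd : ∀ i, m q i ∣ q i - 1 := by
      intro i; rw [hm]; dsimp only; split
      · rename_i h0
        have : i = (⟨0, hk⟩ : Fin k) := Fin.ext h0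
        rw [this]; exact hdvd0
      · rename_i h0
        have hi := i.isLt
        have h1 : i.val - 1 + 1 < k := by omega
        have := hchain (i.val - 1) h1
        have e2 : (⟨i.val - 1 + 1, h1⟩ : Fin k) = i := Fin.ext (by simp only [Fin.val_mk]; omega)
        rwa [e2] at this
    have hm_lt : ∀ i, m q i < q i := by
      intro i; rw [hm]; dsimp only; split
      · rename_i h0
        have : i = (⟨0, hk⟩ : Fin k) := Fin.ext h0
        rw [this]; exact hr0
      · rename_i h0
        exact hmono (by exact Fin.mk_lt_mk.mpr (by omega) : (⟨i.val - 1, _⟩ : Fin k) < i)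
    have h_eq : ∀ i, q i = m q i * F q i + 1 := by
      intro i
      rw [hF]; dsimp only
      rw [Nat.mul_div_cancel' (hm_dvd i)]
      have := (hprime i).two_le
      omega
    have hF_pos : ∀ i, 1 ≤ F q i := by
      intro i
      rw [hF]; dsimp only
      rw [Nat.one_le_div_iff (hm_pos i)]
      have := hm_lt i; omega
    have hF_le : ∀ i, F q i ≤ N := by
      intro i
      calc F q i ≤ q i - 1 := Nat.div_le_self _ _
        _ ≤ N := le_trans (Nat.sub_le _ _) (hqN i)
    refine ⟨h_eq, hF_pos, hF_le, ?_⟩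
    -- product bound
    set G : ℕ → ℕ := fun j => if h : j < k then F q ⟨j, h⟩ else 1 with hG
    have claim : ∀ n, ∀ hn : n < k, r * ∏ j ∈ Finset.range (n + 1), G j ≤ q ⟨n, hn⟩ := by
      intro n
      induction n with
      | zero =>
        intro hn
        rw [Finset.prod_range_one, hG]
        dsimp only
        rw [dif_pos hn]
        have h0 := h_eq ⟨0, hn⟩
        have hm0 : m q ⟨0, hn⟩ = r := by simp [hm]
        rw [hm0] at h0
        omega
      | succ n ih =>
        intro hn
        have hn' : n < k := by omega
        rw [Finset.prod_range_succ, ← mul_assoc]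
        have h1 : r * ∏ j ∈ Finset.range (n + 1), G j ≤ q ⟨n, hn'⟩ := ih hn'
        have h2 : q ⟨n + 1, hn⟩ = m q ⟨n + 1, hn⟩ * F q ⟨n + 1, hn⟩ + 1 := h_eq _
        have hm1 : m q ⟨n + 1, hn⟩ = q ⟨n, hn'⟩ := by
          rw [hm]; dsimp only; rw [if_neg (by omega)]; rfl
        have hGn : G (n + 1) = F q ⟨n + 1, hn⟩ := by rw [hG]; dsimp only; rw [dif_pos hn]
        calc (r * ∏ j ∈ Finset.range (n + 1), G j) * G (n + 1)
            ≤ q ⟨n, hn'⟩ * G (n + 1) := Nat.mul_le_mul_right _ h1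
          _ = m q ⟨n + 1, hn⟩ * F q ⟨n + 1, hn⟩ := by rw [hm1, hGn]
          _ ≤ q ⟨n + 1, hn⟩ := by omega
    have hprod : ∏ i : Fin k, F q i = ∏ j ∈ Finset.range k, G j := by
      rw [← Fin.prod_univ_eq_prod_range G k]
      apply Finset.prod_congr rfl
      intro i _
      rw [hG]; dsimp only; rw [dif_pos i.isLt]
    have := claim (k - 1) (by omega)
    rw [hprod]
    have hk1 : k - 1 + 1 = k := by omega
    rw [← hk1]
    exact this
  -- injectivity of F on S
  have hinj : ∀ q ∈ S, ∀ q' ∈ S, F q = F q' → q = q' := by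
    intro q hq q' hq' hFF
    obtain ⟨heq, -, -, -⟩ := key q hq
    obtain ⟨heq', -, -, -⟩ := key q' hq'
    have main : ∀ n, ∀ hn : n < k, q ⟨n, hn⟩ = q' ⟨n, hn⟩ := by
      intro n
      induction n with
      | zero =>
        intro hn
        have h1 := heq ⟨0, hn⟩
        have h2 := heq' ⟨0, hn⟩
        have hm0 : m q ⟨0, hn⟩ = r := by simp [hm]
        have hm0' : m q' ⟨0, hn⟩ = r := by simp [hm]
        rw [h1, h2, hm0, hm0', hFF]
      | succ n ih =>
        intro hn
        have hn' : n < k := by omega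
        have h1 := heq ⟨n + 1, hn⟩
        have h2 := heq' ⟨n + 1, hn⟩
        have hm1 : m q ⟨n + 1, hn⟩ = q ⟨n, hn'⟩ := by
          rw [hm]; dsimp only; rw [if_neg (by omega)]; rfl
        have hm1' : m q' ⟨n + 1, hn⟩ = q' ⟨n, hn'⟩ := by
          rw [hm]; dsimp only; rw [if_neg (by omega)]; rfl
        rw [h1, h2, hm1, hm1', hFF, ih hn']
    funext i
    have := main i.val i.isLt
    simpa using this
  -- chain of inequalities
  have step1 : ∑ q ∈ S, (1 : ℝ) / (q last) ≤ ∑ q ∈ S, g (F q) := by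
    apply Finset.sum_le_sum
    intro q hq
    obtain ⟨-, hFpos, -, hprod⟩ := key q hq
    have hpos : 0 < (r : ℝ) * ∏ i, (F q i : ℝ) := by
      apply mul_pos (by exact_mod_cast hr)
      apply Finset.prod_pos
      intro i _
      exact_mod_cast hFpos i
    have hgv : g (F q) = 1 / ((r : ℝ) * ∏ i, (F q i : ℝ)) := by
      rw [hg]; dsimp only
      rw [one_div ((r:ℝ) * _), mul_inv, ← one_div, ← Finset.prod_inv_distrib]
      simp [one_div]
    rw [hgv]
    apply one_div_le_one_div_of_le
    · exact hpos
    · have : ((r * ∏ i, F q i : ℕ) : ℝ) ≤ ((q last : ℕ) : ℝ) := by exact_mod_cast hprod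
      push_cast at this
      exact this
  have step2 : ∑ q ∈ S, g (F q) = ∑ t ∈ S.image F, g t := (Finset.sum_image hinj).symm
  have step3 : ∑ t ∈ S.image F, g t ≤
      ∑ t ∈ Fintype.piFinset (fun _ : Fin k => Finset.Icc 1 N), g t := by
    apply Finset.sum_le_sum_of_subset_of_nonneg
    · intro t ht
      obtain ⟨q, hq, rfl⟩ := Finset.mem_image.mp ht
      obtain ⟨-, hFpos, hFle, -⟩ := key q hq
      rw [Fintype.mem_piFinset]
      intro i
      rw [Finset.mem_Icc]
      exact ⟨hFpos i, hFle i⟩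
    · intro t _ _
      rw [hg]; positivity
  have step4 : ∑ t ∈ Fintype.piFinset (fun _ : Fin k => Finset.Icc 1 N), g t =
      (1 / r) * (∑ t ∈ Finset.Icc 1 N, (1 : ℝ) / t) ^ k := by
    rw [hg]
    rw [← Finset.mul_sum]
    congr 1
    rw [← Finset.prod_univ_sum (fun _ : Fin k => Finset.Icc 1 N) (fun _ j => (1 : ℝ) / j)]
    rw [Finset.prod_const]
    simp
  have hH : ∑ t ∈ Finset.Icc 1 N, (1 : ℝ) / t ≤ Real.log x + 1 := harm_bound x (by linarith)
  have hH0 : (0 : ℝ) ≤ ∑ t ∈ Finset.Icc 1 N, (1 : ℝ) / t := by positivity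
  calc ∑ q ∈ S, (1 : ℝ) / (q last) ≤ (1 / r) * (∑ t ∈ Finset.Icc 1 N, (1 : ℝ) / t) ^ k := by
        rw [← step4]; linarith [step1, step2 ▸ step3]
    _ ≤ (1 / r) * (Real.log x + 1) ^ k := by
        apply mul_le_mul_of_nonneg_left (pow_le_pow_left₀ hH0 hH k) (by positivity)
    _ = (Real.log x + 1) ^ k / r := by ring

lemma aux2 {α : Type*} (s : Finset α) (N : ℕ) (x : ℝ)
    (p : α × ℕ → Prop) (P : α → Prop) (d : α → ℕ)
    (hPp : ∀ a n, p (a, n) → P a)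
    (hdvd : ∀ a n, p (a, n) → d a ∣ n)
    (hd : ∀ a, P a → 0 < d a)
    (hx : 0 ≤ x) (hNx : (N : ℝ) ≤ x) :
    ((((s ×ˢ Finset.Icc 1 N).filter p).card : ℝ)) ≤
      x * ∑ a ∈ s.filter P, (1 : ℝ) / (d a) := by
  have hcard : ((s ×ˢ Finset.Icc 1 N).filter p).card
      = ∑ a ∈ s, ((Finset.Icc 1 N).filter (fun n => p (a, n))).card := by
    rw [Finset.card_filter, Finset.sum_product]
    simp_rw [← Finset.card_filter]
  rw [hcard]
  push_cast
  have hbound : ∀ a ∈ s,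
      (((Finset.Icc 1 N).filter (fun n => p (a, n))).card : ℝ) ≤
        if P a then x * ((1 : ℝ) / (d a)) else 0 := by
    intro a _
    by_cases hPa : P a
    · rw [if_pos hPa]
      have ha_pos : 0 < d a := hd a hPa
      have hsub : (Finset.Icc 1 N).filter (fun n => p (a, n)) ⊆
          (Finset.Ioc 0 N).filter (fun n => d a ∣ n) := by
        intro n hn
        rw [Finset.mem_filter] at hn ⊢
        obtain ⟨hn1, hn2⟩ := hn
        refine ⟨by simp only [Finset.mem_Icc] at hn1; simp only [Finset.mem_Ioc]; omega, hdvd a n hn2⟩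
      have hle := Finset.card_le_card hsub
      rw [Nat.Ioc_filter_dvd_card_eq_div] at hle
      calc (((Finset.Icc 1 N).filter (fun n => p (a, n))).card : ℝ)
          ≤ ((N / d a : ℕ) : ℝ) := by exact_mod_cast hle
        _ ≤ (N : ℝ) / (d a : ℝ) := Nat.cast_div_le
        _ ≤ x / (d a : ℝ) := by gcongr
        _ = x * ((1 : ℝ) / (d a)) := by ring
    · rw [if_neg hPa]
      have : (Finset.Icc 1 N).filter (fun n => p (a, n)) = ∅ := by
        rw [Finset.filter_eq_empty_iff]
        intro n _ hpn
        exact hPa (hPp a n hpn)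
      rw [this]
      simp
  calc ∑ a ∈ s, (((Finset.Icc 1 N).filter (fun n => p (a, n))).card : ℝ)
      ≤ ∑ a ∈ s, (if P a then x * ((1 : ℝ) / (d a)) else 0) := Finset.sum_le_sum hbound
    _ = ∑ a ∈ s.filter P, x * ((1 : ℝ) / (d a)) := (Finset.sum_filter _ _).symm
    _ = x * ∑ a ∈ s.filter P, ((1 : ℝ) / (d a)) := by rw [Finset.mul_sum]



theorem statement13 (k : ℕ) (hk : 1 ≤ k) (x : ℝ) (hx : 2 ≤ x) (r : ℕ) (hr : 0 < r) :
    (∑ q ∈ (Fintype.piFinset fun _ : Fin k => Finset.range (⌊x⌋₊ + 1)).filter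
        (fun q : Fin k → ℕ =>
          (∀ i, (q i).Prime) ∧ StrictMono q ∧
          r < q ⟨0, hk⟩ ∧ ((q ⟨k - 1, by omega⟩ : ℕ) : ℝ) ≤ x ∧
          r ∣ q ⟨0, hk⟩ - 1 ∧
          ∀ i : ℕ, (h : i + 1 < k) →
            q ⟨i, by omega⟩ ∣ q ⟨i + 1, h⟩ - 1),
        (1 : ℝ) / (q ⟨k - 1, by omega⟩ : ℝ)) ≤ (Real.log x + 1) ^ k / r ∧
    ((((Fintype.piFinset fun _ : Fin k => Finset.range (⌊x⌋₊ + 1)) ×ˢ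
        Finset.Icc 1 ⌊x⌋₊).filter
        (fun qn : (Fin k → ℕ) × ℕ =>
          (∀ i, (qn.1 i).Prime) ∧ StrictMono qn.1 ∧
          r < qn.1 ⟨0, hk⟩ ∧ ((qn.1 ⟨k - 1, by omega⟩ : ℕ) : ℝ) ≤ x ∧
          r ∣ qn.1 ⟨0, hk⟩ - 1 ∧
          (∀ i : ℕ, (h : i + 1 < k) →
            qn.1 ⟨i, by omega⟩ ∣ qn.1 ⟨i + 1, h⟩ - 1) ∧
          0 < qn.2 ∧ ((qn.2 : ℕ) : ℝ) ≤ x ∧ qn.1 ⟨k - 1, by omega⟩ ∣ qn.2)).card : ℝ) ≤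
      x * (Real.log x + 1) ^ k / r := by
  have part1 := key1 k hk x hx r hr
  refine ⟨part1, ?_⟩
  have hx0 : (0 : ℝ) ≤ x := by linarith
  have hNx : ((⌊x⌋₊ : ℕ) : ℝ) ≤ x := Nat.floor_le hx0
  have h2 := aux2 (Fintype.piFinset fun _ : Fin k => Finset.range (⌊x⌋₊ + 1)) ⌊x⌋₊ x
    (fun qn : (Fin k → ℕ) × ℕ =>
          (∀ i, (qn.1 i).Prime) ∧ StrictMono qn.1 ∧
          r < qn.1 ⟨0, hk⟩ ∧ ((qn.1 ⟨k - 1, by omega⟩ : ℕ) : ℝ) ≤ x ∧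
          r ∣ qn.1 ⟨0, hk⟩ - 1 ∧
          (∀ i : ℕ, (h : i + 1 < k) →
            qn.1 ⟨i, by omega⟩ ∣ qn.1 ⟨i + 1, h⟩ - 1) ∧
          0 < qn.2 ∧ ((qn.2 : ℕ) : ℝ) ≤ x ∧ qn.1 ⟨k - 1, by omega⟩ ∣ qn.2)
    (fun q : Fin k → ℕ =>
          (∀ i, (q i).Prime) ∧ StrictMono q ∧
          r < q ⟨0, hk⟩ ∧ ((q ⟨k - 1, by omega⟩ : ℕ) : ℝ) ≤ x ∧
          r ∣ q ⟨0, hk⟩ - 1 ∧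
          ∀ i : ℕ, (h : i + 1 < k) →
            q ⟨i, by omega⟩ ∣ q ⟨i + 1, h⟩ - 1)
    (fun q : Fin k → ℕ => q ⟨k - 1, by omega⟩)
    (fun a n hpn => ⟨hpn.1, hpn.2.1, hpn.2.2.1, hpn.2.2.2.1, hpn.2.2.2.2.1, hpn.2.2.2.2.2.1⟩)
    (fun a n hpn => hpn.2.2.2.2.2.2.2.2)
    (fun a hPa => (hPa.1 _).pos)
    hx0 hNx
  rw [Finset.filter_congr_decidable] at h2
  refine le_trans h2 ?_
  rw [Finset.filter_congr_decidable, mul_div_assoc]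
  exact mul_le_mul_of_nonneg_left part1 hx0
end

section
/- Let x ≥ y ≥ 2 be real numbers and k ≥ 1 an integer. Define P_0 = {p prime : p ≤ y} and P_{j+1} = {p prime : p ≤ x and every prime q dividing p−1 lies in P_j}; let Ψ(x,P_k) be the number of positive integers n ≤ x all of whose prime divisors lie in P_k; let Φ_k(x,y) be the number of positive integers n ≤ x such that every prime divisor of φ_k(n) is at most y; and for i ≥ 0 let S_i(x,y) = {n ≤ x : there exists a prime p > y with p² | φ_i(n)}. Then 0 ≤ Ψ(x,P_k) − Φ_k(x,y) ≤ ∑_{i=0}^{k−1} |S_i(x,y)|. -/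
/-- `Sset i x y` is the set of positive integers `n ≤ x` for which there exists a prime
`p > y` with `p² ∣ φ_i(n)`. -/
def Sset (i : ℕ) (x y : ℝ) : Set ℕ :=
  {n : ℕ | 0 < n ∧ (n : ℝ) ≤ x ∧
    ∃ p : ℕ, p.Prime ∧ y < (p : ℝ) ∧ p ^ 2 ∣ Nat.totient^[i] n}

/-- If a prime `q` divides `φ(n)`, then either `q² ∣ n` or there is a prime `p ∣ n`
with `q ∣ p − 1`. -/
lemma prime_dvd_totient' {q n : ℕ} (hq : q.Prime) (h : q ∣ n.totient) :
    q ^ 2 ∣ n ∨ ∃ p : ℕ, p.Prime ∧ p ∣ n ∧ q ∣ p - 1 := by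
  induction n using Nat.strong_induction_on with
  | _ n ih =>
    rcases Nat.eq_zero_or_pos n with rfl | hn0
    · exact Or.inl (dvd_zero _)
    rcases Nat.lt_or_ge n 2 with hn1 | hn2
    · interval_cases n
      · simp [Nat.totient_one] at h
        exact absurd h hq.one_lt.ne'
    · set p := n.minFac with hp
      have hpp : p.Prime := Nat.minFac_prime (by omega)
      set a := n.factorization p with ha
      have hpn : p ∣ n := Nat.minFac_dvd n
      have ha1 : 1 ≤ a := (Nat.Prime.factorization_pos_of_dvd hpp (by omega) hpn)
      set m := n / p ^ a with hm
      have hnm : p ^ a * m = n := Nat.ordProj_mul_ordCompl_eq_self n p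
      have hcop : Nat.Coprime (p ^ a) m :=
        Nat.Coprime.pow_left _ (Nat.coprime_ordCompl hpp (by omega))
      have htot : n.totient = p ^ (a - 1) * (p - 1) * m.totient := by
        rw [← hnm, Nat.totient_mul hcop, Nat.totient_prime_pow hpp ha1]
      rw [htot] at h
      rcases (Nat.Prime.dvd_mul hq).1 h with h1 | h1
      · rcases (Nat.Prime.dvd_mul hq).1 h1 with h2 | h2
        · have hqp : q = p := (Nat.prime_dvd_prime_iff_eq hq hpp).1 (hq.dvd_of_dvd_pow h2)
          have ha2 : 2 ≤ a := by
            by_contra hc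
            have : a = 1 := by omega
            rw [this] at h2; simp at h2
            exact absurd h2 hq.one_lt.ne'
          left
          rw [hqp]
          exact dvd_trans (pow_dvd_pow p ha2) ⟨m, hnm.symm⟩
        · exact Or.inr ⟨p, hpp, hpn, h2⟩
      · have hmlt : m < n := by
          have : 2 ≤ p ^ a := le_trans hpp.two_le (Nat.le_self_pow (by omega) p)
          calc m = n / p ^ a := rfl
            _ < n := Nat.div_lt_self hn0 (by omega)
        rcases ih m hmlt h1 with h2 | ⟨p', hp', hpm, hq'⟩
        · exact Or.inl (h2.trans ⟨p ^ a, by rw [← hnm]; ring⟩)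
        · exact Or.inr ⟨p', hp', hpm.trans ⟨p ^ a, by rw [← hnm]; ring⟩, hq'⟩

lemma iterP_mono {x y : ℝ} (hyx : y ≤ x) : ∀ j, iterP x y j ⊆ iterP x y (j + 1) := by
  intro j
  induction j with
  | zero =>
    rintro p ⟨hp, hpy⟩
    refine ⟨hp, hpy.trans hyx, fun q hq hqd => ⟨hq, ?_⟩⟩
    have hq1 : q + 1 ≤ p := by
      have h2 := hp.two_le
      have := Nat.le_of_dvd (by omega) hqd
      omega
    have : (q : ℝ) + 1 ≤ (p : ℝ) := by exact_mod_cast hq1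
    linarith
  | succ j ih =>
    rintro p ⟨hp, hpx, hqs⟩
    exact ⟨hp, hpx, fun q hq hqd => ih (hqs q hq hqd)⟩

lemma iterP_zero_subset {x y : ℝ} (hyx : y ≤ x) : ∀ j, iterP x y 0 ⊆ iterP x y j := by
  intro j
  induction j with
  | zero => exact subset_rfl
  | succ j ih => exact fun p hp => iterP_mono hyx j (ih hp)

lemma forward {x y : ℝ} : ∀ (k n : ℕ), 0 < n → (n : ℝ) ≤ x →
    (∀ p : ℕ, p.Prime → p ∣ (Nat.totient^[k] n) → (p : ℝ) ≤ y) →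
    ∀ p : ℕ, p.Prime → p ∣ n → p ∈ iterP x y k := by
  intro k
  induction k with
  | zero =>
    intro n hn hnx h p hp hpn
    exact ⟨hp, h p hp hpn⟩
  | succ k ih =>
    intro n hn hnx h p hp hpn
    have hpx : (p : ℝ) ≤ x := le_trans (Nat.cast_le.2 (Nat.le_of_dvd hn hpn)) hnx
    refine ⟨hp, hpx, fun q hq hqd => ?_⟩
    have hφ : 0 < n.totient := Nat.totient_pos.2 hn
    have hφx : ((n.totient : ℕ) : ℝ) ≤ x :=
      le_trans (Nat.cast_le.2 (Nat.totient_le n)) hnx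
    have hsm : ∀ p' : ℕ, p'.Prime → p' ∣ (Nat.totient^[k] n.totient) → (p' : ℝ) ≤ y := by
      intro p' hp' hd
      apply h p' hp'
      rwa [Function.iterate_succ_apply]
    have hqφ : q ∣ n.totient := by
      have h1 : p.totient ∣ n.totient := Nat.totient_dvd_of_dvd hpn
      rw [Nat.totient_prime hp] at h1
      exact hqd.trans h1
    exact ih n.totient hφ hφx hsm q hq hqφ

lemma backward {x y : ℝ} (hyx : y ≤ x) : ∀ (k n : ℕ),
    (∀ p : ℕ, p.Prime → p ∣ n → p ∈ iterP x y k) →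
    (∀ i, i < k → ¬ ∃ p : ℕ, p.Prime ∧ y < (p : ℝ) ∧ p ^ 2 ∣ Nat.totient^[i] n) →
    ∀ p : ℕ, p.Prime → p ∣ (Nat.totient^[k] n) → (p : ℝ) ≤ y := by
  intro k
  induction k with
  | zero =>
    intro n hP _ p hp hpn
    exact (hP p hp hpn).2
  | succ k ih =>
    intro n hP hS p hp hpn
    rw [Function.iterate_succ_apply] at hpn
    refine ih n.totient ?_ ?_ p hp hpn
    · intro q hq hqd
      rcases prime_dvd_totient' hq hqd with h2 | ⟨p', hp', hpn', hqd'⟩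
      · have hqy : (q : ℝ) ≤ y := by
          by_contra hc
          exact hS 0 (Nat.succ_pos k) ⟨q, hq, lt_of_not_ge hc, by simpa using h2⟩
        exact iterP_zero_subset hyx k ⟨hq, hqy⟩
      · exact (hP p' hp' hpn').2.2 q hq hqd'
    · intro i hi hex
      apply hS (i + 1) (by omega)
      rwa [Function.iterate_succ_apply]

lemma ncard_biUnion_le' (f : ℕ → Set ℕ) (k : ℕ) :
    (⋃ i ∈ Finset.range k, f i).ncard ≤ ∑ i ∈ Finset.range k, (f i).ncard := by
  induction k with
  | zero => simp
  | succ k ih =>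
    rw [Finset.range_add_one, Finset.set_biUnion_insert,
      Finset.sum_insert (Finset.notMem_range_self)]
    exact le_trans (Set.ncard_union_le _ _) (add_le_add_right ih _)

theorem statement14 (x y : ℝ) (hy : 2 ≤ y) (hyx : y ≤ x) (k : ℕ) (hk : 1 ≤ k) :
    PhiSmooth k x y ≤ smoothIn x (iterP x y k) ∧
    (smoothIn x (iterP x y k) : ℝ) - (PhiSmooth k x y : ℝ) ≤
      ∑ i ∈ Finset.range k, ((Sset i x y).ncard : ℝ) := by
  set A := {n : ℕ | 0 < n ∧ (n : ℝ) ≤ x ∧ ∀ p : ℕ, p.Prime → p ∣ n → p ∈ iterP x y k}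
    with hA
  set B := {n : ℕ | 0 < n ∧ (n : ℝ) ≤ x ∧
    ∀ p : ℕ, p.Prime → p ∣ (Nat.totient^[k] n) → (p : ℝ) ≤ y} with hB
  have hAfin : A.Finite := by
    apply Set.Finite.subset (Set.finite_Iic (⌊x⌋₊))
    rintro n ⟨-, hnx, -⟩
    exact Nat.le_floor hnx
  have hBA : B ⊆ A := by
    rintro n ⟨hn, hnx, hsm⟩
    exact ⟨hn, hnx, forward k n hn hnx hsm⟩
  have hdiff : A \ B ⊆ ⋃ i ∈ Finset.range k, Sset i x y := by
    rintro n ⟨⟨hn, hnx, hP⟩, hnB⟩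
    by_contra hc
    simp only [Set.mem_iUnion, Finset.mem_range, not_exists] at hc
    apply hnB
    refine ⟨hn, hnx, backward hyx k n hP ?_⟩
    intro i hi hex
    exact hc i hi ⟨hn, hnx, hex⟩
  constructor
  · exact Set.ncard_le_ncard hBA hAfin
  · have h1 : A.ncard - B.ncard ≤ ∑ i ∈ Finset.range k, (Sset i x y).ncard := by
      rw [← Set.ncard_diff hBA (hAfin.subset hBA)]
      exact le_trans (Set.ncard_le_ncard hdiff
        (Set.Finite.biUnion (Finset.finite_toSet _) (fun i _ => by
          apply Set.Finite.subset (Set.finite_Iic (⌊x⌋₊))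
          rintro n ⟨-, hnx, -⟩
          exact Nat.le_floor hnx))) (ncard_biUnion_le' _ k)
    have hle : B.ncard ≤ A.ncard := Set.ncard_le_ncard hBA hAfin
    have h2 : ((A.ncard - B.ncard : ℕ) : ℝ) ≤ ∑ i ∈ Finset.range k, ((Sset i x y).ncard : ℝ) := by
      exact_mod_cast Nat.cast_le.2 h1
    rw [Nat.cast_sub hle] at h2
    exact h2
end

section
/- Let χ : [1,∞) → [0,∞) be a measurable function such that ∫₁^∞ χ(t)·e^{ξ·t} dt converges for every real ξ, and such that C := ∫₁^∞ χ(v) dv > 0. Let u ≥ C² and let ξ(u) > 0 satisfy u = ∫₁^∞ χ(v)·e^{ξ(u)·v} dv. Then for every ε > 0, ∫₁^∞ χ(v)·e^{(ξ(u)+ε)·v} dv ≥ u^{1 + ε/(2·ξ(u))}. -/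
open MeasureTheory Real

theorem statement16 (χ : ℝ → ℝ) (hmeas : Measurable χ)
    (hnonneg : ∀ t : ℝ, 1 ≤ t → 0 ≤ χ t)
    (hint : ∀ ξ : ℝ, MeasureTheory.IntegrableOn (fun v => χ v * Real.exp (ξ * v))
      (Set.Ioi 1))
    (C : ℝ) (hC : C = ∫ v in Set.Ioi (1 : ℝ), χ v) (hCpos : 0 < C)
    (u ξu : ℝ) (hu : C ^ 2 ≤ u) (hξpos : 0 < ξu)
    (hξ : u = ∫ v in Set.Ioi (1 : ℝ), χ v * Real.exp (ξu * v)) :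
    ∀ ε : ℝ, 0 < ε →
      u ^ (1 + ε / (2 * ξu)) ≤ ∫ v in Set.Ioi (1 : ℝ), χ v * Real.exp ((ξu + ε) * v) := by
  intro ε hε
  have hu0 : 0 < u := lt_of_lt_of_le (by positivity) hu
  have hξε : 0 < ξu + ε := by linarith
  have hξ0 : ξu ≠ 0 := ne_of_gt hξpos
  have hε0 : ε ≠ 0 := ne_of_gt hε
  have hξε0 : ξu + ε ≠ 0 := ne_of_gt hξε
  set μ := MeasureTheory.volume.restrict (Set.Ioi (1:ℝ)) with hμ
  set p : ℝ := (ξu + ε) / ξu with hp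
  set q : ℝ := (ξu + ε) / ε with hq
  have hp1 : 1 < p := by rw [hp, lt_div_iff₀ hξpos]; linarith
  have hp0 : 0 < p := by linarith
  have hq0 : 0 < q := by rw [hq]; positivity
  have hpq : p.HolderConjugate q := by
    refine Real.holderConjugate_iff.mpr ⟨hp1, ?_⟩
    rw [hp, hq]
    field_simp
  set a : ℝ := ξu / (ξu + ε) with ha
  set b : ℝ := ε / (ξu + ε) with hb
  have hab : a + b = 1 := by rw [ha, hb]; field_simp
  have hap : a * p = 1 := by rw [ha, hp]; field_simp
  have hbq : b * q = 1 := by rw [hb, hq]; field_simp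
  have ha0 : 0 ≤ a := by rw [ha]; positivity
  have hb0 : 0 ≤ b := by rw [hb]; positivity
  have hainv : a = 1 / p := by rw [ha, hp]; field_simp
  have hbinv : b = 1 / q := by rw [hb, hq]; field_simp
  set f : ℝ → ℝ := fun v => χ v ^ a * Real.exp (ξu * v) with hfdef
  set g : ℝ → ℝ := fun v => χ v ^ b with hgdef
  have hmf : Measurable f := by rw [hfdef]; fun_prop
  have hmg : Measurable g := by rw [hgdef]; fun_prop
  have hmem : ∀ᵐ v ∂μ, v ∈ Set.Ioi (1:ℝ) := ae_restrict_mem measurableSet_Ioi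
  -- pointwise identities on Ioi 1
  have key_fp : ∀ v : ℝ, v ∈ Set.Ioi (1:ℝ) → f v ^ p = χ v * Real.exp ((ξu + ε) * v) := by
    intro v hv
    have hχ : 0 ≤ χ v := hnonneg v (le_of_lt hv)
    rw [hfdef]
    simp only
    rw [Real.mul_rpow (Real.rpow_nonneg hχ _) (Real.exp_pos _).le,
      ← Real.rpow_mul hχ, hap, Real.rpow_one, ← Real.exp_mul]
    congr 2
    rw [hp]
    field_simp
  have key_gq : ∀ v : ℝ, v ∈ Set.Ioi (1:ℝ) → g v ^ q = χ v := by
    intro v hv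
    have hχ : 0 ≤ χ v := hnonneg v (le_of_lt hv)
    rw [hgdef]
    simp only
    rw [← Real.rpow_mul hχ, hbq, Real.rpow_one]
  have key_fg : ∀ v : ℝ, v ∈ Set.Ioi (1:ℝ) → f v * g v = χ v * Real.exp (ξu * v) := by
    intro v hv
    have hχ : 0 ≤ χ v := hnonneg v (le_of_lt hv)
    rw [hfdef, hgdef]
    simp only
    rw [mul_comm (χ v ^ a) (Real.exp (ξu * v)), mul_assoc, ← Real.rpow_add' hχ (by rw [hab]; norm_num),
      hab, Real.rpow_one, mul_comm]
  have hfnn : ∀ v : ℝ, v ∈ Set.Ioi (1:ℝ) → 0 ≤ f v := fun v hv =>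
    mul_nonneg (Real.rpow_nonneg (hnonneg v hv.le) _) (Real.exp_pos _).le
  have hgnn : ∀ v : ℝ, v ∈ Set.Ioi (1:ℝ) → 0 ≤ g v := fun v hv =>
    Real.rpow_nonneg (hnonneg v hv.le) _
  have hfae : 0 ≤ᵐ[μ] f := by filter_upwards [hmem] with v hv; exact hfnn v hv
  have hgae : 0 ≤ᵐ[μ] g := by filter_upwards [hmem] with v hv; exact hgnn v hv
  -- Memℒp statements
  have f_mem : MemLp f (ENNReal.ofReal p) μ := by
    have A : ENNReal.ofReal p ≠ 0 := by
      rw [Ne, ENNReal.ofReal_eq_zero, not_le]; exact hp0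
    have B : ENNReal.ofReal p ≠ ⊤ := ENNReal.ofReal_ne_top
    rw [← memLp_norm_rpow_iff hmf.aestronglyMeasurable A B,
      ENNReal.toReal_ofReal hp0.le, ENNReal.div_self A B, memLp_one_iff_integrable]
    refine MeasureTheory.Integrable.congr (hint (ξu + ε)) ?_
    filter_upwards [hmem] with v hv
    rw [Real.norm_of_nonneg (hfnn v hv), key_fp v hv]
  have g_mem : MemLp g (ENNReal.ofReal q) μ := by
    have A : ENNReal.ofReal q ≠ 0 := by
      rw [Ne, ENNReal.ofReal_eq_zero, not_le]; exact hq0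
    have B : ENNReal.ofReal q ≠ ⊤ := ENNReal.ofReal_ne_top
    rw [← memLp_norm_rpow_iff hmg.aestronglyMeasurable A B,
      ENNReal.toReal_ofReal hq0.le, ENNReal.div_self A B, memLp_one_iff_integrable]
    refine MeasureTheory.Integrable.congr (hint 0) ?_
    filter_upwards [hmem] with v hv
    rw [Real.norm_of_nonneg (hgnn v hv), key_gq v hv]
    simp
  -- Hölder's inequality
  have H := MeasureTheory.integral_mul_le_Lp_mul_Lq_of_nonneg hpq hfae hgae f_mem g_mem
  set I : ℝ := ∫ v in Set.Ioi (1:ℝ), χ v * Real.exp ((ξu + ε) * v) with hI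
  have e1 : ∫ v, f v * g v ∂μ = u := by
    rw [hξ]
    refine integral_congr_ae ?_
    filter_upwards [hmem] with v hv
    exact key_fg v hv
  have e2 : ∫ v, f v ^ p ∂μ = I := by
    rw [hI]
    refine integral_congr_ae ?_
    filter_upwards [hmem] with v hv
    exact key_fp v hv
  have e3 : ∫ v, g v ^ q ∂μ = C := by
    rw [hC]
    refine integral_congr_ae ?_
    filter_upwards [hmem] with v hv
    exact key_gq v hv
  rw [e1, e2, e3] at H
  -- H : u ≤ I ^ (1/p) * C ^ (1/q)
  have hInn : 0 ≤ I := by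
    rw [hI]
    refine setIntegral_nonneg measurableSet_Ioi fun v hv => ?_
    exact mul_nonneg (hnonneg v (le_of_lt hv)) (Real.exp_pos _).le
  have hdq : (1 / q) * p = ε / ξu := by rw [hp, hq]; field_simp
  have h2 : u ^ p ≤ I * C ^ (ε / ξu) := by
    calc u ^ p ≤ (I ^ (1/p) * C ^ (1/q)) ^ p := Real.rpow_le_rpow hu0.le H hp0.le
      _ = I * C ^ (ε / ξu) := by
          rw [Real.mul_rpow (Real.rpow_nonneg hInn _) (Real.rpow_nonneg hCpos.le _),
            ← Real.rpow_mul hInn, ← Real.rpow_mul hCpos.le, one_div,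
            inv_mul_cancel₀ (ne_of_gt hp0), Real.rpow_one, hdq]
  have h3 : C ^ (ε / ξu) ≤ u ^ (ε / (2 * ξu)) := by
    have hCsq : C ^ (ε / ξu) = (C ^ 2) ^ (ε / (2 * ξu)) := by
      rw [← Real.rpow_natCast C 2, ← Real.rpow_mul hCpos.le]
      congr 1
      push_cast
      field_simp
    rw [hCsq]
    exact Real.rpow_le_rpow (by positivity) hu (by positivity)
  have hCe : 0 < C ^ (ε / ξu) := Real.rpow_pos_of_pos hCpos _
  have h4 : u ^ (1 + ε / (2 * ξu)) * C ^ (ε / ξu) ≤ u ^ p := by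
    calc u ^ (1 + ε / (2 * ξu)) * C ^ (ε / ξu)
        ≤ u ^ (1 + ε / (2 * ξu)) * u ^ (ε / (2 * ξu)) :=
          mul_le_mul_of_nonneg_left h3 (Real.rpow_nonneg hu0.le _)
      _ = u ^ p := by
          rw [← Real.rpow_add hu0, hp]
          congr 1
          field_simp
          ring
  have h5 : u ^ (1 + ε / (2 * ξu)) * C ^ (ε / ξu) ≤ I * C ^ (ε / ξu) := le_trans h4 h2
  exact le_of_mul_le_mul_right h5 hCe
end

section
/- Let χ : [1,∞) → [0,1] be a measurable function and suppose that for every sufficiently large u there is ξ(u) > 0 with u = ∫₁^∞ χ(v)·e^{ξ(u)·v} dv. If ξ(u)/log(u) → 0 as u → ∞, then (1/u)·∫₁^∞ (χ(v)·e^{ξ(u)·v}/v) dv → 0 as u → ∞. -/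
open MeasureTheory Set Filter Real

theorem statement17 (χ : ℝ → ℝ) (hmeas : Measurable χ)
    (hχ : ∀ t : ℝ, 1 ≤ t → 0 ≤ χ t ∧ χ t ≤ 1)
    (ξ : ℝ → ℝ)
    (hξ : ∀ᶠ u in Filter.atTop,
      0 < ξ u ∧ u = ∫ v in Set.Ioi (1 : ℝ), χ v * Real.exp (ξ u * v))
    (hξo : Filter.Tendsto (fun u : ℝ => ξ u / Real.log u) Filter.atTop (nhds 0)) :
    Filter.Tendsto
      (fun u : ℝ => (∫ v in Set.Ioi (1 : ℝ), χ v * Real.exp (ξ u * v) / v) / u)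
      Filter.atTop (nhds 0) := by
  rw [NormedAddCommGroup.tendsto_nhds_zero]
  intro ε hε
  set δ : ℝ := min (ε / 3) (1 / 2) with hδdef
  have hδ0 : 0 < δ := lt_min (by linarith) (by norm_num)
  have hδhalf : δ ≤ 1 / 2 := min_le_right _ _
  have hδ1 : δ < 1 := by linarith
  have hδε : 2 * δ < ε := by
    have : δ ≤ ε / 3 := min_le_left _ _
    linarith
  set T : ℝ := 1 / δ with hTdef
  have hT1 : 1 < T := by
    rw [hTdef]
    rw [lt_div_iff₀ hδ0]
    linarith
  have hT0 : 0 < T := lt_trans one_pos hT1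
  have E2 : ∀ᶠ u : ℝ in atTop, |ξ u / Real.log u| < δ ^ 2 := by
    have h := Metric.tendsto_nhds.1 hξo (δ ^ 2) (by positivity)
    filter_upwards [h] with u hu
    rwa [Real.dist_eq, sub_zero] at hu
  have E3 : ∀ᶠ u : ℝ in atTop, (1 : ℝ) < u := eventually_gt_atTop 1
  have E4 : ∀ᶠ u : ℝ in atTop, 1 / δ ^ 2 ≤ u ^ (1 - δ) := by
    exact (tendsto_rpow_atTop (by linarith)).eventually_ge_atTop _
  filter_upwards [hξ, E2, E3, E4] with u h1 h2 hu1 h4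
  obtain ⟨hξpos, hu⟩ := h1
  have hu0 : 0 < u := lt_trans one_pos hu1
  have hlog : 0 < Real.log u := Real.log_pos hu1
  have hξle : ξ u ≤ δ ^ 2 * Real.log u := by
    have h2' : ξ u / Real.log u ≤ δ ^ 2 := le_of_lt (lt_of_abs_lt h2)
    calc ξ u = (ξ u / Real.log u) * Real.log u := by field_simp
    _ ≤ δ ^ 2 * Real.log u := by nlinarith
  set f : ℝ → ℝ := fun v => χ v * Real.exp (ξ u * v) with hfdef
  have hfmeas : Measurable f :=
    hmeas.mul (Real.measurable_exp.comp (measurable_const.mul measurable_id))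
  have hfnn : ∀ v ∈ Set.Ioi (1 : ℝ), 0 ≤ f v := fun v hv =>
    mul_nonneg (hχ v (le_of_lt hv)).1 (Real.exp_pos _).le
  have hfint : IntegrableOn f (Set.Ioi 1) := by
    by_contra hc
    rw [MeasureTheory.integral_undef hc] at hu
    linarith
  set g : ℝ → ℝ := fun v => χ v * Real.exp (ξ u * v) / v with hgdef
  have hgmeas : Measurable g := hfmeas.div measurable_id
  have hgf : ∀ v ∈ Set.Ioi (1 : ℝ), 0 ≤ g v ∧ g v ≤ f v := by
    intro v hv
    have hv1 : (1 : ℝ) < v := hv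
    have hv0 : 0 < v := lt_trans one_pos hv1
    constructor
    · exact div_nonneg (hfnn v hv) hv0.le
    · exact div_le_self (hfnn v hv) hv1.le
  have hgint : IntegrableOn g (Set.Ioi 1) := by
    refine hfint.mono' hgmeas.aestronglyMeasurable ?_
    rw [MeasureTheory.ae_restrict_iff' measurableSet_Ioi]
    filter_upwards with v hv
    have := hgf v hv
    rw [Real.norm_eq_abs, abs_of_nonneg this.1]
    exact this.2
  set ET : ℝ := Real.exp (ξ u * T) with hETdef
  have hET0 : 0 < ET := Real.exp_pos _
  -- bound function
  set B : ℝ → ℝ := fun v => (Set.Ioc (1:ℝ) T).indicator (fun _ => ET) v + f v / T with hBdef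
  have hindint : IntegrableOn (fun v => (Set.Ioc (1:ℝ) T).indicator (fun _ => ET) v) (Set.Ioi 1) := by
    have hc : IntegrableOn (fun _ : ℝ => ET) (Set.Ioc (1:ℝ) T) := by
      refine MeasureTheory.integrableOn_const ?_
      rw [Real.volume_Ioc]
      exact ENNReal.ofReal_ne_top
    exact (hc.integrable_indicator measurableSet_Ioc).integrableOn
  have hBint : IntegrableOn B (Set.Ioi 1) := by
    apply MeasureTheory.Integrable.add hindint
    exact hfint.div_const T
  have hgB : ∀ v ∈ Set.Ioi (1 : ℝ), g v ≤ B v := by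
    intro v hv
    have hv1 : (1 : ℝ) < v := hv
    have hv0 : 0 < v := lt_trans one_pos hv1
    rcases le_or_gt v T with hvT | hvT
    · have hmem : v ∈ Set.Ioc (1:ℝ) T := ⟨hv1, hvT⟩
      have : g v ≤ ET := by
        have h1 : χ v ≤ 1 := (hχ v hv1.le).2
        have h2 : Real.exp (ξ u * v) ≤ ET := by
          apply Real.exp_le_exp.2
          exact mul_le_mul_of_nonneg_left hvT hξpos.le
        have h3 : g v ≤ f v := (hgf v hv).2
        have : f v ≤ ET := by
          calc f v ≤ 1 * Real.exp (ξ u * v) :=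
                mul_le_mul_of_nonneg_right h1 (Real.exp_pos _).le
          _ = Real.exp (ξ u * v) := one_mul _
          _ ≤ ET := h2
        linarith
      have hB : B v = ET + f v / T := by
        rw [hBdef]; simp [Set.indicator_of_mem hmem]
      rw [hB]
      have : 0 ≤ f v / T := div_nonneg (hfnn v hv) hT0.le
      linarith
    · have hnmem : v ∉ Set.Ioc (1:ℝ) T := fun h => absurd h.2 (not_le.2 hvT)
      have hB : B v = f v / T := by
        rw [hBdef]; simp [Set.indicator_of_notMem hnmem]
      rw [hB, hgdef]
      exact div_le_div_of_nonneg_left (hfnn v hv) hT0 hvT.le -- g v = f v / v ≤ f v / T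
  have key : (∫ v in Set.Ioi (1:ℝ), g v) ≤ T * ET + u / T := by
    have step1 : (∫ v in Set.Ioi (1:ℝ), g v) ≤ ∫ v in Set.Ioi (1:ℝ), B v :=
      MeasureTheory.setIntegral_mono_on hgint hBint measurableSet_Ioi hgB
    have step2 : (∫ v in Set.Ioi (1:ℝ), B v) =
        (∫ v in Set.Ioi (1:ℝ), (Set.Ioc (1:ℝ) T).indicator (fun _ => ET) v)
        + ∫ v in Set.Ioi (1:ℝ), f v / T := by
      rw [hBdef]
      exact MeasureTheory.integral_add hindint (hfint.div_const T)
    have step3 : (∫ v in Set.Ioi (1:ℝ), (Set.Ioc (1:ℝ) T).indicator (fun _ => ET) v) ≤ T * ET := by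
      rw [MeasureTheory.setIntegral_indicator measurableSet_Ioc]
      have : Set.Ioi (1:ℝ) ∩ Set.Ioc 1 T = Set.Ioc 1 T := by
        ext x; simp only [Set.mem_inter_iff, Set.mem_Ioi, Set.mem_Ioc]
        tauto
      rw [this]
      rw [MeasureTheory.setIntegral_const]
      rw [MeasureTheory.measureReal_def, Real.volume_Ioc]
      have hTle : ENNReal.toReal (ENNReal.ofReal (T - 1)) ≤ T := by
        rw [ENNReal.toReal_ofReal (by linarith)]
        linarith
      rw [smul_eq_mul]
      exact mul_le_mul_of_nonneg_right hTle hET0.le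
    have step4 : (∫ v in Set.Ioi (1:ℝ), f v / T) = u / T := by
      rw [MeasureTheory.integral_div, ← hu]
    linarith
  -- final estimate
  have hgint_nn : 0 ≤ ∫ v in Set.Ioi (1:ℝ), g v := by
    apply MeasureTheory.setIntegral_nonneg measurableSet_Ioi
    intro v hv; exact (hgf v hv).1
  have hETle : ET ≤ u ^ δ := by
    rw [hETdef, Real.rpow_def_of_pos hu0]
    apply Real.exp_le_exp.2
    calc ξ u * T ≤ (δ ^ 2 * Real.log u) * T :=
          mul_le_mul_of_nonneg_right hξle hT0.le
    _ = Real.log u * δ := by rw [hTdef]; field_simp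
  have hrpow : u ^ δ ≤ δ ^ 2 * u := by
    have h5 : u ^ δ * (1 / δ ^ 2) ≤ u ^ δ * u ^ (1 - δ) := by
      apply mul_le_mul_of_nonneg_left h4 (Real.rpow_nonneg hu0.le _)
    have h6 : u ^ δ * u ^ (1 - δ) = u := by
      rw [← Real.rpow_add hu0]; norm_num
    rw [h6] at h5
    have hδ2 : (0:ℝ) < δ ^ 2 := by positivity
    rw [mul_one_div, div_le_iff₀ hδ2] at h5
    linarith
  have hb1 : T * ET ≤ δ * u := by
    calc T * ET ≤ T * (δ ^ 2 * u) :=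
          mul_le_mul_of_nonneg_left (le_trans hETle hrpow) hT0.le
    _ = δ * u := by rw [hTdef]; field_simp
  have hfinal : (∫ v in Set.Ioi (1:ℝ), g v) / u ≤ 2 * δ := by
    rw [div_le_iff₀ hu0]
    have : u / T = δ * u := by rw [hTdef]; field_simp
    calc (∫ v in Set.Ioi (1:ℝ), g v) ≤ T * ET + u / T := key
      _ ≤ δ * u + δ * u := by rw [this]; linarith
      _ = 2 * δ * u := by ring
  rw [Real.norm_eq_abs, abs_of_nonneg (div_nonneg hgint_nn hu0.le)]
  calc (∫ v in Set.Ioi (1:ℝ), g v) / u ≤ 2 * δ := hfinal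
    _ < ε := hδε
end

section
/- Let h : (0,∞) → (0,∞) be nondecreasing, continuously differentiable with h'(t) > 0 for all t, h(t) → ∞ as t → ∞, and t·h'(t)/h(t) → 0 as t → ∞. Define g(t) = h(t)/(t·h'(t)) and, for u > e, v(u) = min(log(u), min_{log(u) ≤ t ≤ (log u)²} g(t)). Then v(u) → ∞ as u → ∞, and h(v(u)·log(u))/h(log(u)) → 1 as u → ∞. -/
open Filter Set Real

theorem statement19 (h h' : ℝ → ℝ)
    (hpos : ∀ t : ℝ, 0 < t → 0 < h t)
    (hmono : MonotoneOn h (Set.Ioi 0))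
    (hderiv : ∀ t : ℝ, 0 < t → HasDerivAt h (h' t) t)
    (h'cont : ContinuousOn h' (Set.Ioi 0))
    (h'pos : ∀ t : ℝ, 0 < t → 0 < h' t)
    (htop : Filter.Tendsto h Filter.atTop Filter.atTop)
    (hsmall : Filter.Tendsto (fun t : ℝ => t * h' t / h t) Filter.atTop (nhds 0)) :
    Filter.Tendsto
      (fun u : ℝ => min (Real.log u)
        (sInf ((fun t : ℝ => h t / (t * h' t)) ''
          Set.Icc (Real.log u) ((Real.log u) ^ 2))))
      Filter.atTop Filter.atTop ∧
    Filter.Tendsto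
      (fun u : ℝ =>
        h ((min (Real.log u)
            (sInf ((fun t : ℝ => h t / (t * h' t)) ''
              Set.Icc (Real.log u) ((Real.log u) ^ 2)))) * Real.log u) /
          h (Real.log u))
      Filter.atTop (nhds 1) := by
  set g : ℝ → ℝ := fun t : ℝ => h t / (t * h' t) with hg_def
  have hgpos : ∀ t : ℝ, 0 < t → 0 < g t := fun t ht =>
    div_pos (hpos t ht) (mul_pos ht (h'pos t ht))
  -- g → ∞
  have hgtop : Tendsto g atTop atTop := by
    have h1 : Tendsto (fun t : ℝ => t * h' t / h t) atTop (nhdsWithin 0 (Set.Ioi 0)) := by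
      refine tendsto_nhdsWithin_of_tendsto_nhds_of_eventually_within _ hsmall ?_
      filter_upwards [eventually_gt_atTop (0:ℝ)] with t ht
      exact div_pos (mul_pos ht (h'pos t ht)) (hpos t ht)
    refine h1.inv_tendsto_nhdsGT_zero.congr' ?_
    filter_upwards [eventually_gt_atTop (0:ℝ)] with t ht
    simp [hg_def, Pi.inv_apply, inv_div]
  set V : ℝ → ℝ := fun u : ℝ =>
    min (Real.log u) (sInf (g '' Set.Icc (Real.log u) ((Real.log u) ^ 2))) with hV_def
  -- part 1
  have hVtop : Tendsto V atTop atTop := by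
    rw [tendsto_atTop]
    intro b
    obtain ⟨T, hT⟩ := eventually_atTop.mp (hgtop.eventually_ge_atTop b)
    filter_upwards [Real.tendsto_log_atTop.eventually_ge_atTop b,
      Real.tendsto_log_atTop.eventually_ge_atTop (max T 1)] with u hu1 hu2
    refine le_min hu1 ?_
    have ha1 : (1:ℝ) ≤ Real.log u := le_trans (le_max_right T 1) hu2
    have hsq : Real.log u ≤ (Real.log u) ^ 2 := by nlinarith
    refine le_csInf ⟨g (Real.log u), mem_image_of_mem _ ⟨le_refl _, hsq⟩⟩ ?_
    rintro x ⟨t, ht, rfl⟩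
    exact hT t (le_trans (le_trans (le_max_left T 1) hu2) ht.1)
  constructor
  · exact hVtop
  -- part 2
  have hkey : ∀ᶠ u in atTop,
      1 ≤ h (V u * Real.log u) / h (Real.log u) ∧
      h (V u * Real.log u) / h (Real.log u) ≤ Real.exp (Real.log (V u) / V u) := by
    filter_upwards [hVtop.eventually_ge_atTop 2,
      Real.tendsto_log_atTop.eventually_ge_atTop 1] with u hv2 ha1
    set a : ℝ := Real.log u with ha_def
    set v : ℝ := V u with hv_def
    have hapos : 0 < a := lt_of_lt_of_le one_pos ha1
    have hvpos : (0:ℝ) < v := lt_of_lt_of_le two_pos hv2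
    have hv1 : (1:ℝ) ≤ v := le_trans one_le_two hv2
    have hva : v ≤ a := min_le_left _ _
    have hsq : a ≤ a ^ 2 := by nlinarith
    have hbdd : BddBelow (g '' Set.Icc a (a ^ 2)) := by
      refine ⟨0, ?_⟩
      rintro x ⟨t, ht, rfl⟩
      exact le_of_lt (hgpos t (lt_of_lt_of_le hapos ht.1))
    have hvg : ∀ t ∈ Set.Icc a (a ^ 2), v ≤ g t := fun t ht =>
      le_trans (min_le_right _ _) (csInf_le hbdd (mem_image_of_mem _ ht))
    set b : ℝ := v * a with hb_def
    have hab : a ≤ b := le_mul_of_one_le_left hapos.le hv1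
    have hba2 : b ≤ a ^ 2 := by nlinarith
    have hbpos : 0 < b := lt_of_lt_of_le hapos hab
    -- the auxiliary function F
    set F : ℝ → ℝ := fun t => Real.log (h t) - Real.log t / v with hF_def
    have hFderiv : ∀ t : ℝ, 0 < t → HasDerivAt F (h' t / h t - t⁻¹ / v) t := by
      intro t ht
      exact (((hderiv t ht).log (hpos t ht).ne').sub
        ((Real.hasDerivAt_log ht.ne').div_const v))
    have hanti : AntitoneOn F (Set.Icc a b) := by
      refine antitoneOn_of_deriv_nonpos (convex_Icc a b) ?_ ?_ ?_
      · intro t ht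
        exact ((hFderiv t (lt_of_lt_of_le hapos ht.1)).differentiableAt.continuousAt).continuousWithinAt
      · intro t ht
        rw [interior_Icc] at ht
        exact ((hFderiv t (lt_of_lt_of_le hapos ht.1.le)).differentiableAt).differentiableWithinAt
      · intro t ht
        rw [interior_Icc] at ht
        have htpos : 0 < t := lt_of_lt_of_le hapos ht.1.le
        rw [(hFderiv t htpos).deriv]
        have hgt : v ≤ g t := hvg t ⟨ht.1.le, le_trans ht.2.le hba2⟩
        have h2 : v * (t * h' t) ≤ h t :=
          (le_div_iff₀ (mul_pos htpos (h'pos t htpos))).mp hgt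
        have h3 : h' t / h t ≤ t⁻¹ / v := by
          rw [div_le_div_iff₀ (hpos t htpos) hvpos]
          have : t⁻¹ * t = 1 := inv_mul_cancel₀ htpos.ne'
          nlinarith [hpos t htpos, h'pos t htpos]
        linarith
    have hFba : F b ≤ F a := hanti ⟨le_refl a, hab⟩ ⟨hab, le_refl b⟩ hab
    have hlogb : Real.log b = Real.log v + Real.log a := Real.log_mul hvpos.ne' hapos.ne'
    have hsub : Real.log (h b) - Real.log (h a) ≤ Real.log v / v := by
      have h5 : Real.log (h b) - Real.log b / v ≤ Real.log (h a) - Real.log a / v := hFba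
      rw [hlogb, add_div] at h5
      linarith
    constructor
    · rw [le_div_iff₀ (hpos a hapos), one_mul]
      exact hmono (mem_Ioi.mpr hapos) (mem_Ioi.mpr hbpos) hab
    · have : h b / h a = Real.exp (Real.log (h b) - Real.log (h a)) := by
        rw [Real.exp_sub, Real.exp_log (hpos b hbpos), Real.exp_log (hpos a hapos)]
      rw [this]
      exact Real.exp_le_exp.mpr hsub
  have hupper : Tendsto (fun u => Real.exp (Real.log (V u) / V u)) atTop (nhds 1) := by
    have h1 : Tendsto (fun x : ℝ => Real.log x / x) atTop (nhds 0) :=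
      Real.isLittleO_log_id_atTop.tendsto_div_nhds_zero
    have h2 : Tendsto (fun u => Real.log (V u) / V u) atTop (nhds 0) := h1.comp hVtop
    have := (Real.continuous_exp.tendsto 0).comp h2
    simpa [Function.comp_def] using this
  refine tendsto_of_tendsto_of_tendsto_of_le_of_le' tendsto_const_nhds hupper ?_ ?_
  · filter_upwards [hkey] with u hu using hu.1
  · filter_upwards [hkey] with u hu using hu.2
end
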